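/- arXiv:1903.06721 — 11 statements merged into one kernel-verified Lean document; each statement's English description precedes it below -/
import Mathlib

section
/- Let d ≥ 1 and let ψ : Fin (d^2) → EuclideanSpace ℂ (Fin d) be a SIC, with Gram matrix G. Then the matrix Q = ((d+1)/(2d)) • (G ∘ G), where G ∘ G is the entrywise (Hadamard) product of G with itself, is Hermitian, satisfies Q * Q = Q, and has rank d(d+1)/2. -/
open Finset ComplexConjugate

/-- trace of an idempotent complex matrix equals its rank -/
lemma aux_rank_eq_trace {n : ℕ} (A : Matrix (Fin n) (Fin n) ℂ) (h : A * A = A) :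
    (A.rank : ℂ) = A.trace := by
  have hf : A.mulVecLin ∘ₗ A.mulVecLin = A.mulVecLin := by
    rw [← Matrix.mulVecLin_mul, h]
  have hproj : LinearMap.IsProj (LinearMap.range A.mulVecLin) A.mulVecLin := by
    constructor
    · intro x; exact LinearMap.mem_range_self _ x
    · rintro x ⟨y, rfl⟩
      exact congrFun (congrArg DFunLike.coe hf) y
  have ht := hproj.trace
  rw [Matrix.rank, ← ht, LinearMap.trace_eq_matrix_trace ℂ (Pi.basisFun ℂ (Fin n)),
    LinearMap.toMatrix_eq_toMatrix', ← Matrix.toLin'_apply', LinearMap.toMatrix'_toLin']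

lemma aux_sum_swap3 {α β : Type*} [Fintype α] [Fintype β] (t : α → β → β → ℂ) :
    ∑ l : α, ∑ x : β, ∑ y : β, t l x y = ∑ x : β, ∑ y : β, ∑ l : α, t l x y := by
  calc ∑ l : α, ∑ x : β, ∑ y : β, t l x y
      = ∑ x : β, ∑ l : α, ∑ y : β, t l x y := Finset.sum_comm
    _ = ∑ x : β, ∑ y : β, ∑ l : α, t l x y :=
        Finset.sum_congr rfl fun x _ => Finset.sum_comm

lemma aux_sum_swap4 {α β : Type*} [Fintype α] [Fintype β] (t : α → α → β → β → ℂ) :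
    ∑ j : α, ∑ l : α, ∑ x : β, ∑ y : β, t j l x y
      = ∑ x : β, ∑ y : β, ∑ j : α, ∑ l : α, t j l x y := by
  calc ∑ j : α, ∑ l : α, ∑ x : β, ∑ y : β, t j l x y
      = ∑ j : α, ∑ x : β, ∑ l : α, ∑ y : β, t j l x y :=
        Finset.sum_congr rfl fun j _ => Finset.sum_comm
    _ = ∑ x : β, ∑ j : α, ∑ l : α, ∑ y : β, t j l x y := Finset.sum_comm
    _ = ∑ x : β, ∑ j : α, ∑ y : β, ∑ l : α, t j l x y :=
        Finset.sum_congr rfl fun x _ => Finset.sum_congr rfl fun j _ => Finset.sum_comm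
    _ = ∑ x : β, ∑ y : β, ∑ j : α, ∑ l : α, t j l x y :=
        Finset.sum_congr rfl fun x _ => Finset.sum_comm

/-- Let `d ≥ 1` and let `ψ : Fin (d^2) → EuclideanSpace ℂ (Fin d)` be a SIC
with Gram matrix `G`.  Then `Q = ((d+1)/(2d)) • (G ∘ G)` (Hadamard square) is Hermitian,
idempotent, and has rank `d(d+1)/2`. -/
theorem stmt_0 (d : ℕ) (hd : 1 ≤ d)
    (ψ : Fin (d ^ 2) → EuclideanSpace ℂ (Fin d))
    (hunit : ∀ j, ‖ψ j‖ = 1)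
    (hsic : ∀ j k, j ≠ k →
      ‖(inner ℂ (ψ j) (ψ k) : ℂ)‖ ^ 2 = 1 / (d + 1))
    (G : Matrix (Fin (d ^ 2)) (Fin (d ^ 2)) ℂ)
    (hG : ∀ j k, G j k = (inner ℂ (ψ j) (ψ k) : ℂ))
    (Q : Matrix (Fin (d ^ 2)) (Fin (d ^ 2)) ℂ)
    (hQ : Q = (((d : ℂ) + 1) / (2 * d)) • Matrix.hadamard G G) :
    Q.IsHermitian ∧ Q * Q = Q ∧ Q.rank = d * (d + 1) / 2 := by
  have hd0 : (d : ℂ) ≠ 0 := Nat.cast_ne_zero.mpr (by omega)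
  have hd1 : (d : ℂ) + 1 ≠ 0 := by
    have : ((d + 1 : ℕ) : ℂ) ≠ 0 := Nat.cast_ne_zero.mpr (by omega)
    push_cast at this; exact this
  -- abbreviations
  set Φ : Fin (d ^ 2) → Fin d × Fin d → ℂ := fun j x => ψ j x.1 * ψ j x.2 with hΦdef
  set ip : Fin (d ^ 2) → Fin (d ^ 2) → ℂ :=
    fun j k => (inner ℂ (ψ j) (ψ k) : ℂ) ^ 2 with hipdef
  set S : Fin d × Fin d → Fin d × Fin d → ℂ :=
    fun x y => ∑ j, Φ j x * conj (Φ j y) with hSdef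
  set P : Fin d × Fin d → Fin d × Fin d → ℂ :=
    fun x y => (if x = y then 1 else 0) + (if Prod.swap x = y then 1 else 0) with hPdef
  set μ : ℂ := (d : ℂ) / ((d : ℂ) + 1) with hμdef
  -- basic facts
  have hnorm : ∀ j, (inner ℂ (ψ j) (ψ j) : ℂ) = 1 := by
    intro j; rw [inner_self_eq_norm_sq_to_K, hunit]; simp
  have hnsq : ∀ j k, j ≠ k → Complex.normSq (inner ℂ (ψ j) (ψ k) : ℂ) = 1 / (d + 1) := by
    intro j k h; rw [← Complex.sq_norm, hsic j k h]
  have hip : ∀ j k, ip j k = ∑ x : Fin d × Fin d, conj (Φ j x) * Φ k x := by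
    intro j k
    rw [hipdef]
    simp only [PiLp.inner_apply, RCLike.inner_apply, sq]
    rw [Fintype.sum_mul_sum, Fintype.sum_prod_type]
    refine Finset.sum_congr rfl fun a _ => Finset.sum_congr rfl fun b _ => ?_
    simp only [hΦdef, map_mul]; ring
  have hfact : ∀ j l, (∑ x : Fin d × Fin d, Φ j x * conj (Φ l x)) = conj (ip j l) := by
    intro j l
    rw [hip, map_sum]
    refine Finset.sum_congr rfl fun x _ => ?_
    simp only [map_mul, Complex.conj_conj]
  have hΦswap : ∀ j (x : Fin d × Fin d), Φ j (Prod.swap x) = Φ j x := by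
    intro j x; simp only [hΦdef, Prod.fst_swap, Prod.snd_swap]; ring
  have hipjj : ∀ j, ip j j = 1 := by intro j; rw [hipdef]; simp only [hnorm j, one_pow]
  -- ### the three Frobenius-type sums
  -- T1
  have hterm : ∀ j l, conj (ip j l) * ip j l
      = if j = l then 1 else ((1 : ℂ) / ((d : ℂ) + 1)) ^ 2 := by
    intro j l
    rw [mul_comm, Complex.mul_conj]
    by_cases h : j = l
    · subst h; simp [hipjj j]
    · rw [if_neg h, hipdef]
      simp only []
      rw [map_pow, hnsq j l h]
      push_cast
      ring
  have hT1 : ∑ j : Fin (d ^ 2), ∑ l : Fin (d ^ 2), conj (ip j l) * ip j l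
      = (d : ℂ) ^ 2 + ((d : ℂ) ^ 2) * ((d : ℂ) ^ 2 - 1) * ((1 : ℂ) / ((d : ℂ) + 1)) ^ 2 := by
    have hrow : ∀ j : Fin (d ^ 2), ∑ l, (if j = l then (1 : ℂ) else ((1 : ℂ) / ((d : ℂ) + 1)) ^ 2)
        = 1 + ((d : ℂ) ^ 2 - 1) * ((1 : ℂ) / ((d : ℂ) + 1)) ^ 2 := by
      intro j
      rw [← Finset.add_sum_erase _ _ (Finset.mem_univ j), if_pos rfl]
      congr 1
      have hc : ∀ l ∈ Finset.univ.erase j,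
          (if j = l then (1 : ℂ) else ((1 : ℂ) / ((d : ℂ) + 1)) ^ 2)
            = ((1 : ℂ) / ((d : ℂ) + 1)) ^ 2 :=
        fun l hl => if_neg (Finset.ne_of_mem_erase hl).symm
      rw [Finset.sum_congr rfl hc, Finset.sum_const,
        Finset.card_erase_of_mem (Finset.mem_univ j), Finset.card_univ,
        Fintype.card_fin, nsmul_eq_mul]
      have : ((d ^ 2 - 1 : ℕ) : ℂ) = (d : ℂ) ^ 2 - 1 := by
        have h1 : 1 ≤ d ^ 2 := Nat.one_le_pow _ _ (by omega)
        push_cast [h1]; ring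
      rw [this]
    calc ∑ j : Fin (d ^ 2), ∑ l : Fin (d ^ 2), conj (ip j l) * ip j l
        = ∑ j : Fin (d ^ 2), ∑ l : Fin (d ^ 2),
            (if j = l then (1 : ℂ) else ((1 : ℂ) / ((d : ℂ) + 1)) ^ 2) :=
          Finset.sum_congr rfl fun j _ => Finset.sum_congr rfl fun l _ => hterm j l
      _ = ∑ _j : Fin (d ^ 2), (1 + ((d : ℂ) ^ 2 - 1) * ((1 : ℂ) / ((d : ℂ) + 1)) ^ 2) :=
          Finset.sum_congr rfl fun j _ => hrow j
      _ = (d : ℂ) ^ 2 + ((d : ℂ) ^ 2) * ((d : ℂ) ^ 2 - 1) * ((1 : ℂ) / ((d : ℂ) + 1)) ^ 2 := by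
          rw [Finset.sum_const, Finset.card_univ, Fintype.card_fin, nsmul_eq_mul]
          push_cast; ring
  have hT1' : ∑ x : Fin d × Fin d, ∑ y : Fin d × Fin d, S x y * conj (S x y)
      = (d : ℂ) ^ 2 + ((d : ℂ) ^ 2) * ((d : ℂ) ^ 2 - 1) * ((1 : ℂ) / ((d : ℂ) + 1)) ^ 2 := by
    rw [← hT1]
    calc ∑ x : Fin d × Fin d, ∑ y : Fin d × Fin d, S x y * conj (S x y)
        = ∑ x : Fin d × Fin d, ∑ y : Fin d × Fin d, ∑ j : Fin (d ^ 2), ∑ l : Fin (d ^ 2),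
            (Φ j x * conj (Φ j y)) * (conj (Φ l x) * Φ l y) := by
          refine Finset.sum_congr rfl fun x _ => Finset.sum_congr rfl fun y _ => ?_
          rw [hSdef]
          simp only [map_sum, map_mul, Complex.conj_conj]
          rw [Fintype.sum_mul_sum]
      _ = ∑ j : Fin (d ^ 2), ∑ l : Fin (d ^ 2), ∑ x : Fin d × Fin d, ∑ y : Fin d × Fin d,
            (Φ j x * conj (Φ j y)) * (conj (Φ l x) * Φ l y) := (aux_sum_swap4 _).symm
      _ = ∑ j : Fin (d ^ 2), ∑ l : Fin (d ^ 2), conj (ip j l) * ip j l := by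
          refine Finset.sum_congr rfl fun j _ => Finset.sum_congr rfl fun l _ => ?_
          calc ∑ x : Fin d × Fin d, ∑ y : Fin d × Fin d,
                (Φ j x * conj (Φ j y)) * (conj (Φ l x) * Φ l y)
              = ∑ x : Fin d × Fin d, (Φ j x * conj (Φ l x)) *
                  ∑ y : Fin d × Fin d, conj (Φ j y) * Φ l y := by
                refine Finset.sum_congr rfl fun x _ => ?_
                rw [Finset.mul_sum]
                exact Finset.sum_congr rfl fun y _ => by ring
            _ = (∑ x : Fin d × Fin d, Φ j x * conj (Φ l x)) *
                  ∑ y : Fin d × Fin d, conj (Φ j y) * Φ l y := by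
                rw [← Finset.sum_mul]
            _ = conj (ip j l) * ip j l := by rw [hfact, ← hip]
  -- diagonal sums of S
  have hSdiag : ∑ x : Fin d × Fin d, S x x = (d : ℂ) ^ 2 := by
    calc ∑ x : Fin d × Fin d, S x x
        = ∑ j : Fin (d ^ 2), ∑ x : Fin d × Fin d, Φ j x * conj (Φ j x) := Finset.sum_comm
      _ = ∑ j : Fin (d ^ 2), conj (ip j j) := Finset.sum_congr rfl fun j _ => hfact j j
      _ = (d : ℂ) ^ 2 := by
          simp only [hipjj, map_one]
          rw [Finset.sum_const, Finset.card_univ, Fintype.card_fin, nsmul_eq_mul]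
          push_cast; ring
  have hSswapdiag : ∑ x : Fin d × Fin d, S x (Prod.swap x) = (d : ℂ) ^ 2 := by
    rw [← hSdiag]
    refine Finset.sum_congr rfl fun x _ => ?_
    rw [hSdef]
    exact Finset.sum_congr rfl fun j _ => by rw [hΦswap]
  -- sums against P
  have hPsum : ∀ (g : Fin d × Fin d → ℂ) (x : Fin d × Fin d),
      ∑ y : Fin d × Fin d, g y * P x y = g x + g (Prod.swap x) := by
    intro g x
    simp only [hPdef, mul_add, mul_ite, mul_one, mul_zero, Finset.sum_add_distrib,
      Finset.sum_ite_eq, Finset.mem_univ, if_true]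
  have hT2a : ∑ x : Fin d × Fin d, ∑ y : Fin d × Fin d, S x y * P x y = 2 * (d : ℂ) ^ 2 := by
    calc ∑ x : Fin d × Fin d, ∑ y : Fin d × Fin d, S x y * P x y
        = ∑ x : Fin d × Fin d, (S x x + S x (Prod.swap x)) :=
          Finset.sum_congr rfl fun x _ => hPsum (S x) x
      _ = 2 * (d : ℂ) ^ 2 := by
          rw [Finset.sum_add_distrib, hSdiag, hSswapdiag]; ring
  have hPconj : ∀ x y, conj (P x y) = P x y := by
    intro x y; simp only [hPdef, map_add, apply_ite conj, map_one, map_zero]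
  have hT2b : ∑ x : Fin d × Fin d, ∑ y : Fin d × Fin d, P x y * conj (S x y)
      = 2 * (d : ℂ) ^ 2 := by
    have : ∑ x : Fin d × Fin d, ∑ y : Fin d × Fin d, P x y * conj (S x y)
        = conj (∑ x : Fin d × Fin d, ∑ y : Fin d × Fin d, S x y * P x y) := by
      rw [map_sum]
      refine Finset.sum_congr rfl fun x _ => ?_
      rw [map_sum]
      refine Finset.sum_congr rfl fun y _ => ?_
      rw [map_mul, hPconj]; ring
    rw [this, hT2a, map_mul, map_pow, Complex.conj_natCast, map_ofNat]
  -- T3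
  have hT3 : ∑ x : Fin d × Fin d, ∑ y : Fin d × Fin d, P x y * P x y
      = 2 * (d : ℂ) ^ 2 + 2 * (d : ℂ) := by
    have hdiagcount : ∑ x : Fin d × Fin d, (if Prod.swap x = x then (1 : ℂ) else 0) = d := by
      rw [Fintype.sum_prod_type]
      have hcond : ∀ a b : Fin d, (if Prod.swap (a, b) = (a, b) then (1 : ℂ) else 0)
          = if b = a then 1 else 0 := by
        intro a b
        by_cases h : b = a
        · subst h; simp
        · rw [if_neg h, if_neg]
          intro hh
          exact h (congrArg Prod.fst hh)
      simp only [hcond, Finset.sum_ite_eq', Finset.mem_univ, if_true]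
      rw [Finset.sum_const, Finset.card_univ, Fintype.card_fin, nsmul_eq_mul, mul_one]
    have hrow : ∀ x : Fin d × Fin d, ∑ y : Fin d × Fin d, P x y * P x y
        = 2 + 2 * (if Prod.swap x = x then (1 : ℂ) else 0) := by
      intro x
      rw [hPsum (P x) x]
      simp only [hPdef]
      by_cases h : Prod.swap x = x
      · simp only [h, if_pos rfl]
        norm_num
      · simp only [if_pos rfl, if_neg h, if_neg (Ne.symm h)]
        norm_num
    rw [Finset.sum_congr rfl fun x _ => hrow x, Finset.sum_add_distrib, Finset.sum_const,
      Finset.card_univ, ← Finset.mul_sum, hdiagcount]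
    simp only [Fintype.card_prod, Fintype.card_fin, nsmul_eq_mul]
    push_cast
    ring
  -- ### the frobenius-norm-zero argument: S = μ • P
  have hE0 : ∑ x : Fin d × Fin d, ∑ y : Fin d × Fin d,
      (S x y - μ * P x y) * conj (S x y - μ * P x y) = 0 := by
    have hμconj : conj μ = μ := by
      rw [hμdef, map_div₀, map_add, map_one, Complex.conj_natCast]
    have expand : ∀ x y, (S x y - μ * P x y) * conj (S x y - μ * P x y)
        = (S x y * conj (S x y) - μ * (S x y * P x y))
          - (μ * (P x y * conj (S x y)) - μ ^ 2 * (P x y * P x y)) := by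
      intro x y
      rw [map_sub, map_mul, hμconj, hPconj]
      ring
    rw [Finset.sum_congr rfl fun x _ => Finset.sum_congr rfl fun y _ => expand x y]
    simp only [Finset.sum_sub_distrib, ← Finset.mul_sum]
    rw [hT1', hT2a, hT2b, hT3, hμdef]
    field_simp
    ring
  have hSP : ∀ x y, S x y = μ * P x y := by
    have hreal : ∑ x : Fin d × Fin d, ∑ y : Fin d × Fin d,
        (Complex.normSq (S x y - μ * P x y) : ℝ) = 0 := by
      have hcast : ((∑ x : Fin d × Fin d, ∑ y : Fin d × Fin d,
          (Complex.normSq (S x y - μ * P x y) : ℝ) : ℝ) : ℂ) = 0 := by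
        push_cast
        rw [← hE0]
        exact Finset.sum_congr rfl fun x _ => Finset.sum_congr rfl fun y _ =>
          (Complex.mul_conj _).symm
      exact_mod_cast hcast
    intro x y
    have h1 := (Finset.sum_eq_zero_iff_of_nonneg
      (fun x _ => Finset.sum_nonneg fun y _ => Complex.normSq_nonneg _)).mp hreal x
      (Finset.mem_univ x)
    have h2 := (Finset.sum_eq_zero_iff_of_nonneg
      (fun y _ => Complex.normSq_nonneg _)).mp h1 y (Finset.mem_univ y)
    exact sub_eq_zero.mp (Complex.normSq_eq_zero.mp h2)
  -- ### the 2-design identity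
  have hdesign : ∀ j k, ∑ l, ip j l * ip l k = (2 * μ) * ip j k := by
    intro j k
    calc ∑ l, ip j l * ip l k
        = ∑ l, ∑ x : Fin d × Fin d, ∑ y : Fin d × Fin d,
            (conj (Φ j x) * Φ l x) * (conj (Φ l y) * Φ k y) := by
          refine Finset.sum_congr rfl fun l _ => ?_
          rw [hip, hip, Fintype.sum_mul_sum]
      _ = ∑ x : Fin d × Fin d, ∑ y : Fin d × Fin d, ∑ l,
            (conj (Φ j x) * Φ l x) * (conj (Φ l y) * Φ k y) := aux_sum_swap3 _
      _ = ∑ x : Fin d × Fin d, ∑ y : Fin d × Fin d, (conj (Φ j x) * Φ k y) * S x y := by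
          refine Finset.sum_congr rfl fun x _ => Finset.sum_congr rfl fun y _ => ?_
          rw [hSdef, Finset.mul_sum]
          exact Finset.sum_congr rfl fun l _ => by ring
      _ = ∑ x : Fin d × Fin d, ∑ y : Fin d × Fin d, (conj (Φ j x) * Φ k y) * (μ * P x y) := by
          refine Finset.sum_congr rfl fun x _ => Finset.sum_congr rfl fun y _ => ?_
          rw [hSP]
      _ = μ * ∑ x : Fin d × Fin d, ∑ y : Fin d × Fin d, (conj (Φ j x) * Φ k y) * P x y := by
          rw [Finset.mul_sum]
          refine Finset.sum_congr rfl fun x _ => ?_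
          rw [Finset.mul_sum]
          exact Finset.sum_congr rfl fun y _ => by ring
      _ = μ * ∑ x : Fin d × Fin d, (conj (Φ j x) * Φ k x + conj (Φ j x) * Φ k (Prod.swap x)) := by
          congr 1
          exact Finset.sum_congr rfl fun x _ => hPsum (fun y => conj (Φ j x) * Φ k y) x
      _ = (2 * μ) * ip j k := by
          rw [Finset.sum_add_distrib]
          have hsw : ∑ x : Fin d × Fin d, conj (Φ j x) * Φ k (Prod.swap x)
              = ∑ x : Fin d × Fin d, conj (Φ j x) * Φ k x :=
            Finset.sum_congr rfl fun x _ => by rw [hΦswap]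
          rw [hsw, ← hip]
          ring
  -- ### Q entries
  have hQent : ∀ j k, Q j k = (((d : ℂ) + 1) / (2 * (d : ℂ))) * ip j k := by
    intro j k
    rw [hQ]
    simp only [Matrix.smul_apply, Matrix.hadamard_apply, hG, smul_eq_mul, hipdef]
    ring
  -- hermitian
  have hherm : Q.IsHermitian := by
    unfold Matrix.IsHermitian
    ext j k
    rw [Matrix.conjTranspose_apply, hQent, hQent, RCLike.star_def]
    rw [map_mul, map_div₀, map_mul, map_add, map_one, Complex.conj_natCast, map_ofNat]
    congr 1
    rw [hipdef]
    simp only [map_pow, inner_conj_symm]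
  -- idempotent
  have hidem : Q * Q = Q := by
    ext j k
    rw [Matrix.mul_apply, hQent]
    calc ∑ l, Q j l * Q l k
        = (((d : ℂ) + 1) / (2 * (d : ℂ))) ^ 2 * ∑ l, ip j l * ip l k := by
          rw [Finset.mul_sum]
          exact Finset.sum_congr rfl fun l _ => by rw [hQent, hQent]; ring
      _ = (((d : ℂ) + 1) / (2 * (d : ℂ))) * ip j k := by
          rw [hdesign, hμdef]
          field_simp
  refine ⟨hherm, hidem, ?_⟩
  -- rank
  have htr : Q.trace = (d : ℂ) * ((d : ℂ) + 1) / 2 := by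
    have hdiag : ∀ j, Q j j = ((d : ℂ) + 1) / (2 * (d : ℂ)) := by
      intro j; rw [hQent, hipjj, mul_one]
    rw [Matrix.trace]
    simp only [Matrix.diag_apply, hdiag]
    rw [Finset.sum_const, Finset.card_univ, Fintype.card_fin, nsmul_eq_mul]
    push_cast
    field_simp
  have hrk := aux_rank_eq_trace Q hidem
  rw [htr] at hrk
  have hcast : ((d * (d + 1) / 2 : ℕ) : ℂ) = (d : ℂ) * ((d : ℂ) + 1) / 2 := by
    rw [Nat.cast_div (Nat.even_mul_succ_self d).two_dvd (by norm_num)]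
    push_cast; ring
  have : ((Q.rank : ℕ) : ℂ) = ((d * (d + 1) / 2 : ℕ) : ℂ) := by rw [hrk, hcast]
  exact_mod_cast this
end

section
/- Let d ≥ 1 and let ψ : Fin (d^2) → EuclideanSpace ℂ (Fin d) be a SIC with Gram matrix G, and set Q = ((d+1)/(2d)) • (G ∘ G). Then H = 2 • Q − 1 (where 1 is the d² × d² identity matrix) is Hermitian, satisfies H * H = 1 (so H is unitary), every entry of H has absolute value 1/d, every diagonal entry of H equals 1/d (in particular the diagonal is real and positive), and the trace of H equals d. -/
open Finset

/-- For a SIC in dimension `d` with Gram matrix `G` and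
`Q = ((d+1)/(2d)) • (G ∘ G)`, the matrix `H = 2 • Q - 1` is Hermitian, satisfies `H * H = 1`,
all its entries have absolute value `1/d`, all its diagonal entries equal `1/d`
(in particular the diagonal is real and positive), and `Tr H = d`. -/
theorem stmt_1 (d : ℕ) (hd : 1 ≤ d)
    (ψ : Fin (d ^ 2) → EuclideanSpace ℂ (Fin d))
    (hunit : ∀ j, ‖ψ j‖ = 1)
    (hsic : ∀ j k, j ≠ k →
      ‖(inner ℂ (ψ j) (ψ k) : ℂ)‖ ^ 2 = 1 / (d + 1))
    (G : Matrix (Fin (d ^ 2)) (Fin (d ^ 2)) ℂ)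
    (hG : ∀ j k, G j k = (inner ℂ (ψ j) (ψ k) : ℂ))
    (Q : Matrix (Fin (d ^ 2)) (Fin (d ^ 2)) ℂ)
    (hQ : Q = (((d : ℂ) + 1) / (2 * d)) • Matrix.hadamard G G)
    (H : Matrix (Fin (d ^ 2)) (Fin (d ^ 2)) ℂ)
    (hH : H = (2 : ℂ) • Q - 1) :
    H.IsHermitian ∧ H * H = 1 ∧
    (∀ p q, ‖H p q‖ = 1 / d) ∧
    (∀ p, H p p = 1 / d) ∧
    H.trace = d := by
  have hD : (d:ℂ) ≠ 0 := Nat.cast_ne_zero.mpr (by omega)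
  have hD1 : (d:ℂ) + 1 ≠ 0 := by
    intro h
    have h' : ((d:ℝ) + 1) = 0 := by exact_mod_cast congrArg Complex.re h
    have : (0:ℝ) ≤ (d:ℝ) := Nat.cast_nonneg d
    linarith
  -- basic facts about G
  have hGsum : ∀ j k, G j k = ∑ a, (starRingEnd ℂ) (ψ j a) * ψ k a := by
    intro j k; rw [hG]; simp [PiLp.inner_apply, RCLike.inner_apply, mul_comm]
  have hGdiag : ∀ j, G j j = 1 := by
    intro j
    rw [hG, inner_self_eq_norm_sq_to_K, hunit]
    norm_num
  have hGconj : ∀ j k, G k j = (starRingEnd ℂ) (G j k) := by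
    intro j k; rw [hG, hG, ← inner_conj_symm]
  have habsG : ∀ j k, j ≠ k → ‖G j k‖ ^ 2 = 1 / ((d:ℝ) + 1) := by
    intro j k hjk; rw [hG]; exact hsic j k hjk
  have hGsq : ∀ j k, j ≠ k → G j k * G k j = 1 / ((d:ℂ) + 1) := by
    intro j k hjk
    rw [hGconj j k, Complex.mul_conj, ← Complex.sq_norm, habsG j k hjk]
    push_cast
    ring
  -- the symmetric-vector machinery
  set u : Fin (d ^ 2) → (Fin d × Fin d) → ℂ := fun j p => ψ j p.1 * ψ j p.2 with hu
  set T : (Fin d × Fin d) → (Fin d × Fin d) → ℂ :=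
    fun p q => ∑ j, u j p * (starRingEnd ℂ) (u j q) with hT
  set P : (Fin d × Fin d) → (Fin d × Fin d) → ℂ :=
    fun p q => ((if q = p then 1 else 0) + (if q = (p.2, p.1) then 1 else 0)) / 2 with hP
  set c : ℂ := 2 * (d:ℂ) / ((d:ℂ) + 1) with hc
  have hcstar : (starRingEnd ℂ) c = c := by
    rw [hc]
    simp [map_div₀, Complex.conj_natCast, Complex.conj_ofNat]
  have husym : ∀ j p, u j (p.2, p.1) = u j p := by
    intro j p; simp [hu, mul_comm]
  have hTsym : ∀ p q, T p (q.2, q.1) = T p q := by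
    intro p q; rw [hT]; simp only [husym]
  have hPstar : ∀ p q, (starRingEnd ℂ) (P p q) = P p q := by
    intro p q; simp only [hP]; split_ifs <;> simp [Complex.conj_ofNat]
  have hPsym : ∀ p q, P p (q.2, q.1) = P p q := by
    intro p q
    simp only [hP]
    have h1 : ((q.2, q.1) = p) ↔ (q = (p.2, p.1)) := by
      simp [Prod.ext_iff, and_comm]
    have h2 : ((q.2, q.1) = (p.2, p.1)) ↔ (q = p) := by
      simp [Prod.ext_iff, and_comm]
    simp only [h1, h2]
    ring
  -- Gram entries of the u-vectors
  have hA : ∀ j l, ∑ p : Fin d × Fin d, u j p * (starRingEnd ℂ) (u l p) = (G l j) ^ 2 := by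
    intro j l
    rw [Fintype.sum_prod_type, sq, hGsum, Finset.sum_mul_sum]
    refine Finset.sum_congr rfl fun a _ => Finset.sum_congr rfl fun b _ => ?_
    simp only [hu, map_mul]
    ring
  have hB : ∀ j l, ∑ p : Fin d × Fin d, (starRingEnd ℂ) (u j p) * u l p = (G j l) ^ 2 := by
    intro j l
    rw [← hA l j]
    exact Finset.sum_congr rfl fun p _ => by ring
  -- sum against P
  have hPsum : ∀ (v : (Fin d × Fin d) → ℂ), (∀ p, v (p.2, p.1) = v p) →
      ∀ p, ∑ q, P p q * v q = v p := by
    intro v hv p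
    have e : ∀ q, P p q * v q
        = ((if q = p then v q else 0) + (if q = (p.2, p.1) then v q else 0)) / 2 := by
      intro q; simp only [hP]; split_ifs <;> ring
    rw [Finset.sum_congr rfl fun q _ => e q, ← Finset.sum_div, Finset.sum_add_distrib,
        Finset.sum_ite_eq', Finset.sum_ite_eq']
    simp only [Finset.mem_univ, if_true, hv p]
    ring
  have hTdiagsum : ∑ p : Fin d × Fin d, T p p = ((d:ℂ))^2 := by
    rw [hT]
    simp only
    rw [Finset.sum_comm]
    have e : ∀ j, ∑ p : Fin d × Fin d, u j p * (starRingEnd ℂ) (u j p) = 1 := by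
      intro j; rw [hA j j, hGdiag]; norm_num
    rw [Finset.sum_congr rfl fun j _ => e j]
    simp [sq]
  -- the four trace sums
  have hTP : ∑ p : Fin d × Fin d, ∑ q, T p q * P p q = ((d:ℂ))^2 := by
    rw [← hTdiagsum]
    refine Finset.sum_congr rfl fun p _ => ?_
    rw [Finset.sum_congr rfl fun q _ => mul_comm (T p q) (P p q)]
    exact hPsum (fun q => T p q) (fun q => hTsym p q) p
  have hPT : ∑ p : Fin d × Fin d, ∑ q, P p q * (starRingEnd ℂ) (T p q) = ((d:ℂ))^2 := by
    have e : ∀ p, ∑ q, P p q * (starRingEnd ℂ) (T p q) = (starRingEnd ℂ) (T p p) := by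
      intro p
      exact hPsum (fun q => (starRingEnd ℂ) (T p q))
        (fun q => congrArg (starRingEnd ℂ) (hTsym p q)) p
    rw [Finset.sum_congr rfl fun p _ => e p, ← map_sum, hTdiagsum]
    simp
  have hPP : ∑ p : Fin d × Fin d, ∑ q, P p q * P p q = (((d:ℂ))^2 + d) / 2 := by
    have e : ∀ p, ∑ q, P p q * P p q = P p p :=
      fun p => hPsum (fun q => P p q) (fun q => hPsym p q) p
    rw [Finset.sum_congr rfl fun p _ => e p]
    have e2 : ∀ p : Fin d × Fin d, P p p = (1 + (if p.1 = p.2 then (1:ℂ) else 0)) / 2 := by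
      intro p
      rw [hP]
      simp only [if_pos rfl]
      congr 2
      obtain ⟨a, b⟩ := p
      by_cases h : a = b
      · subst h
        simp
      · rw [if_neg h, if_neg]
        intro hh
        exact h (congrArg Prod.fst hh)
    rw [Finset.sum_congr rfl fun p _ => e2 p, ← Finset.sum_div, Finset.sum_add_distrib]
    simp only [Fintype.sum_prod_type, Finset.sum_ite_eq, Finset.mem_univ, if_true,
      Finset.sum_const, Finset.card_univ, Fintype.card_prod, Fintype.card_fin, nsmul_eq_mul,
      mul_one]
    push_cast
    ring
  have hTT : ∑ p : Fin d × Fin d, ∑ q, T p q * (starRingEnd ℂ) (T p q)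
      = ∑ j, ∑ l, (G l j)^2 * (G j l)^2 := by
    have e1 : ∀ p q, T p q * (starRingEnd ℂ) (T p q)
        = ∑ j, ∑ l, (u j p * (starRingEnd ℂ) (u l p)) * ((starRingEnd ℂ) (u j q) * u l q) := by
      intro p q
      rw [hT]
      simp only [map_sum, map_mul, RingHomCompTriple.comp_apply, RingHom.id_apply,
        starRingEnd_self_apply]
      rw [Finset.sum_mul_sum]
      exact Finset.sum_congr rfl fun j _ => Finset.sum_congr rfl fun l _ => by ring
    rw [Finset.sum_congr rfl fun p _ => Finset.sum_congr rfl fun q _ => e1 p q]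
    rw [Finset.sum_congr rfl fun p _ => Finset.sum_comm, Finset.sum_comm]
    refine Finset.sum_congr rfl fun j _ => ?_
    rw [Finset.sum_congr rfl fun p _ => Finset.sum_comm, Finset.sum_comm]
    refine Finset.sum_congr rfl fun l _ => ?_
    rw [← hA j l, ← hB j l, Finset.sum_mul_sum]
  have hTTval : ∑ j, ∑ l, (G l j)^2 * (G j l)^2
      = ((d:ℂ)^2)^2 * (1/((d:ℂ)+1))^2 + (d:ℂ)^2 * (1 - (1/((d:ℂ)+1))^2) := by
    have e : ∀ j l, (G l j)^2 * (G j l)^2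
        = (1/((d:ℂ)+1))^2 + (if l = j then 1 - (1/((d:ℂ)+1))^2 else 0) := by
      intro j l
      by_cases h : l = j
      · subst h; rw [if_pos rfl, hGdiag]; ring
      · rw [if_neg h, add_zero, show (G l j)^2 * (G j l)^2 = (G j l * G l j)^2 by ring,
          hGsq j l (fun hh => h hh.symm)]
    rw [Finset.sum_congr rfl fun j _ => Finset.sum_congr rfl fun l _ => e j l]
    simp only [Finset.sum_add_distrib, Finset.sum_ite_eq', Finset.mem_univ, if_true,
      Finset.sum_const, Finset.card_univ, Fintype.card_fin, nsmul_eq_mul]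
    push_cast
    ring
  -- the big vanishing sum
  have hzero : ∀ p q, T p q = c * P p q := by
    have S0 : ∑ p : Fin d × Fin d, ∑ q,
        (T p q - c * P p q) * (starRingEnd ℂ) (T p q - c * P p q) = 0 := by
      have e : ∀ p q, (T p q - c * P p q) * (starRingEnd ℂ) (T p q - c * P p q)
          = T p q * (starRingEnd ℂ) (T p q) - c * (T p q * P p q)
            - c * (P p q * (starRingEnd ℂ) (T p q)) + c^2 * (P p q * P p q) := by
        intro p q
        rw [map_sub, map_mul, hcstar, hPstar]
        ring
      rw [Finset.sum_congr rfl fun p _ => Finset.sum_congr rfl fun q _ => e p q]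
      simp only [Finset.sum_add_distrib, Finset.sum_sub_distrib, ← Finset.mul_sum]
      rw [hTT, hTTval, hTP, hPT, hPP, hc]
      field_simp
      ring
    have Sreal : ∑ p : Fin d × Fin d, ∑ q, Complex.normSq (T p q - c * P p q) = 0 := by
      have e : ∀ p q : Fin d × Fin d, (T p q - c * P p q) * (starRingEnd ℂ) (T p q - c * P p q)
          = ((Complex.normSq (T p q - c * P p q) : ℝ) : ℂ) := fun p q => Complex.mul_conj _
      rw [Finset.sum_congr rfl fun p _ => Finset.sum_congr rfl fun q _ => e p q] at S0
      exact_mod_cast S0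
    intro p q
    have h1 : ∀ p ∈ (Finset.univ : Finset (Fin d × Fin d)),
        ∑ q, Complex.normSq (T p q - c * P p q) = 0 :=
      (Finset.sum_eq_zero_iff_of_nonneg fun p _ =>
        Finset.sum_nonneg fun q _ => Complex.normSq_nonneg _).mp Sreal
    have h2 := (Finset.sum_eq_zero_iff_of_nonneg
      fun q _ => Complex.normSq_nonneg (T p q - c * P p q)).mp (h1 p (Finset.mem_univ p)) q
      (Finset.mem_univ q)
    have := Complex.normSq_eq_zero.mp h2
    linear_combination this
  -- the key 2-design identity
  have key : ∀ j k, ∑ l, (G j l)^2 * (G l k)^2 = c * (G j k)^2 := by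
    intro j k
    calc ∑ l, (G j l)^2 * (G l k)^2
        = ∑ l, ∑ p : Fin d × Fin d, ∑ q : Fin d × Fin d,
            ((starRingEnd ℂ) (u j p) * u k q) * (u l p * (starRingEnd ℂ) (u l q)) := by
          refine Finset.sum_congr rfl fun l _ => ?_
          rw [← hB j l, ← hB l k, Finset.sum_mul_sum]
          exact Finset.sum_congr rfl fun p _ => Finset.sum_congr rfl fun q _ => by ring
      _ = ∑ p : Fin d × Fin d, ∑ q : Fin d × Fin d,
            ((starRingEnd ℂ) (u j p) * u k q) * T p q := by
          rw [Finset.sum_comm]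
          refine Finset.sum_congr rfl fun p _ => ?_
          rw [Finset.sum_comm]
          refine Finset.sum_congr rfl fun q _ => ?_
          rw [hT, ← Finset.mul_sum]
      _ = c * ∑ p : Fin d × Fin d, (starRingEnd ℂ) (u j p) * u k p := by
          rw [Finset.mul_sum]
          refine Finset.sum_congr rfl fun p _ => ?_
          have e : ∀ q, ((starRingEnd ℂ) (u j p) * u k q) * T p q
              = (c * (starRingEnd ℂ) (u j p)) * (P p q * u k q) := by
            intro q; rw [hzero p q]; ring
          rw [Finset.sum_congr rfl fun q _ => e q, ← Finset.mul_sum,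
            hPsum (fun q => u k q) (husym k) p]
          ring
      _ = c * (G j k)^2 := by rw [hB]
  -- Q is idempotent
  have hQentry : ∀ j k, Q j k = (((d:ℂ) + 1) / (2 * d)) * (G j k)^2 := by
    intro j k
    rw [hQ]
    simp [Matrix.hadamard_apply, sq]
  have hQQ : Q * Q = Q := by
    ext j k
    rw [Matrix.mul_apply]
    calc ∑ l, Q j l * Q l k
        = (((d:ℂ) + 1) / (2 * d))^2 * ∑ l, (G j l)^2 * (G l k)^2 := by
          rw [Finset.mul_sum]
          exact Finset.sum_congr rfl fun l _ => by rw [hQentry, hQentry]; ring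
      _ = Q j k := by
          rw [key, hQentry, hc]
          field_simp
  -- entries of H
  have hHentry : ∀ p q, H p q
      = (((d:ℂ) + 1) / d) * (G p q)^2 - (if p = q then 1 else 0) := by
    intro p q
    rw [hH]
    simp only [Matrix.sub_apply, Matrix.smul_apply, Matrix.one_apply, hQentry, smul_eq_mul]
    congr 1
    field_simp
  have hHdiag : ∀ p, H p p = 1 / (d:ℂ) := by
    intro p
    rw [hHentry, if_pos rfl, hGdiag]
    field_simp
    ring
  refine ⟨?_, ?_, ?_, hHdiag, ?_⟩
  · -- Hermitian
    ext p q
    rw [Matrix.conjTranspose_apply, hHentry, hHentry]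
    have : (starRingEnd ℂ) (G q p) = G p q := by rw [hGconj p q]; exact (Complex.conj_conj _)
    simp only [map_sub, map_mul, map_pow, map_div₀, map_add, map_one, Complex.conj_natCast,
      this, Complex.star_def]
    congr 1
    split_ifs with h1 h2 h2
    · simp
    · exact absurd h1.symm h2
    · exact absurd h2.symm h1
    · simp
  · -- H * H = 1
    rw [hH]
    simp only [sub_mul, mul_sub, Matrix.smul_mul, Matrix.mul_smul, hQQ, one_mul, mul_one,
      smul_smul]
    rw [show ((2:ℂ) * 2) = 2 + 2 by norm_num, add_smul]
    abel
  · -- entries abs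
    intro p q
    by_cases h : p = q
    · subst h
      rw [hHdiag]
      simp [norm_div, Complex.norm_natCast]
    · rw [hHentry, if_neg h, sub_zero, norm_mul, norm_div, norm_pow]
      have e1 : ‖(d:ℂ) + 1‖ = (d:ℝ) + 1 := by
        rw [show ((d:ℂ) + 1) = (((d:ℝ) + 1 : ℝ) : ℂ) by push_cast; ring, Complex.norm_real, Real.norm_eq_abs]
        rw [abs_of_nonneg (by positivity)]
      rw [e1, Complex.norm_natCast, habsG p q h]
      have hdR : (0:ℝ) < (d:ℝ) := by exact_mod_cast hd
      field_simp
  · -- trace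
    rw [Matrix.trace]
    simp only [Matrix.diag_apply, hHdiag]
    rw [Finset.sum_const, Finset.card_univ, Fintype.card_fin, nsmul_eq_mul]
    push_cast
    field_simp
end

section
/- Let d ≥ 1, n ≥ 1, and let ψ : Fin n → EuclideanSpace ℂ (Fin d) be unit vectors such that there exists a real constant c with 0 ≤ c < 1 and |⟪ψ j, ψ k⟫| = c for all j ≠ k. Then the rank-one projectors P j (the d × d matrices with entries (P j) a b = (ψ j a) * conj (ψ j b)) are linearly independent over ℂ; in particular n ≤ d². -/
/-- The rank-one projectors associated to an equiangular family of unit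
vectors (with common angle `c`, `0 ≤ c < 1`) are linearly independent; in particular
`n ≤ d²`. -/
theorem stmt_4 (d n : ℕ) (hd : 1 ≤ d) (hn : 1 ≤ n)
    (ψ : Fin n → EuclideanSpace ℂ (Fin d))
    (hunit : ∀ j, ‖ψ j‖ = 1)
    (c : ℝ) (hc0 : 0 ≤ c) (hc1 : c < 1)
    (hang : ∀ j k, j ≠ k → ‖(inner ℂ (ψ j) (ψ k) : ℂ)‖ = c)
    (P : Fin n → Matrix (Fin d) (Fin d) ℂ)
    (hP : ∀ j a b, P j a b = ψ j a * starRingEnd ℂ (ψ j b)) :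
    LinearIndependent ℂ P ∧ n ≤ d ^ 2 := by
  have hli : LinearIndependent ℂ P := by
    rw [Fintype.linearIndependent_iff]
    intro g hg
    have h1 : ∀ a b, ∑ j, g j * (ψ j a * starRingEnd ℂ (ψ j b)) = 0 := by
      intro a b
      have := congrFun (congrFun hg a) b
      simpa [Matrix.sum_apply, hP] using this
    -- key sum identity
    have key : ∀ k, ∑ j, g j *
        ((∑ a, starRingEnd ℂ (ψ k a) * ψ j a) * (∑ b, starRingEnd ℂ (ψ j b) * ψ k b)) = 0 := by
      intro k
      have expand : ∀ j, g j *
          ((∑ a, starRingEnd ℂ (ψ k a) * ψ j a) * (∑ b, starRingEnd ℂ (ψ j b) * ψ k b))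
          = ∑ a, ∑ b, starRingEnd ℂ (ψ k a) * ψ k b * (g j * (ψ j a * starRingEnd ℂ (ψ j b))) := by
        intro j
        rw [Finset.sum_mul_sum, Finset.mul_sum]
        refine Finset.sum_congr rfl fun a _ => ?_
        rw [Finset.mul_sum]
        exact Finset.sum_congr rfl fun b _ => by ring
      calc ∑ j, g j * ((∑ a, starRingEnd ℂ (ψ k a) * ψ j a) * (∑ b, starRingEnd ℂ (ψ j b) * ψ k b))
          = ∑ j, ∑ a, ∑ b, starRingEnd ℂ (ψ k a) * ψ k b *
              (g j * (ψ j a * starRingEnd ℂ (ψ j b))) := by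
            exact Finset.sum_congr rfl fun j _ => expand j
        _ = ∑ a, ∑ j, ∑ b, starRingEnd ℂ (ψ k a) * ψ k b *
              (g j * (ψ j a * starRingEnd ℂ (ψ j b))) := Finset.sum_comm
        _ = ∑ a, ∑ b, ∑ j, starRingEnd ℂ (ψ k a) * ψ k b *
              (g j * (ψ j a * starRingEnd ℂ (ψ j b))) := by
            exact Finset.sum_congr rfl fun a _ => Finset.sum_comm
        _ = ∑ a, ∑ b, starRingEnd ℂ (ψ k a) * ψ k b *
              ∑ j, g j * (ψ j a * starRingEnd ℂ (ψ j b)) := by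
            refine Finset.sum_congr rfl fun a _ => Finset.sum_congr rfl fun b _ => ?_
            rw [Finset.mul_sum]
        _ = 0 := by simp [h1]
    -- rewrite in terms of inner products
    have hinner : ∀ j k : Fin n, (∑ b, starRingEnd ℂ (ψ j b) * ψ k b) = (inner ℂ (ψ j) (ψ k) : ℂ) := by
      intro j k
      simp [PiLp.inner_apply, RCLike.inner_apply, mul_comm]
    have key2 : ∀ k, ∑ j, g j * (if j = k then 1 else (c:ℂ)^2) = 0 := by
      intro k
      have := key k
      rw [show (0:ℂ) = ∑ j, g j *
          ((∑ a, starRingEnd ℂ (ψ k a) * ψ j a) * (∑ b, starRingEnd ℂ (ψ j b) * ψ k b)) from this.symm]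
      refine Finset.sum_congr rfl fun j _ => ?_
      congr 1
      rw [hinner k j, hinner j k]
      by_cases hjk : j = k
      · subst hjk
        simp only [if_pos rfl]
        rw [inner_self_eq_norm_sq_to_K, hunit]
        norm_num
      · rw [if_neg hjk]
        rw [show (inner ℂ (ψ k) (ψ j) : ℂ) = starRingEnd ℂ (inner ℂ (ψ j) (ψ k) : ℂ) from
          (inner_conj_symm _ _).symm, mul_comm, Complex.mul_conj, Complex.normSq_eq_norm_sq,
          hang j k hjk]
        push_cast
        ring
    set S : ℂ := ∑ j, g j with hS
    have key3 : ∀ k, (c:ℂ)^2 * S + g k * (1 - (c:ℂ)^2) = 0 := by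
      intro k
      have := key2 k
      rw [show ∑ j, g j * (if j = k then 1 else (c:ℂ)^2)
          = ∑ j, (g j * (c:ℂ)^2 + if j = k then g j * (1 - (c:ℂ)^2) else 0) from
        Finset.sum_congr rfl fun j _ => by split <;> ring] at this
      rw [Finset.sum_add_distrib, Finset.sum_ite_eq' Finset.univ k
        (fun j => g j * (1 - (c:ℂ)^2))] at this
      simpa [hS, Finset.sum_mul, mul_comm] using this
    have hcoef : ((n:ℝ) * c^2 + 1 - c^2) ≠ 0 := by
      have h1n : (1:ℝ) ≤ (n:ℝ) := by exact_mod_cast hn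
      nlinarith [sq_nonneg c]
    have hSsum : S * ((n:ℂ) * (c:ℂ)^2 + 1 - (c:ℂ)^2) = 0 := by
      have := Finset.sum_congr rfl (fun k (_ : k ∈ Finset.univ) => key3 k)
      simp only [Finset.sum_add_distrib, Finset.sum_const, Finset.card_univ,
        Fintype.card_fin, nsmul_eq_mul, ← Finset.sum_mul, ← hS, Finset.sum_const_zero] at this
      -- this : n * ((c:ℂ)^2 * S) + S * (1 - c^2) = 0
      linear_combination this
    have hS0 : S = 0 := by
      have : ((n:ℂ) * (c:ℂ)^2 + 1 - (c:ℂ)^2) ≠ 0 := by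
        have he : ((n:ℂ) * (c:ℂ)^2 + 1 - (c:ℂ)^2) = (((n:ℝ) * c^2 + 1 - c^2 : ℝ) : ℂ) := by
          push_cast; ring
        rw [he]
        exact Complex.ofReal_ne_zero.mpr hcoef
      exact (mul_eq_zero.mp hSsum).resolve_right this
    intro k
    have := key3 k
    rw [hS0, mul_zero, zero_add] at this
    have hc2 : (1 - (c:ℂ)^2) ≠ 0 := by
      have he : (1 - (c:ℂ)^2) = ((1 - c^2 : ℝ) : ℂ) := by push_cast; ring
      rw [he]
      refine Complex.ofReal_ne_zero.mpr ?_
      nlinarith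
    exact (mul_eq_zero.mp this).resolve_right hc2
  refine ⟨hli, ?_⟩
  have := hli.fintype_card_le_finrank
  simpa [Module.finrank_matrix, pow_two] using this
end

section
/- Let d ≥ 1, n ≥ 1, r ≥ 1, and let Π : Fin n → Matrix (Fin d) (Fin d) ℂ be a family of orthogonal projections (i.e., each Π j is Hermitian and satisfies Π j * Π j = Π j) each of rank r, such that there is a real constant c with c ≠ r and Tr(Π j * Π k) = c for all j ≠ k. Then the matrices Π j are linearly independent over ℂ; in particular n ≤ d². -/
/-- The trace of an idempotent complex matrix equals its rank. -/
lemma trace_of_idem {d : ℕ} (A : Matrix (Fin d) (Fin d) ℂ) (h : A * A = A) :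
    A.trace = (A.rank : ℂ) := by
  have hf : A.mulVecLin ∘ₗ A.mulVecLin = A.mulVecLin := by
    rw [← Matrix.mulVecLin_mul, h]
  have hp : LinearMap.IsProj (LinearMap.range A.mulVecLin) A.mulVecLin := by
    refine ⟨fun x => LinearMap.mem_range_self _ x, ?_⟩
    rintro x ⟨y, rfl⟩
    rw [← LinearMap.comp_apply, hf]
  have ht := hp.trace
  have h2 : LinearMap.trace ℂ (Fin d → ℂ) A.mulVecLin = A.trace := by
    rw [LinearMap.trace_eq_matrix_trace ℂ (Pi.basisFun ℂ (Fin d)),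
      LinearMap.toMatrix_eq_toMatrix']
    congr 1
    exact LinearMap.toMatrix'_toLin' A
  rw [Matrix.rank, ← h2, ht]

/-- Hilbert–Schmidt inner products of Hermitian idempotents are nonnegative reals. -/
lemma hs_nonneg {d : ℕ} (A B : Matrix (Fin d) (Fin d) ℂ)
    (hA : A.IsHermitian) (hB : B.IsHermitian) (hA2 : A * A = A) (hB2 : B * B = B)
    (c : ℝ) (hc : (A * B).trace = (c : ℂ)) : 0 ≤ c := by
  set M := B * A with hM
  have hMH : M.conjTranspose = A * B := by
    rw [hM, Matrix.conjTranspose_mul, hA.eq, hB.eq]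
  have key : (M.conjTranspose * M).trace = (A * B).trace := by
    rw [hMH, hM]
    calc (A * B * (B * A)).trace = (A * (B * B) * A).trace := by
          rw [Matrix.mul_assoc, Matrix.mul_assoc, Matrix.mul_assoc]
      _ = (A * B * A).trace := by rw [hB2, Matrix.mul_assoc]
      _ = (A * A * B).trace := by
          rw [Matrix.trace_mul_cycle]
      _ = (A * B).trace := by rw [hA2]
  have hexp : (M.conjTranspose * M).trace = ∑ i, ∑ j, (Complex.normSq (M j i) : ℂ) := by
    rw [Matrix.trace]
    simp only [Matrix.diag_apply, Matrix.mul_apply, Matrix.conjTranspose_apply]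
    refine Finset.sum_congr rfl fun i _ => Finset.sum_congr rfl fun j _ => ?_
    rw [Complex.normSq_eq_conj_mul_self]; rfl
  have hcc : (c : ℂ) = ∑ i, ∑ j, (Complex.normSq (M j i) : ℂ) := by
    rw [← hexp, key, hc]
  have hre : c = ∑ i, ∑ j, Complex.normSq (M j i) := by
    have := congrArg Complex.re hcc
    simpa using this
  rw [hre]
  exact Finset.sum_nonneg fun i _ => Finset.sum_nonneg fun j _ => Complex.normSq_nonneg _

/-- A family of rank-`r` orthogonal projections whose pairwise
Hilbert–Schmidt inner products all equal a constant `c ≠ r` is linearly independent;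
in particular `n ≤ d²`. -/
theorem stmt_5 (d n r : ℕ) (hd : 1 ≤ d) (hn : 1 ≤ n) (hr : 1 ≤ r)
    (Pi : Fin n → Matrix (Fin d) (Fin d) ℂ)
    (hherm : ∀ j, (Pi j).IsHermitian)
    (hproj : ∀ j, Pi j * Pi j = Pi j)
    (hrank : ∀ j, (Pi j).rank = r)
    (c : ℝ) (hc : c ≠ (r : ℝ))
    (htr : ∀ j k, j ≠ k → (Pi j * Pi k).trace = (c : ℂ)) :
    LinearIndependent ℂ Pi ∧ n ≤ d ^ 2 := by
  -- trace of each projection is r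
  have hdiag : ∀ j, (Pi j * Pi j).trace = (r : ℂ) := by
    intro j
    rw [hproj j, trace_of_idem _ (hproj j), hrank j]
  -- the coefficient r - c + n*c is nonzero
  have hrc : ((r : ℂ) - (c : ℂ)) ≠ 0 := by
    intro h
    apply hc
    have : ((r : ℝ) : ℂ) = ((c : ℝ) : ℂ) := by
      have := sub_eq_zero.mp h; exact_mod_cast this
    exact (Complex.ofReal_inj.mp this).symm
  have hK : ((r : ℂ) - (c : ℂ) + (n : ℂ) * (c : ℂ)) ≠ 0 := by
    have hKr : ((r : ℂ) - (c : ℂ) + (n : ℂ) * (c : ℂ))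
        = (((r : ℝ) - c + (n : ℝ) * c : ℝ) : ℂ) := by push_cast; ring
    rw [hKr, Ne, Complex.ofReal_eq_zero]
    rcases eq_or_lt_of_le hn with h1 | h2
    · -- n = 1
      have : (n : ℝ) = 1 := by exact_mod_cast h1.symm
      rw [this]
      have : (1 : ℝ) ≤ (r : ℝ) := by exact_mod_cast hr
      intro h; nlinarith
    · -- n ≥ 2, so there are two distinct indices and c ≥ 0
      have hn2 : 2 ≤ n := h2
      have h01 : (⟨0, by omega⟩ : Fin n) ≠ ⟨1, by omega⟩ := by
        simp [Fin.ext_iff]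
      have hc0 : 0 ≤ c :=
        hs_nonneg (Pi ⟨0, by omega⟩) (Pi ⟨1, by omega⟩) (hherm _) (hherm _)
          (hproj _) (hproj _) c (htr _ _ h01)
      have hrr : (1 : ℝ) ≤ (r : ℝ) := by exact_mod_cast hr
      have hnn : (2 : ℝ) ≤ (n : ℝ) := by exact_mod_cast hn2
      intro h; nlinarith
  -- main linear independence argument
  have hLI : LinearIndependent ℂ Pi := by
    rw [Fintype.linearIndependent_iff]
    intro g hg
    set S : ℂ := ∑ j, g j with hS
    have key : ∀ k, ((r : ℂ) - (c : ℂ)) * g k + (c : ℂ) * S = 0 := by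
      intro k
      have h1 : (Pi k * ∑ j, g j • Pi j).trace = 0 := by
        rw [hg, Matrix.mul_zero, Matrix.trace_zero]
      have h2 : (Pi k * ∑ j, g j • Pi j).trace = ∑ j, g j * (Pi k * Pi j).trace := by
        rw [Matrix.mul_sum, Matrix.trace_sum]
        refine Finset.sum_congr rfl fun j _ => ?_
        rw [Matrix.mul_smul, Matrix.trace_smul, smul_eq_mul]
      have h3 : ∑ j, g j * (Pi k * Pi j).trace
          = ∑ j, ((c : ℂ) * g j + if j = k then ((r : ℂ) - (c : ℂ)) * g j else 0) := by
        refine Finset.sum_congr rfl fun j _ => ?_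
        by_cases hjk : j = k
        · subst hjk
          rw [hdiag j, if_pos rfl]; ring
        · rw [htr k j (Ne.symm hjk), if_neg hjk]; ring
      have h4 : ∑ j, ((c : ℂ) * g j + if j = k then ((r : ℂ) - (c : ℂ)) * g j else 0)
          = (c : ℂ) * S + ((r : ℂ) - (c : ℂ)) * g k := by
        rw [Finset.sum_add_distrib, Finset.sum_ite_eq' Finset.univ k
          (fun j => ((r : ℂ) - (c : ℂ)) * g j), if_pos (Finset.mem_univ k), ← Finset.mul_sum]
      have := h1
      rw [h2, h3, h4] at this
      linear_combination this
    -- sum the equations over k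
    have hsum : (((r : ℂ) - (c : ℂ)) + (n : ℂ) * (c : ℂ)) * S = 0 := by
      have := Finset.sum_congr rfl (fun k (_ : k ∈ Finset.univ) => key k)
      rw [Finset.sum_add_distrib, ← Finset.mul_sum, Finset.sum_const,
        Finset.card_univ, Fintype.card_fin, nsmul_eq_mul, Finset.sum_const_zero] at this
      calc (((r : ℂ) - (c : ℂ)) + (n : ℂ) * (c : ℂ)) * S
          = ((r : ℂ) - (c : ℂ)) * S + (n : ℂ) * ((c : ℂ) * S) := by ring
        _ = 0 := this
    have hS0 : S = 0 := by
      rcases mul_eq_zero.mp hsum with h | h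
      · exact absurd h hK
      · exact h
    intro k
    have := key k
    rw [hS0, mul_zero, add_zero] at this
    rcases mul_eq_zero.mp this with h | h
    · exact absurd h hrc
    · exact h
  refine ⟨hLI, ?_⟩
  have hcard := hLI.fintype_card_le_finrank
  rw [Fintype.card_fin] at hcard
  have hfr : Module.finrank ℂ (Matrix (Fin d) (Fin d) ℂ) = d ^ 2 := by
    rw [Module.finrank_matrix]
    simp [sq]
  rwa [hfr] at hcard
end

section
/- Let d ≥ 1, n ≥ 1, and let ψ : Fin n → EuclideanSpace ℂ (Fin d) be unit vectors. Then (d(d+1)/2) · ∑_{j,k ∈ Fin n} |⟪ψ j, ψ k⟫|^4 ≥ n². (This is the Welch bound for t = 2.) -/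
open Finset Complex

/-- The Welch bound for `t = 2`: for any family of `n` unit vectors in
`ℂ^d`, `(d(d+1)/2) · ∑_{j,k} |⟪ψ j, ψ k⟫|⁴ ≥ n²`. -/
theorem stmt_6 (d n : ℕ) (hd : 1 ≤ d) (hn : 1 ≤ n)
    (ψ : Fin n → EuclideanSpace ℂ (Fin d))
    (hunit : ∀ j, ‖ψ j‖ = 1) :
    ((d * (d + 1) / 2 : ℕ) : ℝ) *
      ∑ j : Fin n, ∑ k : Fin n, ‖(inner ℂ (ψ j) (ψ k) : ℂ)‖ ^ 4
    ≥ (n : ℝ) ^ 2 := by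
  classical
  set c : Fin n → Fin n → ℂ := fun j k => inner ℂ (ψ j) (ψ k) with hc
  have hcdef : ∀ j k, c j k = ∑ a, (starRingEnd ℂ) (ψ j a) * ψ k a := by
    intro j k
    show (inner ℂ (ψ j) (ψ k) : ℂ) = _
    rw [PiLp.inner_apply]
    simp [RCLike.inner_apply, mul_comm]
  have hone : ∀ j, ∑ a, (starRingEnd ℂ) (ψ j a) * ψ j a = 1 := by
    intro j
    have h2 : (inner ℂ (ψ j) (ψ j) : ℂ) = 1 := by
      rw [inner_self_eq_norm_sq_to_K, hunit]; norm_num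
    rw [PiLp.inner_apply] at h2
    simpa only [RCLike.inner_apply, mul_comm] using h2
  -- helper: factoring sums over product types
  have hpair : ∀ f g : Fin d → ℂ,
      ∑ x : Fin d × Fin d, f x.1 * g x.2 = (∑ a, f a) * (∑ b, g b) := by
    intro f g
    rw [Finset.sum_mul_sum]
    exact Fintype.sum_prod_type _
  -- the operator P
  set P : Fin d × Fin d → Fin d × Fin d → ℂ := fun x y =>
    ∑ j, ψ j x.1 * ψ j x.2 * (starRingEnd ℂ) (ψ j y.1) * (starRingEnd ℂ) (ψ j y.2) with hP
  -- diagonal sums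
  have hdiag : ∑ x : Fin d × Fin d, P x x = (n : ℂ) := by
    simp only [hP]
    rw [Finset.sum_comm]
    have key : ∀ j : Fin n, ∑ x : Fin d × Fin d,
        ψ j x.1 * ψ j x.2 * (starRingEnd ℂ) (ψ j x.1) * (starRingEnd ℂ) (ψ j x.2) = 1 := by
      intro j
      have e : ∑ x : Fin d × Fin d,
          ψ j x.1 * ψ j x.2 * (starRingEnd ℂ) (ψ j x.1) * (starRingEnd ℂ) (ψ j x.2)
          = ∑ x : Fin d × Fin d,
            ((starRingEnd ℂ) (ψ j x.1) * ψ j x.1) * ((starRingEnd ℂ) (ψ j x.2) * ψ j x.2) :=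
        Finset.sum_congr rfl (fun x _ => by ring)
      rw [e, hpair (fun a => (starRingEnd ℂ) (ψ j a) * ψ j a)
        (fun b => (starRingEnd ℂ) (ψ j b) * ψ j b), hone j, one_mul]
    rw [Finset.sum_congr rfl (fun j _ => key j)]
    simp
  have hdiag2 : ∑ x : Fin d × Fin d, P x (x.2, x.1) = (n : ℂ) := by
    simp only [hP]
    rw [Finset.sum_comm]
    have key : ∀ j : Fin n, ∑ x : Fin d × Fin d,
        ψ j x.1 * ψ j x.2 * (starRingEnd ℂ) (ψ j x.2) * (starRingEnd ℂ) (ψ j x.1) = 1 := by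
      intro j
      have e : ∑ x : Fin d × Fin d,
          ψ j x.1 * ψ j x.2 * (starRingEnd ℂ) (ψ j x.2) * (starRingEnd ℂ) (ψ j x.1)
          = ∑ x : Fin d × Fin d,
            ((starRingEnd ℂ) (ψ j x.1) * ψ j x.1) * ((starRingEnd ℂ) (ψ j x.2) * ψ j x.2) :=
        Finset.sum_congr rfl (fun x _ => by ring)
      rw [e, hpair (fun a => (starRingEnd ℂ) (ψ j a) * ψ j a)
        (fun b => (starRingEnd ℂ) (ψ j b) * ψ j b), hone j, one_mul]
    rw [Finset.sum_congr rfl (fun j _ => key j)]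
    simp
  -- Frobenius norm of P
  have hfrob : ∑ x : Fin d × Fin d, ∑ y : Fin d × Fin d, P x y * (starRingEnd ℂ) (P x y)
      = ∑ j : Fin n, ∑ k : Fin n, ((Complex.normSq (c j k) : ℂ)) ^ 2 := by
    have expand : ∀ x y : Fin d × Fin d, P x y * (starRingEnd ℂ) (P x y) =
        ∑ j : Fin n, ∑ k : Fin n,
          (ψ j x.1 * (starRingEnd ℂ) (ψ k x.1) * (ψ j x.2 * (starRingEnd ℂ) (ψ k x.2))) *
          ((starRingEnd ℂ) (ψ j y.1) * ψ k y.1 * ((starRingEnd ℂ) (ψ j y.2) * ψ k y.2)) := by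
      intro x y
      simp only [hP]
      simp only [map_sum, map_mul, RingHomCompTriple.comp_apply, Complex.conj_conj,
        RingHom.id_apply, starRingEnd_self_apply]
      rw [Finset.sum_mul_sum]
      exact Finset.sum_congr rfl fun j _ => Finset.sum_congr rfl fun k _ => by ring
    calc ∑ x : Fin d × Fin d, ∑ y : Fin d × Fin d, P x y * (starRingEnd ℂ) (P x y)
        = ∑ x : Fin d × Fin d, ∑ j : Fin n, ∑ k : Fin n,
            (ψ j x.1 * (starRingEnd ℂ) (ψ k x.1) * (ψ j x.2 * (starRingEnd ℂ) (ψ k x.2))) *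
            ∑ y : Fin d × Fin d,
              ((starRingEnd ℂ) (ψ j y.1) * ψ k y.1 * ((starRingEnd ℂ) (ψ j y.2) * ψ k y.2)) := by
          apply Finset.sum_congr rfl; intro x _
          simp only [expand]
          rw [Finset.sum_comm]
          apply Finset.sum_congr rfl; intro j _
          rw [Finset.sum_comm]
          apply Finset.sum_congr rfl; intro k _
          rw [← Finset.mul_sum]
      _ = ∑ j : Fin n, ∑ k : Fin n,
            (∑ x : Fin d × Fin d,
              ψ j x.1 * (starRingEnd ℂ) (ψ k x.1) * (ψ j x.2 * (starRingEnd ℂ) (ψ k x.2))) *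
            ∑ y : Fin d × Fin d,
              ((starRingEnd ℂ) (ψ j y.1) * ψ k y.1 * ((starRingEnd ℂ) (ψ j y.2) * ψ k y.2)) := by
          rw [Finset.sum_comm]
          apply Finset.sum_congr rfl; intro j _
          rw [Finset.sum_comm]
          apply Finset.sum_congr rfl; intro k _
          rw [← Finset.sum_mul]
      _ = ∑ j : Fin n, ∑ k : Fin n, ((Complex.normSq (c j k) : ℂ)) ^ 2 := by
          apply Finset.sum_congr rfl; intro j _
          apply Finset.sum_congr rfl; intro k _
          rw [hpair (fun a => ψ j a * (starRingEnd ℂ) (ψ k a))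
              (fun b => ψ j b * (starRingEnd ℂ) (ψ k b)),
            hpair (fun a => (starRingEnd ℂ) (ψ j a) * ψ k a)
              (fun b => (starRingEnd ℂ) (ψ j b) * ψ k b)]
          have h1 : ∑ a, ψ j a * (starRingEnd ℂ) (ψ k a) = (starRingEnd ℂ) (c j k) := by
            rw [hcdef]
            simp [mul_comm]
          have h2 : (∑ a, (starRingEnd ℂ) (ψ j a) * ψ k a) = c j k := (hcdef j k).symm
          rw [h1, h2, Complex.normSq_eq_conj_mul_self]
          ring
  -- move everything to ℝ
  set g : Fin d × Fin d → Fin d × Fin d → ℝ := fun x y => (P x y).re with hg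
  set Q : Fin d × Fin d → Fin d × Fin d → ℝ := fun x y =>
    (if y = x then (1:ℝ) else 0) + (if y = (x.2, x.1) then (1:ℝ) else 0) with hQ
  have hQg : ∑ x : Fin d × Fin d, ∑ y : Fin d × Fin d, Q x y * g x y = 2 * n := by
    have key : ∀ x : Fin d × Fin d, ∑ y : Fin d × Fin d, Q x y * g x y
        = g x x + g x (x.2, x.1) := by
      intro x
      simp only [hQ, add_mul, ite_mul, one_mul, zero_mul]
      rw [Finset.sum_add_distrib]
      rw [Finset.sum_ite_eq' Finset.univ x (fun y => g x y),
        Finset.sum_ite_eq' Finset.univ (x.2, x.1) (fun y => g x y)]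
      simp
    rw [Finset.sum_congr rfl (fun x _ => key x), Finset.sum_add_distrib]
    have e1 : ∑ x : Fin d × Fin d, g x x = n := by
      have := congrArg Complex.re hdiag
      rw [Complex.re_sum] at this
      simpa [hg] using this
    have e2 : ∑ x : Fin d × Fin d, g x (x.2, x.1) = n := by
      have := congrArg Complex.re hdiag2
      rw [Complex.re_sum] at this
      simpa [hg] using this
    rw [e1, e2]; ring
  have hQQ : ∑ x : Fin d × Fin d, ∑ y : Fin d × Fin d, Q x y ^ 2
      = 2 * (d : ℝ) ^ 2 + 2 * d := by
    have hy : ∀ x : Fin d × Fin d, ∑ y : Fin d × Fin d, Q x y ^ 2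
        = 2 + (if x.1 = x.2 then 2 else 0) := by
      intro x
      rcases eq_or_ne x.1 x.2 with h | h
      · have hxx : ((x.2, x.1) : Fin d × Fin d) = x := by
          ext <;> simp [h]
        simp only [hQ, hxx, if_pos h]
        have e : ∀ y : Fin d × Fin d,
            ((if y = x then (1:ℝ) else 0) + (if y = x then (1:ℝ) else 0)) ^ 2
            = (if y = x then (4:ℝ) else 0) := by
          intro y; split <;> norm_num
        rw [Finset.sum_congr rfl (fun y _ => e y)]
        rw [Finset.sum_ite_eq' Finset.univ x (fun _ => (4:ℝ))]
        norm_num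
      · have hxx : ((x.2, x.1) : Fin d × Fin d) ≠ x := by
          intro hcon
          exact h (by simpa using (congrArg Prod.fst hcon).symm)
        simp only [hQ, if_neg h]
        have e : ∀ y : Fin d × Fin d,
            ((if y = x then (1:ℝ) else 0) + (if y = (x.2, x.1) then (1:ℝ) else 0)) ^ 2
            = (if y = x then (1:ℝ) else 0) + (if y = (x.2, x.1) then (1:ℝ) else 0) := by
          intro y
          rcases eq_or_ne y x with h1 | h1
          · subst h1
            rw [if_pos rfl, if_neg (fun hcon => hxx hcon.symm)]
            norm_num
          · rw [if_neg h1]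
            split <;> norm_num
        rw [Finset.sum_congr rfl (fun y _ => e y), Finset.sum_add_distrib,
          Finset.sum_ite_eq' Finset.univ x (fun _ => (1:ℝ)),
          Finset.sum_ite_eq' Finset.univ (x.2, x.1) (fun _ => (1:ℝ))]
        norm_num
    rw [Finset.sum_congr rfl (fun x _ => hy x), Finset.sum_add_distrib]
    have e1 : ∑ _x : Fin d × Fin d, (2:ℝ) = 2 * (d:ℝ)^2 := by
      simp [Finset.card_univ]; ring
    have e2 : ∑ x : Fin d × Fin d, (if x.1 = x.2 then (2:ℝ) else 0) = 2 * d := by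
      rw [Fintype.sum_prod_type]
      simp [Finset.sum_ite_eq]
      ring
    rw [e1, e2]
  -- the two real sums
  set S : ℝ := ∑ j : Fin n, ∑ k : Fin n, ‖c j k‖ ^ 4 with hS
  have hSalt : S = ∑ j : Fin n, ∑ k : Fin n, Complex.normSq (c j k) ^ 2 := by
    apply Finset.sum_congr rfl; intro j _
    apply Finset.sum_congr rfl; intro k _
    rw [← Complex.sq_norm, ← pow_mul]
  have hgS : ∑ x : Fin d × Fin d, ∑ y : Fin d × Fin d, g x y ^ 2 ≤ S := by
    have hre : ∑ x : Fin d × Fin d, ∑ y : Fin d × Fin d, Complex.normSq (P x y) = S := by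
      have := congrArg Complex.re hfrob
      simp only [Complex.re_sum, Complex.mul_conj, ← Complex.ofReal_pow,
        Complex.ofReal_re] at this
      rw [hSalt]
      exact this
    rw [← hre]
    apply Finset.sum_le_sum; intro x _
    apply Finset.sum_le_sum; intro y _
    have : g x y ^ 2 = (P x y).re ^ 2 := rfl
    rw [this, Complex.normSq_apply]
    nlinarith [sq_nonneg (P x y).im]
  -- Cauchy-Schwarz
  have cs := Finset.sum_mul_sq_le_sq_mul_sq Finset.univ
    (fun p : (Fin d × Fin d) × (Fin d × Fin d) => Q p.1 p.2)
    (fun p : (Fin d × Fin d) × (Fin d × Fin d) => g p.1 p.2)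
  have eQg : (∑ p : (Fin d × Fin d) × (Fin d × Fin d), Q p.1 p.2 * g p.1 p.2)
      = ∑ x : Fin d × Fin d, ∑ y : Fin d × Fin d, Q x y * g x y :=
    Fintype.sum_prod_type _
  have eQQ : (∑ p : (Fin d × Fin d) × (Fin d × Fin d), Q p.1 p.2 ^ 2)
      = ∑ x : Fin d × Fin d, ∑ y : Fin d × Fin d, Q x y ^ 2 :=
    Fintype.sum_prod_type _
  have egg : (∑ p : (Fin d × Fin d) × (Fin d × Fin d), g p.1 p.2 ^ 2)
      = ∑ x : Fin d × Fin d, ∑ y : Fin d × Fin d, g x y ^ 2 :=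
    Fintype.sum_prod_type _
  rw [eQg, eQQ, egg, hQg, hQQ] at cs
  -- cast arithmetic
  have hcast : ((d * (d + 1) / 2 : ℕ) : ℝ) * 2 = (d : ℝ) * ((d:ℝ) + 1) := by
    have h2 : 2 ∣ d * (d + 1) := even_iff_two_dvd.mp (Nat.even_mul_succ_self d)
    have := Nat.div_mul_cancel h2
    exact_mod_cast congrArg (Nat.cast : ℕ → ℝ) this
  have hdnn : (0:ℝ) ≤ 2 * (d:ℝ)^2 + 2 * d := by positivity
  show ((d * (d + 1) / 2 : ℕ) : ℝ) * S ≥ (n : ℝ) ^ 2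
  have h1 : (2 * (n:ℝ)) ^ 2 ≤ (2 * (d:ℝ)^2 + 2*d) * S :=
    le_trans cs (mul_le_mul_of_nonneg_left hgS hdnn)
  have h2 : (2 * (d:ℝ)^2 + 2*d) = 4 * ((d * (d + 1) / 2 : ℕ) : ℝ) := by
    linear_combination (-2 : ℝ) * hcast
  have h3 : 4 * (n:ℝ)^2 ≤ 4 * (((d * (d + 1) / 2 : ℕ) : ℝ) * S) := by
    calc 4 * (n:ℝ)^2 = (2 * (n:ℝ))^2 := by ring
      _ ≤ (2 * (d:ℝ)^2 + 2*d) * S := h1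
      _ = 4 * (((d * (d + 1) / 2 : ℕ) : ℝ) * S) := by rw [h2]; ring
  linarith
end

section
/- Let d ≥ 1, n ≥ 1, and let ψ : Fin n → EuclideanSpace ℂ (Fin d) be any family of vectors with Gram matrix G (G j k = ⟪ψ j, ψ k⟫). Then the Hadamard square G ∘ G, with entries (G ∘ G) j k = (G j k)^2, has rank at most d(d+1)/2. -/
open Finset in
lemma sum_pairs_sym {d : ℕ} (x : Fin d × Fin d → ℂ) (hx : ∀ p : Fin d × Fin d, x p.swap = x p) :
    ∑ p : Fin d × Fin d, x p
      = ∑ p ∈ Finset.univ.filter (fun p : Fin d × Fin d => p.1 ≤ p.2),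
          (if p.1 = p.2 then 1 else 2) * x p := by
  classical
  rw [← Finset.sum_filter_add_sum_filter_not Finset.univ (fun p : Fin d × Fin d => p.1 ≤ p.2)]
  have h2 : ∑ p ∈ Finset.univ.filter (fun p : Fin d × Fin d => ¬ p.1 ≤ p.2), x p
      = ∑ p ∈ Finset.univ.filter (fun p : Fin d × Fin d => p.1 < p.2), x p := by
    refine Finset.sum_bij' (fun p _ => Prod.swap p) (fun p _ => Prod.swap p) ?_ ?_ ?_ ?_ ?_
    · intro p hp; simp only [Finset.mem_filter, Finset.mem_univ, true_and, not_le] at hp ⊢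
      simpa using hp
    · intro p hp; simp only [Finset.mem_filter, Finset.mem_univ, true_and, not_le] at hp ⊢
      simpa using hp
    · intro p _; simp
    · intro p _; simp
    · intro p _; exact (hx p).symm
  rw [h2]
  have h3 : ∀ p : Fin d × Fin d, (if p.1 = p.2 then (1:ℂ) else 2) * x p
      = x p + (if p.1 ≠ p.2 then x p else 0) := by
    intro p; by_cases h : p.1 = p.2 <;> simp [h] <;> ring
  rw [Finset.sum_congr rfl (fun p _ => h3 p), Finset.sum_add_distrib]
  congr 1
  rw [← Finset.sum_filter, Finset.filter_filter]
  apply Finset.sum_congr _ (fun _ _ => rfl)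
  ext p
  simp only [Finset.mem_filter, Finset.mem_univ, true_and]
  constructor <;> intro h
  · first
    | exact lt_of_le_of_ne h.1 h.2
    | exact ⟨le_of_lt h, ne_of_lt h⟩
  · first
    | exact lt_of_le_of_ne h.1 h.2
    | exact ⟨le_of_lt h, ne_of_lt h⟩

/-- For any family of vectors `ψ : Fin n → ℂ^d` with Gram matrix `G`,
the Hadamard square `G ∘ G` has rank at most `d(d+1)/2`. -/
theorem stmt_7 (d n : ℕ) (hd : 1 ≤ d) (hn : 1 ≤ n)
    (ψ : Fin n → EuclideanSpace ℂ (Fin d))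
    (G : Matrix (Fin n) (Fin n) ℂ)
    (hG : ∀ j k, G j k = (inner ℂ (ψ j) (ψ k) : ℂ)) :
    (Matrix.hadamard G G).rank ≤ d * (d + 1) / 2 := by
  classical
  set ι := {p : Fin d × Fin d // p.1 ≤ p.2}
  set B : Matrix (Fin n) ι ℂ :=
    fun j p => (if p.1.1 = p.1.2 then (1:ℂ) else 2)
      * (starRingEnd ℂ) (ψ j p.1.1 * ψ j p.1.2) with hB
  set C : Matrix ι (Fin n) ℂ := fun p k => ψ k p.1.1 * ψ k p.1.2 with hC
  have key : Matrix.hadamard G G = B * C := by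
    ext j k
    simp only [Matrix.hadamard_apply, Matrix.mul_apply]
    rw [hG]
    rw [show (inner ℂ (ψ j) (ψ k) : ℂ) = ∑ a, (starRingEnd ℂ) (ψ j a) * ψ k a by
      simp [PiLp.inner_apply, RCLike.inner_apply, mul_comm]]
    rw [Finset.sum_mul_sum, ← Finset.sum_product', Finset.univ_product_univ]
    rw [sum_pairs_sym (fun p : Fin d × Fin d =>
        ((starRingEnd ℂ) (ψ j p.1) * ψ k p.1) * ((starRingEnd ℂ) (ψ j p.2) * ψ k p.2))
      (by intro p; simp [Prod.swap]; ring)]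
    rw [Finset.sum_subtype (p := fun p : Fin d × Fin d => p.1 ≤ p.2) (Finset.univ.filter (fun p : Fin d × Fin d => p.1 ≤ p.2))
      (fun p => by simp) (fun p : Fin d × Fin d =>
        (if p.1 = p.2 then (1:ℂ) else 2)
          * (((starRingEnd ℂ) (ψ j p.1) * ψ k p.1) * ((starRingEnd ℂ) (ψ j p.2) * ψ k p.2)))]
    apply Finset.sum_congr rfl
    intro p _
    simp only [hB, hC, map_mul]
    ring
  rw [key]
  calc (B * C).rank ≤ B.rank := Matrix.rank_mul_le_left B C
    _ ≤ Fintype.card ι := Matrix.rank_le_card_width B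
    _ = d * (d + 1) / 2 := by
        rw [show Fintype.card ι = Fintype.card (Sym2 (Fin d)) from
          (Fintype.card_congr (Sym2.sortEquiv (α := Fin d))).symm,
          Sym2.card, Fintype.card_fin, Nat.choose_two_right]
        simp [Nat.mul_comm]
end

section
/- Let H be a 9 × 9 complex matrix that is Hermitian, satisfies H * H = 1 (so H is unitary), has all entries of absolute value 1/3, and has positive real diagonal entries. Then G = (3/2) • (1 − H) is Hermitian positive semidefinite of rank 3, satisfies G * G = 3 • G, has all diagonal entries equal to 1, and all its off-diagonal entries have absolute value 1/2. Consequently G is the Gram matrix of a SIC in dimension 3. -/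
open scoped ComplexOrder

open Matrix

set_option maxHeartbeats 1000000 in
/-- If `H` is a `9 × 9` complex Hermitian Hadamard matrix (Hermitian,
`H * H = 1`, all entries of absolute value `1/3`) with positive real diagonal entries, then
`G = (3/2) • (1 - H)` is Hermitian positive semidefinite of rank `3`, satisfies
`G * G = 3 • G`, has unit diagonal and all off-diagonal entries of absolute value `1/2`;
consequently `G` is the Gram matrix of a SIC in dimension `3`. -/
theorem stmt_8 (H : Matrix (Fin 9) (Fin 9) ℂ)
    (hherm : H.IsHermitian)
    (hunitary : H * H = 1)
    (habs : ∀ j k, ‖H j k‖ = 1 / 3)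
    (hdiag : ∀ j, (H j j).im = 0 ∧ 0 < (H j j).re)
    (G : Matrix (Fin 9) (Fin 9) ℂ)
    (hG : G = ((3 : ℂ) / 2) • ((1 : Matrix (Fin 9) (Fin 9) ℂ) - H)) :
    G.IsHermitian ∧ G.PosSemidef ∧ G.rank = 3 ∧
    G * G = (3 : ℂ) • G ∧
    (∀ j, G j j = 1) ∧
    (∀ j k, j ≠ k → ‖G j k‖ = 1 / 2) ∧
    -- consequently, `G` is the Gram matrix of a SIC in dimension `3`:
    ∃ ψ : Fin 9 → EuclideanSpace ℂ (Fin 3),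
      (∀ j, ‖ψ j‖ = 1) ∧
      (∀ j k, j ≠ k → ‖(inner ℂ (ψ j) (ψ k) : ℂ)‖ ^ 2 = 1 / 4) ∧
      (∀ j k, G j k = (inner ℂ (ψ j) (ψ k) : ℂ)) := by
  classical
  -- diagonal entries of `H` are `1/3`
  have hH3 : ∀ j, H j j = 1/3 := by
    intro j
    obtain ⟨him, hre⟩ := hdiag j
    have h1 := habs j j
    have he : H j j = ((H j j).re : ℂ) := Complex.ext rfl (by simp [him])
    rw [he, Complex.norm_real, Real.norm_eq_abs, abs_of_pos hre] at h1
    rw [he, h1]; norm_num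
  -- `G` is Hermitian
  have hGh : G.IsHermitian := by
    simp only [hG, Matrix.IsHermitian, Matrix.conjTranspose_smul, Matrix.conjTranspose_sub,
      Matrix.conjTranspose_one, hherm.eq]
    norm_num
  -- `G * G = 3 • G`
  have h2 : ((1 : Matrix (Fin 9) (Fin 9) ℂ) - H) * (1 - H) = (2:ℂ) • (1 - H) := by
    rw [sub_mul, one_mul, mul_sub, mul_one, hunitary, two_smul]
    abel
  have hGG : G * G = (3:ℂ) • G := by
    rw [hG, Matrix.smul_mul, Matrix.mul_smul, h2, smul_smul, smul_smul, smul_smul]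
    norm_num
  -- unit diagonal
  have hdG : ∀ j, G j j = 1 := by
    intro j
    simp [hG, Matrix.smul_apply, Matrix.sub_apply, Matrix.one_apply_eq, hH3 j]
    norm_num
  -- off-diagonal entries have absolute value `1/2`
  have hoff : ∀ j k, j ≠ k → ‖G j k‖ = 1/2 := by
    intro j k hjk
    simp [hG, Matrix.smul_apply, Matrix.sub_apply, Matrix.one_apply_ne hjk, habs j k,
      _root_.map_mul, map_div₀]
    norm_num
  -- positive semidefiniteness
  have key : G = (3 : ℂ)⁻¹ • (Gᴴ * G) := by
    rw [hGh.eq, hGG, smul_smul]; norm_num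
  have hPSD : G.PosSemidef := by
    rw [key]
    exact (Matrix.posSemidef_conjTranspose_mul_self G).smul (by norm_num [Complex.le_def])
  -- eigenvalues of `G` are `0` or `3`
  have hev : ∀ i, hGh.eigenvalues i = 0 ∨ hGh.eigenvalues i = 3 := by
    intro i
    have hv := hGh.mulVec_eigenvectorBasis i
    have hvne : (⇑(hGh.eigenvectorBasis i) : Fin 9 → ℂ) ≠ 0 := by
      have h0 := hGh.eigenvectorBasis.orthonormal.ne_zero i
      intro h; apply h0; ext k; exact congrFun h k
    have h2' : (G * G) *ᵥ ⇑(hGh.eigenvectorBasis i)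
        = (hGh.eigenvalues i ^ 2) • ⇑(hGh.eigenvectorBasis i) := by
      rw [← Matrix.mulVec_mulVec, hv, Matrix.mulVec_smul, hv, smul_smul, sq]
    rw [hGG, Matrix.smul_mulVec, hv] at h2'
    obtain ⟨k, hk⟩ := Function.ne_iff.mp hvne
    have h3 := congrFun h2' k
    simp only [Pi.smul_apply, smul_eq_mul, Complex.real_smul, Complex.ofReal_pow] at h3
    have h4 : ((hGh.eigenvalues i : ℂ))^2 = 3 * (hGh.eigenvalues i : ℂ) :=
      mul_right_cancel₀ hk (by linear_combination -h3)
    have h5 : (hGh.eigenvalues i)^2 = 3 * hGh.eigenvalues i := by exact_mod_cast h4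
    rcases mul_eq_zero.mp
        (by nlinarith : hGh.eigenvalues i * (hGh.eigenvalues i - 3) = 0) with h | h
    · exact Or.inl h
    · exact Or.inr (by linarith)
  -- sum of eigenvalues is the trace, which is `9`
  have htr : (∑ i, hGh.eigenvalues i) = (9:ℝ) := by
    have h := congrArg Matrix.trace hGh.spectral_theorem
    rw [Unitary.conjStarAlgAut_apply, Matrix.trace_mul_comm, ← mul_assoc,
      (Matrix.mem_unitaryGroup_iff').mp (hGh.eigenvectorUnitary).2, one_mul,
      Matrix.trace_diagonal] at h
    have h2' : Matrix.trace G = (9:ℂ) := by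
      simp [Matrix.trace, Matrix.diag, hdG]
    rw [h2'] at h
    have h' : (∑ i, ((hGh.eigenvalues i : ℝ) : ℂ)) = (9:ℂ) := by
      simpa [Function.comp] using h.symm
    exact_mod_cast h'
  -- exactly three nonzero eigenvalues
  have hcard' : (Finset.univ.filter fun i => hGh.eigenvalues i ≠ 0).card = 3 := by
    have h9 : (3:ℝ) * (Finset.univ.filter fun i => hGh.eigenvalues i ≠ 0).card = 9 := by
      calc (3:ℝ) * (Finset.univ.filter fun i => hGh.eigenvalues i ≠ 0).card
          = ∑ _i ∈ (Finset.univ.filter fun i => hGh.eigenvalues i ≠ 0), (3:ℝ) := by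
            rw [Finset.sum_const, nsmul_eq_mul, mul_comm]
        _ = ∑ i ∈ (Finset.univ.filter fun i => hGh.eigenvalues i ≠ 0), hGh.eigenvalues i := by
            refine Finset.sum_congr rfl fun i hi => ?_
            rcases hev i with h | h
            · exact absurd h (Finset.mem_filter.mp hi).2
            · rw [h]
        _ = ∑ i, hGh.eigenvalues i := Finset.sum_filter_ne_zero _
        _ = 9 := htr
    have : ((Finset.univ.filter fun i => hGh.eigenvalues i ≠ 0).card : ℝ) = 3 := by linarith
    exact_mod_cast this
  have hcard : Fintype.card {i // hGh.eigenvalues i ≠ 0} = 3 := by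
    rw [Fintype.card_subtype, hcard']
  have hrank : G.rank = 3 := by
    rw [hGh.rank_eq_card_non_zero_eigs, hcard]
  refine ⟨hGh, hPSD, hrank, hGG, hdG, hoff, ?_⟩
  -- construction of the SIC vectors from the spectral decomposition
  set V : Matrix (Fin 9) (Fin 9) ℂ := (hGh.eigenvectorUnitary : Matrix (Fin 9) (Fin 9) ℂ) with hV
  set d : Fin 9 → ℝ := hGh.eigenvalues with hd
  have hentry : ∀ j k, G j k = ∑ i, V j i * (d i : ℂ) * (starRingEnd ℂ) (V k i) := by
    intro j k
    conv_lhs => rw [hGh.spectral_theorem, Unitary.conjStarAlgAut_apply]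
    rw [Matrix.star_eq_conjTranspose, Matrix.mul_apply]
    refine Finset.sum_congr rfl fun i _ => ?_
    rw [Matrix.mul_diagonal, Matrix.conjTranspose_apply]
    rfl
  have e : Fin 3 ≃ {i // d i ≠ 0} := (Fintype.equivFinOfCardEq hcard).symm
  set t : Fin 3 → Fin 9 := fun a => (e a : Fin 9) with ht
  have hd3 : ∀ a, (d (t a) : ℂ) = 3 := by
    intro a
    rcases hev (t a) with h | h
    · exact absurd h (e a).2
    · rw [hd] at *; rw [h]; norm_num
  set ψ : Fin 9 → EuclideanSpace ℂ (Fin 3) :=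
    fun j => WithLp.toLp 2 (fun a => ((Real.sqrt 3 : ℝ) : ℂ) * (starRingEnd ℂ) (V j (t a))) with hψ
  have hpres : ∀ j k, (inner ℂ (ψ j) (ψ k) : ℂ) = G j k := by
    intro j k
    rw [PiLp.inner_apply]
    simp only [RCLike.inner_apply', hψ, PiLp.toLp_apply]
    have hterm : ∀ a : Fin 3,
        (starRingEnd ℂ) (((Real.sqrt 3 : ℝ) : ℂ) * (starRingEnd ℂ) (V j (t a))) *
          (((Real.sqrt 3 : ℝ) : ℂ) * (starRingEnd ℂ) (V k (t a)))
        = V j (t a) * (d (t a) : ℂ) * (starRingEnd ℂ) (V k (t a)) := by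
      intro a
      rw [_root_.map_mul, Complex.conj_conj, Complex.conj_ofReal, hd3 a]
      have h33 : ((Real.sqrt 3 : ℝ) : ℂ) * ((Real.sqrt 3 : ℝ) : ℂ) = 3 := by
        norm_cast
        exact Real.mul_self_sqrt (by norm_num)
      ring_nf
      linear_combination (V j (t a) * (starRingEnd ℂ) (V k (t a))) * h33
    rw [Finset.sum_congr rfl fun a _ => hterm a, hentry j k]
    set F : Fin 9 → ℂ := fun i => V j i * (d i : ℂ) * (starRingEnd ℂ) (V k i) with hF
    have h1 : ∑ a : Fin 3, F (t a) = ∑ s : {i // d i ≠ 0}, F s := e.sum_comp (fun s => F s.1)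
    have h2' : ∑ s : {i // d i ≠ 0}, F (s : Fin 9)
        = ∑ i ∈ Finset.univ.filter (fun i => d i ≠ 0), F i := by
      rw [← Finset.sum_subtype (Finset.univ.filter (fun i => d i ≠ 0)) (by simp) F]
    have h3 : ∑ i ∈ Finset.univ.filter (fun i => d i ≠ 0), F i = ∑ i, F i := by
      refine Finset.sum_filter_of_ne fun i _ hFi => ?_
      intro h0
      apply hFi
      rw [hF]; simp [h0]
    rw [h1, h2', h3]
  refine ⟨ψ, ?_, ?_, fun j k => (hpres j k).symm⟩
  · intro j
    have key' := inner_self_eq_norm_sq_to_K (𝕜 := ℂ) (ψ j)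
    rw [hpres j j, hdG j] at key'
    have h3 : ‖ψ j‖^2 = 1 := by
      have key2 : ((‖ψ j‖ ^ 2 : ℝ) : ℂ) = ((1 : ℝ) : ℂ) := by push_cast; exact key'.symm
      exact Complex.ofReal_injective key2
    nlinarith [norm_nonneg (ψ j)]
  · intro j k hjk
    rw [hpres j k, hoff j k hjk]
    norm_num
end

section
/- Let H be a 9 × 9 complex matrix that is Hermitian, satisfies H * H = 1 (so H is unitary), has all entries of absolute value 1/3, and has positive real diagonal entries. Then the matrix 3 • (H ∘ H), where H ∘ H is the entrywise (Hadamard) product of H with itself, is also Hermitian, satisfies (3 • (H ∘ H)) * (3 • (H ∘ H)) = 1, has all entries of absolute value 1/3, and has positive real diagonal entries. -/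
open Matrix Complex

lemma trace_self_conj_zero {m n : Type*} [Fintype m] [Fintype n]
    (Δ : Matrix m n ℂ) (h : (Δ * Δᴴ).trace = 0) : Δ = 0 := by
  have h1 : (Δ * Δᴴ).trace = ((∑ i, ∑ j, normSq (Δ i j) : ℝ) : ℂ) := by
    simp only [trace, diag, mul_apply, conjTranspose_apply]
    push_cast
    congr 1; ext i; congr 1; ext j
    rw [← Complex.mul_conj]; rfl
  rw [h1] at h
  norm_cast at h
  have h2 : ∀ i ∈ Finset.univ, ∀ j ∈ Finset.univ, normSq (Δ i j) = 0 := by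
    have := (Finset.sum_eq_zero_iff_of_nonneg (fun i _ => Finset.sum_nonneg
      (fun j _ => normSq_nonneg (Δ i j)))).mp h
    intro i hi
    exact fun j hj => (Finset.sum_eq_zero_iff_of_nonneg
      (fun j _ => normSq_nonneg (Δ i j))).mp (this i hi) j hj
  ext i j
  simpa using normSq_eq_zero.mp (h2 i (Finset.mem_univ i) j (Finset.mem_univ j))

lemma key (Q : Matrix (Fin 9) (Fin 9) ℂ) (hQH : Qᴴ = Q) (hQ2 : Q * Q = Q)
    (hd : ∀ j, Q j j = 1/3) (hab : ∀ j k, j ≠ k → ‖Q j k‖ = 1/6) :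
    Q.hadamard Q * Q.hadamard Q = (6:ℂ)⁻¹ • Q.hadamard Q := by
  have hconj : ∀ j k, (starRingEnd ℂ) (Q j k) = Q k j := by
    intro j k
    have := congrFun (congrFun hQH k) j
    simpa [conjTranspose_apply] using this
  have hQ2' : ∀ j k, ∑ m, Q j m * Q m k = Q j k := by
    intro j k; have := congrFun (congrFun hQ2 j) k
    simpa [mul_apply] using this
  -- definitions
  set Y : Matrix (Fin 9) (Fin 9 × Fin 9) ℂ := Matrix.of (fun j p => Q j p.1 * Q j p.2) with hY
  set K : Matrix (Fin 9 × Fin 9) (Fin 9 × Fin 9) ℂ :=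
    Matrix.of (fun p q => Q p.1 q.1 * Q p.2 q.2) with hK
  set P : Matrix (Fin 9 × Fin 9) (Fin 9 × Fin 9) ℂ :=
    Matrix.of (fun p q => if p = (q.2, q.1) then 1 else 0) with hP
  have hYYH : Y * Yᴴ = Q.hadamard Q := by
    ext j k
    rw [mul_apply, Fintype.sum_prod_type]
    simp only [hY, conjTranspose_apply, of_apply, hadamard_apply]
    calc (∑ a, ∑ b, Q j a * Q j b * star (Q k a * Q k b))
        = (∑ a, Q j a * Q a k) * (∑ b, Q j b * Q b k) := by
          rw [Finset.sum_mul_sum]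
          congr 1; ext a; congr 1; ext b
          simp only [star_mul', RingHom.coe_comp]
          have ha := hconj k a; have hb := hconj k b
          simp only [RCLike.star_def] at *
          rw [ha, hb]; ring
      _ = Q j k * Q j k := by rw [hQ2' j k]
  have hYK : Y * K = Y := by
    ext j q
    rw [mul_apply, Fintype.sum_prod_type]
    simp only [hY, hK, of_apply]
    calc (∑ a, ∑ b, Q j a * Q j b * (Q a q.1 * Q b q.2))
        = (∑ a, Q j a * Q a q.1) * (∑ b, Q j b * Q b q.2) := by
          rw [Finset.sum_mul_sum]
          congr 1; ext a; congr 1; ext b; ring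
      _ = Q j q.1 * Q j q.2 := by rw [hQ2', hQ2']
  have hYP : Y * P = Y := by
    ext j q
    rw [mul_apply]
    simp only [hY, hP, of_apply, mul_ite, mul_one, mul_zero]
    rw [Finset.sum_ite_eq' Finset.univ ((q.2, q.1) : Fin 9 × Fin 9)
      (fun p => Q j p.1 * Q j p.2)]
    simp [mul_comm]
  have hKP : K * P = P * K := by
    ext p q
    rw [mul_apply, mul_apply]
    simp only [hK, hP, of_apply, mul_ite, mul_one, mul_zero, ite_mul, zero_mul, one_mul]
    rw [Finset.sum_ite_eq' Finset.univ ((q.2, q.1) : Fin 9 × Fin 9)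
      (fun r => Q p.1 r.1 * Q p.2 r.2)]
    have hc : ∀ r : Fin 9 × Fin 9, (if p = (r.2, r.1) then Q r.1 q.1 * Q r.2 q.2 else 0)
        = if r = (p.2, p.1) then Q r.1 q.1 * Q r.2 q.2 else 0 := by
      intro r
      congr 1
      simp [Prod.ext_iff, and_comm, eq_comm]
    rw [Finset.sum_congr rfl (fun r _ => hc r),
      Finset.sum_ite_eq' Finset.univ ((p.2, p.1) : Fin 9 × Fin 9)
      (fun r => Q r.1 q.1 * Q r.2 q.2)]
    simp [mul_comm]
  have hKK : K * K = K := by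
    ext p q
    rw [mul_apply, Fintype.sum_prod_type]
    simp only [hK, of_apply]
    calc (∑ a, ∑ b, Q p.1 a * Q p.2 b * (Q a q.1 * Q b q.2))
        = (∑ a, Q p.1 a * Q a q.1) * (∑ b, Q p.2 b * Q b q.2) := by
          rw [Finset.sum_mul_sum]
          congr 1; ext a; congr 1; ext b; ring
      _ = Q p.1 q.1 * Q p.2 q.2 := by rw [hQ2', hQ2']
  have hPP : P * P = 1 := by
    ext p q
    rw [mul_apply]
    simp only [hP, of_apply, ite_mul, one_mul, zero_mul]
    rw [Finset.sum_congr rfl (fun r _ => by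
      show (if p = (r.2, r.1) then (if r = (q.2, q.1) then (1:ℂ) else 0) else 0)
          = if r = (p.2, p.1) then (if r = (q.2, q.1) then (1:ℂ) else 0) else 0
      congr 1
      simp [Prod.ext_iff, and_comm, eq_comm]),
      Finset.sum_ite_eq' Finset.univ ((p.2, p.1) : Fin 9 × Fin 9)]
    simp [one_apply, Prod.ext_iff, and_comm]
  have htrQ : Q.trace = 3 := by
    simp [trace, Matrix.diag, hd]
    norm_num
  have htrQ' : (∑ j, Q j j) = 3 := htrQ
  have htrK : K.trace = 9 := by
    simp only [trace, Matrix.diag, hK, of_apply, Fintype.sum_prod_type]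
    rw [← Finset.sum_mul_sum, htrQ']
    norm_num
  have htrPK : (P * K).trace = 3 := by
    have hPK : ∀ p q : Fin 9 × Fin 9, (P * K) p q = Q p.2 q.1 * Q p.1 q.2 := by
      intro p q
      rw [mul_apply]
      simp only [hP, hK, of_apply, ite_mul, one_mul, zero_mul]
      rw [Finset.sum_congr rfl (fun r _ => by
        show (if p = (r.2, r.1) then Q r.1 q.1 * Q r.2 q.2 else 0)
            = if r = (p.2, p.1) then Q r.1 q.1 * Q r.2 q.2 else 0
        congr 1
        simp [Prod.ext_iff, and_comm, eq_comm]),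
        Finset.sum_ite_eq' Finset.univ ((p.2, p.1) : Fin 9 × Fin 9)]
      simp
    simp only [trace, Matrix.diag]
    rw [Finset.sum_congr rfl (fun p _ => hPK p p), Fintype.sum_prod_type]
    have : ∀ a : Fin 9, ∑ b : Fin 9, Q b a * Q a b = (Q * Q) a a := by
      intro a
      rw [mul_apply]
      exact Finset.sum_congr rfl (fun b _ => mul_comm _ _)
    rw [Finset.sum_congr rfl (fun a _ => this a)]
    rw [hQ2]
    exact htrQ
  set Pr : Matrix (Fin 9 × Fin 9) (Fin 9 × Fin 9) ℂ := (2:ℂ)⁻¹ • (K + P * K) with hPrdef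
  have hYPr : Y * Pr = Y := by
    rw [hPrdef, Matrix.mul_smul, Matrix.mul_add, ← Matrix.mul_assoc, hYP, hYK]
    rw [smul_add, ← add_smul]
    norm_num
  have hKH : Kᴴ = K := by
    ext p q
    simp only [conjTranspose_apply, hK, of_apply, star_mul', RCLike.star_def]
    rw [hconj, hconj]
  have hPH : Pᴴ = P := by
    ext p q
    simp only [conjTranspose_apply, hP, of_apply]
    by_cases h : q = (p.2, p.1)
    · have h2 : p = (q.2, q.1) := by subst h; simp
      rw [if_pos h, if_pos h2]; simp
    · have h2 : ¬ p = (q.2, q.1) := fun hh => h (by subst hh; simp)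
      rw [if_neg h, if_neg h2]; simp
  have hPrH : Prᴴ = Pr := by
    rw [hPrdef, conjTranspose_smul, conjTranspose_add, conjTranspose_mul, hKH, hPH, hKP]
    norm_num
  have hPrPr : Pr * Pr = Pr := by
    rw [hPrdef]
    rw [Matrix.smul_mul, Matrix.mul_smul, smul_smul]
    rw [Matrix.add_mul, Matrix.mul_add, Matrix.mul_add]
    have e1 : K * (P * K) = P * K := by
      rw [← Matrix.mul_assoc, hKP, Matrix.mul_assoc, hKK]
    have e2 : (P * K) * K = P * K := by rw [Matrix.mul_assoc, hKK]
    have e3 : (P * K) * (P * K) = K := by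
      rw [Matrix.mul_assoc, ← Matrix.mul_assoc K P K, hKP, ← Matrix.mul_assoc,
        ← Matrix.mul_assoc, hPP, Matrix.one_mul, hKK]
    rw [hKK, e1, e2, e3]
    rw [show (K + P * K + (P * K + K)) = (2:ℂ) • (K + P * K) by
      rw [two_smul]; abel]
    rw [smul_smul]
    norm_num
  have htrPr : Pr.trace = 6 := by
    rw [hPrdef, trace_smul, trace_add, htrK, htrPK]
    norm_num
  set G : Matrix (Fin 9 × Fin 9) (Fin 9 × Fin 9) ℂ := Yᴴ * Y with hGdef
  have hGH : Gᴴ = G := by rw [hGdef, conjTranspose_mul, conjTranspose_conjTranspose]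
  have htrG : G.trace = 1 := by
    rw [hGdef, trace_mul_comm, hYYH]
    simp only [trace, Matrix.diag, hadamard_apply, hd]
    norm_num
  have htrSS : ((Q.hadamard Q) * (Q.hadamard Q)).trace = 6⁻¹ := by
    simp only [trace, Matrix.diag, mul_apply, hadamard_apply]
    have hterm : ∀ j k : Fin 9, Q j k * Q j k * (Q k j * Q k j)
        = if j = k then (1/81 : ℂ) else (1/1296 : ℂ) := by
      intro j k
      by_cases h : j = k
      · subst h; rw [hd]; norm_num
      · have h1 : Q j k * Q k j = ((normSq (Q j k) : ℝ) : ℂ) := by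
          rw [← hconj j k, Complex.mul_conj]
        have h2 : normSq (Q j k) = 1/36 := by
          rw [← Complex.sq_norm, hab j k h]; norm_num
        rw [if_neg h, show Q j k * Q j k * (Q k j * Q k j)
          = (Q j k * Q k j) * (Q j k * Q k j) by ring, h1, h2]
        norm_num
    rw [Finset.sum_congr rfl (fun j _ => Finset.sum_congr rfl (fun k _ => hterm j k))]
    have hrow : ∀ j : Fin 9, (∑ k : Fin 9, if j = k then (1/81 : ℂ) else (1/1296 : ℂ))
        = 1/54 := by
      intro j
      rw [Finset.sum_congr rfl (fun k _ => show (if j = k then (1/81 : ℂ) else (1/1296 : ℂ))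
        = 1/1296 + (if j = k then (1/81 - 1/1296 : ℂ) else 0) by
          by_cases h : j = k <;> simp [h])]
      rw [Finset.sum_add_distrib, Finset.sum_const, Finset.sum_ite_eq]
      simp
      norm_num
    rw [Finset.sum_congr rfl (fun j _ => hrow j)]
    simp
    norm_num
  have htrGG : (G * G).trace = 6⁻¹ := by
    rw [hGdef, Matrix.mul_assoc, ← Matrix.mul_assoc Y Yᴴ Y, trace_mul_comm,
      Matrix.mul_assoc, Matrix.mul_assoc, ← Matrix.mul_assoc, hYYH]
    exact htrSS
  have hGPr : G * Pr = G := by rw [hGdef, Matrix.mul_assoc, hYPr]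
  have hPrYH : Pr * Yᴴ = Yᴴ := by
    calc Pr * Yᴴ = Prᴴ * Yᴴ := by rw [hPrH]
      _ = (Y * Pr)ᴴ := by rw [← conjTranspose_mul]
      _ = Yᴴ := by rw [hYPr]
  have hPrG : Pr * G = G := by rw [hGdef, ← Matrix.mul_assoc, hPrYH]
  clear_value Pr G
  set Δ : Matrix (Fin 9 × Fin 9) (Fin 9 × Fin 9) ℂ := G - (6:ℂ)⁻¹ • Pr with hΔ
  clear_value Δ
  have hΔH : Δᴴ = Δ := by
    rw [hΔ, conjTranspose_sub, conjTranspose_smul, hGH, hPrH]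
    congr 1
    norm_num
  have htr0 : (Δ * Δᴴ).trace = 0 := by
    rw [hΔH, hΔ, sub_mul, mul_sub, mul_sub, Matrix.smul_mul, Matrix.mul_smul,
      Matrix.mul_smul, Matrix.smul_mul, smul_smul, hGPr, hPrG, hPrPr]
    simp only [trace_sub, trace_smul, htrGG, htrG, htrPr, smul_eq_mul]
    norm_num
  have hG : G = (6:ℂ)⁻¹ • Pr := by
    have h0 := trace_self_conj_zero Δ htr0
    rw [hΔ, sub_eq_zero] at h0
    exact h0
  calc Q.hadamard Q * Q.hadamard Q
      = (Y * Yᴴ) * (Y * Yᴴ) := by rw [hYYH]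
    _ = Y * (G * Yᴴ) := by
        rw [Matrix.mul_assoc, ← Matrix.mul_assoc Yᴴ Y Yᴴ, hGdef]
    _ = Y * (((6:ℂ)⁻¹ • Pr) * Yᴴ) := by rw [hG]
    _ = (6:ℂ)⁻¹ • (Y * (Pr * Yᴴ)) := by
        rw [Matrix.smul_mul, Matrix.mul_smul]
    _ = (6:ℂ)⁻¹ • Q.hadamard Q := by rw [hPrYH, hYYH]

/-- If `H` is a `9 × 9` complex Hermitian Hadamard matrix (Hermitian,
`H * H = 1`, all entries of absolute value `1/3`) with positive real diagonal entries, then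
`3 • (H ∘ H)` (where `H ∘ H` is the entrywise Hadamard square) is also Hermitian, squares to
the identity, has all entries of absolute value `1/3`, and has positive real diagonal
entries. -/
theorem stmt_9 (H : Matrix (Fin 9) (Fin 9) ℂ)
    (hherm : H.IsHermitian)
    (hunitary : H * H = 1)
    (habs : ∀ j k, ‖H j k‖ = 1 / 3)
    (hdiag : ∀ j, (H j j).im = 0 ∧ 0 < (H j j).re) :
    ((3 : ℂ) • Matrix.hadamard H H).IsHermitian ∧
    ((3 : ℂ) • Matrix.hadamard H H) * ((3 : ℂ) • Matrix.hadamard H H) = 1 ∧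
    (∀ j k, ‖((3 : ℂ) • Matrix.hadamard H H) j k‖ = 1 / 3) ∧
    (∀ j, ((((3 : ℂ) • Matrix.hadamard H H)) j j).im = 0 ∧
      0 < ((((3 : ℂ) • Matrix.hadamard H H)) j j).re) := by
  have hconjH : ∀ j k, (starRingEnd ℂ) (H j k) = H k j := by
    intro j k
    have := congrFun (congrFun hherm k) j
    simpa [conjTranspose_apply] using this
  have hd13 : ∀ j, H j j = 1/3 := by
    intro j
    obtain ⟨him, hre⟩ := hdiag j
    have h1 : H j j = (((H j j).re : ℝ) : ℂ) := Complex.ext rfl (by simp [him])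
    have h2 : |(H j j).re| = 1/3 := by
      have h3 := habs j j
      rw [h1, Complex.norm_real, Real.norm_eq_abs] at h3
      exact h3
    rw [abs_of_pos hre] at h2
    rw [h1, h2]
    norm_num
  set Q : Matrix (Fin 9) (Fin 9) ℂ := (2:ℂ)⁻¹ • (1 - H) with hQdef
  have hQH : Qᴴ = Q := by
    rw [hQdef, conjTranspose_smul, conjTranspose_sub, conjTranspose_one, hherm.eq]
    norm_num
  have hsq : (1 - H) * (1 - H) = (2:ℂ) • (1 - H) := by
    rw [sub_mul, Matrix.one_mul, mul_sub, Matrix.mul_one, hunitary, two_smul]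
    abel
  have hQ2 : Q * Q = Q := by
    rw [hQdef, Matrix.smul_mul, Matrix.mul_smul, smul_smul, hsq, smul_smul]
    norm_num
  have hQd : ∀ j, Q j j = 1/3 := by
    intro j
    rw [hQdef]
    simp only [Matrix.smul_apply, Matrix.sub_apply, one_apply_eq, hd13, smul_eq_mul]
    norm_num
  have hQab : ∀ j k, j ≠ k → ‖Q j k‖ = 1/6 := by
    intro j k hjk
    rw [hQdef]
    simp only [Matrix.smul_apply, Matrix.sub_apply, one_apply_ne hjk, smul_eq_mul, zero_sub, mul_neg]
    rw [norm_neg, norm_mul, habs, norm_inv, Complex.norm_two]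
    norm_num
  have hkey := key Q hQH hQ2 hQd hQab
  have hQapp : ∀ j k, Q j k = 2⁻¹ * ((1 : Matrix (Fin 9) (Fin 9) ℂ) j k - H j k) := by
    intro j k
    rw [hQdef]
    simp [Matrix.smul_apply, Matrix.sub_apply]
  have hM : (3 : ℂ) • Matrix.hadamard H H = (12:ℂ) • Q.hadamard Q - 1 := by
    ext j k
    simp only [Matrix.smul_apply, hadamard_apply, Matrix.sub_apply, smul_eq_mul, hQapp]
    by_cases h : j = k
    · subst h
      simp only [hd13, one_apply_eq]
      norm_num
    · simp only [one_apply_ne h]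
      ring
  have hMM : ((3 : ℂ) • Matrix.hadamard H H) * ((3 : ℂ) • Matrix.hadamard H H) = 1 := by
    rw [hM, sub_mul, mul_sub, mul_sub, Matrix.smul_mul, Matrix.mul_smul, smul_smul,
      Matrix.mul_one, Matrix.one_mul, hkey, smul_smul]
    rw [show ((12:ℂ) * 12 * 6⁻¹) = 24 by norm_num]
    rw [show ((24:ℂ) • Q.hadamard Q - (12:ℂ) • Q.hadamard Q) = (12:ℂ) • Q.hadamard Q by
      rw [← sub_smul]; norm_num]
    rw [sub_sub_cancel, Matrix.one_mul]
  refine ⟨?_, hMM, ?_, ?_⟩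
  · show _ = _
    ext j k
    simp only [conjTranspose_apply, Matrix.smul_apply, hadamard_apply, smul_eq_mul, star_mul',
      RCLike.star_def, hconjH]
    rw [show (starRingEnd ℂ) 3 = 3 from map_ofNat _ 3]
  · intro j k
    simp only [Matrix.smul_apply, hadamard_apply, smul_eq_mul]
    rw [norm_mul, norm_mul, habs, show ‖(3:ℂ)‖ = 3 by norm_num]
    norm_num
  · intro j
    have hv : ((3 : ℂ) • Matrix.hadamard H H) j j = (((1:ℝ)/3 : ℝ) : ℂ) := by
      simp only [Matrix.smul_apply, hadamard_apply, smul_eq_mul, hd13]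
      push_cast
      norm_num
    rw [hv]
    simp only [Complex.ofReal_im, Complex.ofReal_re]
    norm_num
end

section
/- Let d be an odd positive integer and let P be the d × d parity matrix over ℂ, with entries P j k = 1 if j = −k in ZMod d and 0 otherwise. Then Π⁺_W = (1/2) • (1 + P) and Π⁻_W = (1/2) • (1 − P) are orthogonal projections of ranks (d+1)/2 and (d−1)/2 respectively, and for each sign, setting Π^±_q = (D q) * Π^±_W * (D q)ᴴ where D q are the Weyl–Heisenberg displacement operators, one has ∑_{q ∈ (ZMod d)²} Π^±_q = (d(d±1)/2) • 1 and Tr(Π^±_q * Π^±_r) = (d ± 2)/4 for all q ≠ r; i.e., the Wigner families {Π^±_q} are symmetric tight fusion frames of rank (d±1)/2. -/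
open Matrix

/-- `τ = -exp(π i / d)`. -/
noncomputable def tau (d : ℕ) : ℂ := -Complex.exp (Real.pi * Complex.I / d)

lemma tau_ne_zero (d : ℕ) : tau d ≠ 0 := by
  simp [tau, Complex.exp_ne_zero]

lemma tau_sq (d : ℕ) : tau d ^ 2 = Complex.exp (2 * Real.pi * Complex.I / d) := by
  rw [tau, neg_pow, ← Complex.exp_nat_mul]
  norm_num
  ring_nf

lemma tau_pow_d {d : ℕ} [NeZero d] (hd : Odd d) : tau d ^ d = 1 := by
  have hdz : (d : ℂ) ≠ 0 := Nat.cast_ne_zero.mpr (NeZero.ne d)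
  rw [tau, Odd.neg_pow hd, ← Complex.exp_nat_mul]
  have : (d : ℂ) * (Real.pi * Complex.I / d) = Real.pi * Complex.I := by
    field_simp
  rw [this, Complex.exp_pi_mul_I]
  norm_num

lemma tau_pow_ne_one {d : ℕ} [NeZero d] (hd : Odd d) {k : ℕ} (hk : 0 < k) (hkd : k < d) :
    tau d ^ k ≠ 1 := by
  intro h
  have hprim : IsPrimitiveRoot (Complex.exp (2 * Real.pi * Complex.I / d)) d :=
    Complex.isPrimitiveRoot_exp d (NeZero.ne d)
  have h2 : (tau d ^ 2) ^ k = 1 := by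
    rw [← pow_mul, mul_comm 2 k, pow_mul, h, one_pow]
  rw [tau_sq] at h2
  have hdvd : d ∣ k := (hprim.pow_eq_one_iff_dvd k).mp h2
  exact absurd (Nat.le_of_dvd hk hdvd) (not_le.mpr hkd)

section chr
variable {d : ℕ} [NeZero d]

lemma tau_pow_mod (hd : Odd d) (a : ℕ) : tau d ^ (a % d) = tau d ^ a := by
  conv_rhs => rw [← Nat.mod_add_div a d, pow_add, pow_mul, tau_pow_d hd, one_pow, mul_one]

lemma chr_add (hd : Odd d) (x y : ZMod d) :
    tau d ^ (x + y).val = tau d ^ x.val * tau d ^ y.val := by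
  rw [ZMod.val_add, tau_pow_mod hd, pow_add]

lemma chr_zero : tau d ^ (0 : ZMod d).val = 1 := by
  simp [ZMod.val_zero]

lemma chr_neg (hd : Odd d) (x : ZMod d) :
    tau d ^ (-x).val = (tau d ^ x.val)⁻¹ := by
  apply eq_inv_of_mul_eq_one_left
  rw [← chr_add hd, neg_add_cancel, chr_zero]

lemma chr_mul (hd : Odd d) (c x : ZMod d) :
    tau d ^ (c * x).val = (tau d ^ c.val) ^ x.val := by
  rw [ZMod.val_mul, tau_pow_mod hd, pow_mul]

lemma conj_chr (hd : Odd d) (x : ZMod d) :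
    (starRingEnd ℂ) (tau d ^ x.val) = tau d ^ (-x).val := by
  have habs : ‖tau d‖ = 1 := by
    rw [tau, norm_neg, Complex.norm_exp]
    have : (Real.pi * Complex.I / d).re = 0 := by
      simp [Complex.div_re]
    rw [this, Real.exp_zero]
  have habs2 : ‖tau d ^ x.val‖ = 1 := by rw [norm_pow, habs, one_pow]
  rw [chr_neg hd, Complex.inv_def, Complex.normSq_eq_norm_sq, habs2]
  norm_num

lemma sum_val_pow (w : ℂ) : ∑ x : ZMod d, w ^ x.val = ∑ i ∈ Finset.range d, w ^ i := by
  rcases d with _ | n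
  · exact absurd rfl (NeZero.ne 0)
  · exact Fin.sum_univ_eq_sum_range (fun i => w ^ i) (n + 1)

lemma chr_sum (hd : Odd d) {c : ZMod d} (hc : c ≠ 0) :
    ∑ x : ZMod d, tau d ^ (c * x).val = 0 := by
  have hcv : 0 < c.val := Nat.pos_of_ne_zero (fun h => hc ((ZMod.val_eq_zero c).mp h))
  have hw1 : tau d ^ c.val ≠ 1 := tau_pow_ne_one hd hcv c.val_lt
  have hwd : (tau d ^ c.val) ^ d = 1 := by
    rw [← pow_mul, mul_comm, pow_mul, tau_pow_d hd, one_pow]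
  calc ∑ x : ZMod d, tau d ^ (c * x).val
      = ∑ x : ZMod d, (tau d ^ c.val) ^ x.val := by
        exact Finset.sum_congr rfl fun x _ => chr_mul hd c x
    _ = ∑ i ∈ Finset.range d, (tau d ^ c.val) ^ i := sum_val_pow _
    _ = ((tau d ^ c.val) ^ d - 1) / (tau d ^ c.val - 1) := geom_sum_eq hw1 d
    _ = 0 := by rw [hwd, sub_self, zero_div]

end chr


/-- The Weyl–Heisenberg displacement operator `D p` for odd `d`, indexed over `ZMod d`:
its `(j,k)` entry is `τ^(p₂(p₁+2j))` if `j = k + p₁` and `0` otherwise (exponents taken in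
`ZMod d`, which is well defined since `τ^d = 1` for odd `d`). -/
noncomputable def Disp (d : ℕ) [NeZero d] (p : ZMod d × ZMod d) :
    Matrix (ZMod d) (ZMod d) ℂ :=
  Matrix.of fun j k => if j = k + p.1 then tau d ^ (p.2 * (p.1 + 2 * j)).val else 0


section mats
variable {d : ℕ} [NeZero d]

lemma two_unit (hd : Odd d) : IsUnit (2 : ZMod d) := by
  have h := (ZMod.isUnit_iff_coprime 2 d).mpr (Nat.coprime_two_left.mpr hd)
  simpa using h

lemma conj_entry (hd : Odd d) (q : ZMod d × ZMod d) (M : Matrix (ZMod d) (ZMod d) ℂ)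
    (j k : ZMod d) :
    (Disp d q * M * (Disp d q)ᴴ) j k
      = tau d ^ ((2 * q.2 * (j - k) : ZMod d)).val * M (j - q.1) (k - q.1) := by
  have h1 : ∀ b, (Disp d q * M) j b
      = tau d ^ ((q.2 * (q.1 + 2 * j) : ZMod d)).val * M (j - q.1) b := by
    intro b
    rw [Matrix.mul_apply, Finset.sum_eq_single (j - q.1)]
    · have hc : j = j - q.1 + q.1 := by ring
      simp [Disp, ← hc]
    · intro a _ ha
      have : j ≠ a + q.1 := fun h => ha (by rw [h]; ring)
      simp [Disp, this]
    · simp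
  rw [Matrix.mul_apply, Finset.sum_eq_single (k - q.1)]
  · rw [h1, Matrix.conjTranspose_apply]
    have hc : k = k - q.1 + q.1 := by ring
    rw [Disp]
    simp only [Matrix.of_apply, ← hc, if_pos rfl, if_true]
    rw [Complex.star_def, conj_chr hd, mul_right_comm, ← chr_add hd]
    have he : (q.2 * (q.1 + 2 * j) + -(q.2 * (q.1 + 2 * k)) : ZMod d)
        = 2 * q.2 * (j - k) := by ring
    rw [he]
  · intro b _ hb
    have : k ≠ b + q.1 := fun h => hb (by rw [h]; ring)
    simp [Disp, this]
  · simp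

lemma disp_unitary (hd : Odd d) (q : ZMod d × ZMod d) :
    Disp d q * (Disp d q)ᴴ = 1 := by
  ext j k
  have h := conj_entry hd q 1 j k
  rw [mul_one] at h
  rw [h, Matrix.one_apply, Matrix.one_apply]
  by_cases hjk : j = k
  · subst hjk
    have h0 : (2 * q.2 * (j - j) : ZMod d) = 0 := by ring
    simp [h0, sub_left_inj]
  · have : ¬ (j - q.1 = k - q.1) := fun h' => hjk (by simpa [sub_left_inj] using h')
    simp [hjk, this]

end mats

section phasepoint
variable {d : ℕ} [NeZero d] {P : Matrix (ZMod d) (ZMod d) ℂ}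

lemma A_entry (hd : Odd d) (hP : ∀ j k : ZMod d, P j k = if j = -k then 1 else 0)
    (q : ZMod d × ZMod d) (j k : ZMod d) :
    (Disp d q * P * (Disp d q)ᴴ) j k
      = if j + k = 2 * q.1 then tau d ^ ((2 * q.2 * (j - k) : ZMod d)).val else 0 := by
  rw [conj_entry hd, hP]
  have hiff : (j - q.1 = -(k - q.1)) ↔ (j + k = 2 * q.1) := by
    constructor <;> intro h <;> linear_combination h
  simp only [hiff]
  split_ifs <;> simp

lemma sum_chr2 (hd : Odd d) (j k : ZMod d) :
    ∑ x : ZMod d, tau d ^ ((2 * x * (j - k) : ZMod d)).val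
      = if j = k then (d : ℂ) else 0 := by
  by_cases hjk : j = k
  · subst hjk
    have h0 : ∀ x : ZMod d, (2 * x * (j - j) : ZMod d) = 0 := fun x => by ring
    simp [h0, ZMod.card]
  · have hc : (2 * (j - k) : ZMod d) ≠ 0 := by
      intro h
      have h2 : (2 : ZMod d) * (j - k) = 2 * 0 := by rw [mul_zero]; exact h
      have := (two_unit hd).mul_left_cancel h2
      exact hjk (by linear_combination this)
    rw [if_neg hjk]
    have := chr_sum hd hc
    rw [← this]
    refine Finset.sum_congr rfl fun x _ => ?_
    congr 1
    ring

lemma sum_A (hd : Odd d) (hP : ∀ j k : ZMod d, P j k = if j = -k then 1 else 0) :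
    ∑ q : ZMod d × ZMod d, Disp d q * P * (Disp d q)ᴴ = (d : ℂ) • 1 := by
  obtain ⟨u, hu⟩ := two_unit hd
  ext j k
  rw [Matrix.sum_apply]
  calc ∑ q : ZMod d × ZMod d, (Disp d q * P * (Disp d q)ᴴ) j k
      = ∑ q : ZMod d × ZMod d,
          if j + k = 2 * q.1 then tau d ^ ((2 * q.2 * (j - k) : ZMod d)).val else 0 :=
        Finset.sum_congr rfl fun q _ => A_entry hd hP q j k
    _ = ∑ q1 : ZMod d, if j + k = 2 * q1 then
          (∑ q2 : ZMod d, tau d ^ ((2 * q2 * (j - k) : ZMod d)).val) else 0 := by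
        rw [Fintype.sum_prod_type]
        exact Finset.sum_congr rfl fun q1 _ => by split_ifs <;> simp
    _ = ∑ q1 : ZMod d, if j + k = 2 * q1 then (if j = k then (d : ℂ) else 0) else 0 := by
        simp_rw [sum_chr2 hd]
    _ = if j = k then (d : ℂ) else 0 := by
        have hiff : ∀ q1 : ZMod d, (j + k = 2 * q1) ↔ (q1 = (↑u⁻¹ : ZMod d) * (j + k)) := by
          intro q1
          constructor
          · intro h
            rw [h, ← mul_assoc]
            have : (↑u⁻¹ : ZMod d) * 2 = 1 := by
              rw [← hu, Units.inv_mul]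
            rw [this, one_mul]
          · intro h
            rw [h, ← mul_assoc]
            have : (2 : ZMod d) * (↑u⁻¹ : ZMod d) = 1 := by
              rw [← hu, Units.mul_inv]
            rw [this, one_mul]
        simp_rw [hiff]
        rw [Finset.sum_ite_eq' Finset.univ]
        simp
  rw [Matrix.smul_apply, Matrix.one_apply]
  split_ifs <;> simp

lemma trace_A (hd : Odd d) (hP : ∀ j k : ZMod d, P j k = if j = -k then 1 else 0)
    (q : ZMod d × ZMod d) :
    (Disp d q * P * (Disp d q)ᴴ).trace = 1 := by
  rw [Matrix.trace]
  have h : ∀ j : ZMod d, (Disp d q * P * (Disp d q)ᴴ).diag j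
      = if j = q.1 then (1 : ℂ) else 0 := by
    intro j
    rw [Matrix.diag_apply, A_entry hd hP]
    have hiff : (j + j = 2 * q.1) ↔ (j = q.1) := by
      constructor
      · intro h
        have h2 : (2 : ZMod d) * j = 2 * q.1 := by linear_combination h
        exact (two_unit hd).mul_left_cancel h2
      · intro h; rw [h]; ring
    simp only [hiff]
    split_ifs with h
    · have h0 : (2 * q.2 * (j - j) : ZMod d) = 0 := by ring
      simp [h0]
    · rfl
  simp_rw [h]
  simp

lemma trace_AA (hd : Odd d) (hP : ∀ j k : ZMod d, P j k = if j = -k then 1 else 0)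
    {q r : ZMod d × ZMod d} (hqr : q ≠ r) :
    ((Disp d q * P * (Disp d q)ᴴ) * (Disp d r * P * (Disp d r)ᴴ)).trace = 0 := by
  rw [Matrix.trace]
  have hdiag : ∀ j, ((Disp d q * P * (Disp d q)ᴴ) * (Disp d r * P * (Disp d r)ᴴ)).diag j
      = ∑ k : ZMod d,
          (if j + k = 2 * q.1 then tau d ^ ((2 * q.2 * (j - k) : ZMod d)).val else 0)
          * (if k + j = 2 * r.1 then tau d ^ ((2 * r.2 * (k - j) : ZMod d)).val else 0) := by
    intro j
    rw [Matrix.diag_apply, Matrix.mul_apply]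
    exact Finset.sum_congr rfl fun k _ => by rw [A_entry hd hP q, A_entry hd hP r]
  simp_rw [hdiag]
  by_cases hq1 : q.1 = r.1
  · have hq2 : q.2 ≠ r.2 := fun h2 => hqr (Prod.ext_iff.mpr ⟨hq1, h2⟩)
    have hcne : (4 * (q.2 - r.2) : ZMod d) ≠ 0 := by
      intro h
      apply hq2
      have h1 : (2 : ZMod d) * (2 * (q.2 - r.2)) = 2 * 0 := by
        rw [mul_zero]; linear_combination h
      have h2 := (two_unit hd).mul_left_cancel h1
      have h3 : (2 : ZMod d) * (q.2 - r.2) = 2 * 0 := by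
        rw [mul_zero]; linear_combination h2
      have h4 := (two_unit hd).mul_left_cancel h3
      linear_combination h4
    have hinner : ∀ j : ZMod d,
        (∑ k : ZMod d,
          (if j + k = 2 * q.1 then tau d ^ ((2 * q.2 * (j - k) : ZMod d)).val else 0)
          * (if k + j = 2 * r.1 then tau d ^ ((2 * r.2 * (k - j) : ZMod d)).val else 0))
        = tau d ^ ((4 * (q.2 - r.2) * j : ZMod d)).val
            * tau d ^ ((-(4 * (q.2 - r.2) * q.1) : ZMod d)).val := by
      intro j
      rw [Finset.sum_eq_single (2 * q.1 - j)]
      · have h1 : j + (2 * q.1 - j) = 2 * q.1 := by ring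
        have h2 : (2 * q.1 - j) + j = 2 * r.1 := by rw [← hq1]; ring
        rw [if_pos h1, if_pos h2, ← chr_add hd, ← chr_add hd]
        congr 2
        ring
      · intro k _ hk
        have hnc : ¬(j + k = 2 * q.1) := fun h => hk (by linear_combination h)
        rw [if_neg hnc, zero_mul]
      · simp
    calc ∑ j : ZMod d, _ = (∑ j : ZMod d, tau d ^ ((4 * (q.2 - r.2) * j : ZMod d)).val)
            * tau d ^ ((-(4 * (q.2 - r.2) * q.1) : ZMod d)).val := by
          rw [Finset.sum_mul]
          exact Finset.sum_congr rfl fun j _ => hinner j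
      _ = 0 := by
          have hs := chr_sum hd hcne
          have : ∑ j : ZMod d, tau d ^ ((4 * (q.2 - r.2) * j : ZMod d)).val = 0 := hs
          rw [this, zero_mul]
  · apply Finset.sum_eq_zero
    intro j _
    apply Finset.sum_eq_zero
    intro k _
    split_ifs with h1 h2
    · exfalso
      apply hq1
      have h3 : (2 : ZMod d) * q.1 = 2 * r.1 := by linear_combination h2 - h1
      exact (two_unit hd).mul_left_cancel h3
    · rw [mul_zero]
    · rw [zero_mul]
    · rw [zero_mul]

end phasepoint

lemma rank_eq_trace_of_idem {n : Type*} [Fintype n] [DecidableEq n]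
    (e : Matrix n n ℂ) (he : e * e = e) : (e.rank : ℂ) = e.trace := by
  have hcomp : e.mulVecLin ∘ₗ e.mulVecLin = e.mulVecLin := by
    rw [← Matrix.mulVecLin_mul, he]
  have hproj : LinearMap.IsProj (LinearMap.range e.mulVecLin) e.mulVecLin := by
    refine ⟨fun x => LinearMap.mem_range_self _ x, ?_⟩
    rintro x ⟨y, rfl⟩
    exact DFunLike.congr_fun hcomp y
  have htr := LinearMap.IsProj.trace hproj
  rw [LinearMap.trace_eq_matrix_trace ℂ (Pi.basisFun ℂ n)] at htr
  rw [LinearMap.toMatrix_eq_toMatrix'] at htr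
  rw [← Matrix.toLin'_apply', LinearMap.toMatrix'_toLin'] at htr
  rw [htr, Matrix.rank]
  norm_cast

/-- For odd `d`, with `P` the parity matrix, the Wigner projectors
`Π±_W = (1/2) • (1 ± P)` are orthogonal projections of rank `(d±1)/2` whose WH orbits
`{D q * Π±_W * (D q)ᴴ}` are symmetric tight fusion frames: they sum to `(d(d±1)/2) • 1`
and have pairwise traces `(d±2)/4`. -/
theorem stmt_13 (d : ℕ) [NeZero d] (hd : Odd d)
    (P : Matrix (ZMod d) (ZMod d) ℂ)
    (hP : ∀ j k : ZMod d, P j k = if j = -k then 1 else 0)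
    (Pp Pm : Matrix (ZMod d) (ZMod d) ℂ)
    (hPp : Pp = (1 / 2 : ℂ) • (1 + P))
    (hPm : Pm = (1 / 2 : ℂ) • (1 - P)) :
    Pp.IsHermitian ∧ Pp * Pp = Pp ∧ Pp.rank = (d + 1) / 2 ∧
    Pm.IsHermitian ∧ Pm * Pm = Pm ∧ Pm.rank = (d - 1) / 2 ∧
    (∑ q : ZMod d × ZMod d, Disp d q * Pp * (Disp d q)ᴴ
        = ((d : ℂ) * ((d : ℂ) + 1) / 2) • 1) ∧
    (∑ q : ZMod d × ZMod d, Disp d q * Pm * (Disp d q)ᴴ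
        = ((d : ℂ) * ((d : ℂ) - 1) / 2) • 1) ∧
    (∀ q r : ZMod d × ZMod d, q ≠ r →
      (Disp d q * Pp * (Disp d q)ᴴ * (Disp d r * Pp * (Disp d r)ᴴ)).trace
        = ((d : ℂ) + 2) / 4) ∧
    (∀ q r : ZMod d × ZMod d, q ≠ r →
      (Disp d q * Pm * (Disp d q)ᴴ * (Disp d r * Pm * (Disp d r)ᴴ)).trace
        = ((d : ℂ) - 2) / 4) := by
  have hPH : Pᴴ = P := by
    ext j k
    rw [Matrix.conjTranspose_apply, hP, hP]
    by_cases h : j = -k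
    · have h' : k = -j := by rw [h]; ring
      rw [if_pos h', star_one, if_pos h]
    · have h' : ¬ k = -j := fun hh => h (by rw [hh]; ring)
      rw [if_neg h', star_zero, if_neg h]
  have hP2 : P * P = 1 := by
    ext j k
    rw [Matrix.mul_apply, Finset.sum_eq_single (-k)]
    · rw [hP, hP, neg_neg, Matrix.one_apply, if_pos rfl, mul_one]
    · intro a _ ha
      rw [hP a k, if_neg ha, mul_zero]
    · simp
  have hstar : star (1 / 2 : ℂ) = 1 / 2 := by
    norm_num
  have hermPp : Pp.IsHermitian := by
    rw [Matrix.IsHermitian, hPp, Matrix.conjTranspose_smul, Matrix.conjTranspose_add,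
      Matrix.conjTranspose_one, hPH, hstar]
  have hermPm : Pm.IsHermitian := by
    rw [Matrix.IsHermitian, hPm, Matrix.conjTranspose_smul, Matrix.conjTranspose_sub,
      Matrix.conjTranspose_one, hPH, hstar]
  have hidemPp : Pp * Pp = Pp := by
    have hsq : (1 + P) * (1 + P) = (2 : ℂ) • (1 + P) := by
      simp only [mul_add, add_mul, one_mul, mul_one, hP2, smul_add, two_smul]
      abel
    have hs : ((1 / 2 : ℂ) * (1 / 2)) * 2 = 1 / 2 := by norm_num
    rw [hPp, Matrix.smul_mul, Matrix.mul_smul, hsq, smul_smul, smul_smul, hs]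
  have hidemPm : Pm * Pm = Pm := by
    have hsq : (1 - P) * (1 - P) = (2 : ℂ) • (1 - P) := by
      simp only [mul_sub, sub_mul, one_mul, mul_one, hP2, smul_sub, two_smul]
      abel
    have hs : ((1 / 2 : ℂ) * (1 / 2)) * 2 = 1 / 2 := by norm_num
    rw [hPm, Matrix.smul_mul, Matrix.mul_smul, hsq, smul_smul, smul_smul, hs]
  have htrP : P.trace = 1 := by
    have hdg : ∀ j : ZMod d, P.diag j = if j = 0 then (1 : ℂ) else 0 := by
      intro j
      rw [Matrix.diag_apply, hP]
      have hiff : (j = -j) ↔ (j = 0) := by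
        constructor
        · intro h
          have h2 : (2 : ZMod d) * j = 2 * 0 := by linear_combination h
          exact (two_unit hd).mul_left_cancel h2
        · intro h; rw [h, neg_zero]
      simp only [hiff]
    rw [Matrix.trace]
    simp_rw [hdg]
    simp
  have htrPp : Pp.trace = ((d : ℂ) + 1) / 2 := by
    rw [hPp, Matrix.trace_smul, Matrix.trace_add, Matrix.trace_one, htrP]
    simp [ZMod.card]
    ring
  have htrPm : Pm.trace = ((d : ℂ) - 1) / 2 := by
    rw [hPm, Matrix.trace_smul, Matrix.trace_sub, Matrix.trace_one, htrP]
    simp [ZMod.card]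
    ring
  have hrankPp : Pp.rank = (d + 1) / 2 := by
    have hc := rank_eq_trace_of_idem Pp hidemPp
    rw [htrPp] at hc
    have h2d : ((d + 1) / 2 : ℕ) * 2 = d + 1 := by
      obtain ⟨m, hm⟩ := hd; omega
    have : ((((d + 1) / 2 : ℕ)) : ℂ) = ((d : ℂ) + 1) / 2 := by
      rw [eq_div_iff (two_ne_zero)]
      exact_mod_cast congrArg (Nat.cast : ℕ → ℂ) h2d
    rw [← this] at hc
    exact_mod_cast hc
  have hrankPm : Pm.rank = (d - 1) / 2 := by
    have hc := rank_eq_trace_of_idem Pm hidemPm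
    rw [htrPm] at hc
    have hd1 : 1 ≤ d := Nat.one_le_iff_ne_zero.mpr (NeZero.ne d)
    have h2d : ((d - 1) / 2 : ℕ) * 2 = d - 1 := by
      obtain ⟨m, hm⟩ := hd; omega
    have : ((((d - 1) / 2 : ℕ)) : ℂ) = ((d : ℂ) - 1) / 2 := by
      rw [eq_div_iff (two_ne_zero)]
      have := congrArg (Nat.cast : ℕ → ℂ) h2d
      push_cast [hd1] at this
      exact_mod_cast this
    rw [← this] at hc
    exact_mod_cast hc
  have hmidp : ∀ q : ZMod d × ZMod d,
      Disp d q * Pp * (Disp d q)ᴴ = (1 / 2 : ℂ) • (1 + Disp d q * P * (Disp d q)ᴴ) := by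
    intro q
    rw [hPp, Matrix.mul_smul, Matrix.smul_mul]
    congr 1
    rw [mul_add, add_mul, mul_one, disp_unitary hd]
  have hmidm : ∀ q : ZMod d × ZMod d,
      Disp d q * Pm * (Disp d q)ᴴ = (1 / 2 : ℂ) • (1 - Disp d q * P * (Disp d q)ᴴ) := by
    intro q
    rw [hPm, Matrix.mul_smul, Matrix.smul_mul]
    congr 1
    rw [mul_sub, sub_mul, mul_one, disp_unitary hd]
  have hcard : ((Finset.univ : Finset (ZMod d × ZMod d)).card • (1 : Matrix (ZMod d) (ZMod d) ℂ))
      = ((d : ℂ) * (d : ℂ)) • 1 := by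
    rw [Finset.card_univ, Fintype.card_prod, ZMod.card, ← Nat.cast_smul_eq_nsmul ℂ]
    push_cast
    ring_nf
  have hsump : ∑ q : ZMod d × ZMod d, Disp d q * Pp * (Disp d q)ᴴ
      = ((d : ℂ) * ((d : ℂ) + 1) / 2) • 1 := by
    simp_rw [hmidp]
    rw [← Finset.smul_sum, Finset.sum_add_distrib, Finset.sum_const, sum_A hd hP, hcard,
      ← add_smul, smul_smul]
    congr 1
    ring
  have hsumm : ∑ q : ZMod d × ZMod d, Disp d q * Pm * (Disp d q)ᴴ
      = ((d : ℂ) * ((d : ℂ) - 1) / 2) • 1 := by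
    simp_rw [hmidm]
    rw [← Finset.smul_sum, Finset.sum_sub_distrib, Finset.sum_const, sum_A hd hP, hcard,
      ← sub_smul, smul_smul]
    congr 1
    ring
  have htr1 : (1 : Matrix (ZMod d) (ZMod d) ℂ).trace = (d : ℂ) := by
    rw [Matrix.trace_one, ZMod.card]
  refine ⟨hermPp, hidemPp, hrankPp, hermPm, hidemPm, hrankPm, hsump, hsumm, ?_, ?_⟩
  · intro q r hqr
    rw [hmidp q, hmidp r, Matrix.smul_mul, Matrix.mul_smul, smul_smul, Matrix.trace_smul]
    have hexp : (1 + Disp d q * P * (Disp d q)ᴴ) * (1 + Disp d r * P * (Disp d r)ᴴ)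
        = 1 + Disp d r * P * (Disp d r)ᴴ + Disp d q * P * (Disp d q)ᴴ
          + Disp d q * P * (Disp d q)ᴴ * (Disp d r * P * (Disp d r)ᴴ) := by
      simp only [mul_add, add_mul, one_mul, mul_one]
      abel
    rw [hexp, Matrix.trace_add, Matrix.trace_add, Matrix.trace_add, htr1,
      trace_A hd hP, trace_A hd hP, trace_AA hd hP hqr]
    simp only [smul_eq_mul]
    ring
  · intro q r hqr
    rw [hmidm q, hmidm r, Matrix.smul_mul, Matrix.mul_smul, smul_smul, Matrix.trace_smul]
    have hexp : (1 - Disp d q * P * (Disp d q)ᴴ) * (1 - Disp d r * P * (Disp d r)ᴴ)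
        = 1 - Disp d r * P * (Disp d r)ᴴ - Disp d q * P * (Disp d q)ᴴ
          + Disp d q * P * (Disp d q)ᴴ * (Disp d r * P * (Disp d r)ᴴ) := by
      simp only [mul_sub, sub_mul, one_mul, mul_one]
      abel
    rw [hexp, Matrix.trace_add, Matrix.trace_sub, Matrix.trace_sub, htr1,
      trace_A hd hP, trace_A hd hP, trace_AA hd hP hqr]
    simp only [smul_eq_mul]
    ring
end

section
/- Let d ≥ 1 and let M : (ZMod d)² → ℂ satisfy M 0 = 1, |M p| = 1 for all p, and M (−p) = conj (M p) for all p. Define the (d²) × (d²) matrix Q, indexed by (ZMod d)², by Q p q = (1/(2d)) · ω^{−(p₂q₁ − p₁q₂)} · M (p − q) + (1/2) · δ_{p,q}, where ω = exp(2π i / d). Then Q is Hermitian, and Q is an orthogonal projection (Q * Q = Q) of rank d(d+1)/2 if and only if ∑_{r ∈ (ZMod d)²} ω^{−(p₂r₁ − p₁r₂)} · (M (p − r)) · (M r) = d² · δ_{p,0} for all p ∈ (ZMod d)². -/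
open Matrix

noncomputable def auxF (d : ℕ) (a : ZMod d) : ℂ :=
  Complex.exp (2 * Real.pi * Complex.I / d) ^ a.val

def auxV {d : ℕ} (p q : ZMod d × ZMod d) : ZMod d :=
  p.1 * q.2 - p.2 * q.1

lemma aux_zeta (d : ℕ) [NeZero d] :
    (Complex.exp (2 * Real.pi * Complex.I / d)) ^ d = 1 := by
  rw [← Complex.exp_nat_mul]
  have hd : (d : ℂ) ≠ 0 := Nat.cast_ne_zero.mpr (NeZero.ne d)
  rw [mul_div_cancel₀ _ hd, Complex.exp_two_pi_mul_I]

lemma aux_pow_mod (d : ℕ) [NeZero d] (ζ : ℂ) (hζ : ζ ^ d = 1) (n : ℕ) :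
    ζ ^ (n % d) = ζ ^ n := by
  conv_rhs => rw [← Nat.div_add_mod n d, pow_add, pow_mul, hζ, one_pow, one_mul]

lemma auxF_add (d : ℕ) [NeZero d] (a b : ZMod d) :
    auxF d (a + b) = auxF d a * auxF d b := by
  unfold auxF
  rw [ZMod.val_add, aux_pow_mod d _ (aux_zeta d), pow_add]

lemma auxF_zero (d : ℕ) [NeZero d] : auxF d 0 = 1 := by
  simp [auxF, ZMod.val_zero]

lemma auxF_ne_zero (d : ℕ) [NeZero d] (a : ZMod d) : auxF d a ≠ 0 :=
  pow_ne_zero _ (Complex.exp_ne_zero _)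

lemma auxF_conj (d : ℕ) [NeZero d] (a : ZMod d) :
    starRingEnd ℂ (auxF d a) = auxF d (-a) := by
  set ζ := Complex.exp (2 * Real.pi * Complex.I / d) with hζdef
  have hζ : ζ ^ d = 1 := aux_zeta d
  have habs : ‖ζ‖ = 1 := by
    rw [hζdef, Complex.norm_exp]
    norm_num [Complex.div_re, Complex.mul_re, Complex.mul_im]
  have hne : ζ ^ a.val ≠ 0 := pow_ne_zero _ (Complex.exp_ne_zero _)
  have h1 : starRingEnd ℂ (ζ ^ a.val) * ζ ^ a.val = 1 := by
    rw [mul_comm, Complex.mul_conj]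
    norm_cast
    rw [Complex.normSq_eq_norm_sq, norm_pow, habs, one_pow, one_pow]
  have h2 : ζ ^ (-a : ZMod d).val * ζ ^ a.val = 1 := by
    rw [show ζ ^ (-a : ZMod d).val * ζ ^ a.val = auxF d (-a) * auxF d a from rfl,
      ← auxF_add, neg_add_cancel, auxF_zero]
  exact mul_right_cancel₀ hne (h1.trans h2.symm)

lemma aux_rank_eq_trace_s17 {n : Type*} [Fintype n] [DecidableEq n]
    (Q : Matrix n n ℂ) (h : Q * Q = Q) : (Q.rank : ℂ) = Q.trace := by
  classical
  set f := Q.mulVecLin with hf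
  have hff : f ∘ₗ f = f := by rw [hf, ← Matrix.mulVecLin_mul, h]
  obtain ⟨p, hp⟩ := (LinearMap.isProj_iff_isIdempotentElem f).mpr hff
  have hrange : LinearMap.range f = p := by
    apply le_antisymm
    · rintro x ⟨y, rfl⟩; exact hp.map_mem y
    · intro x hx; exact ⟨x, hp.map_id x hx⟩
  have htr : LinearMap.trace ℂ (n → ℂ) f = (Module.finrank ℂ p : ℂ) := hp.trace
  have htr2 : LinearMap.trace ℂ (n → ℂ) f = Q.trace := by
    rw [LinearMap.trace_eq_matrix_trace ℂ (Pi.basisFun ℂ n) f,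
      LinearMap.toMatrix_eq_toMatrix', hf, ← Matrix.toLin'_apply',
      LinearMap.toMatrix'_toLin']
  rw [← htr2, htr, Matrix.rank, hrange]

set_option maxHeartbeats 1600000 in
/-- Let `M : (ZMod d)² → ℂ` satisfy `M 0 = 1`, `|M p| = 1` and
`M (-p) = conj (M p)`, and let `Q` be the `d² × d²` matrix
`Q p q = (1/(2d)) ω^{-(p₂q₁ - p₁q₂)} M (p - q) + (1/2) δ_{p,q}` with `ω = exp(2πi/d)`.
Then `Q` is Hermitian, and `Q` is an orthogonal projection of rank `d(d+1)/2` iff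
`∑_r ω^{-(p₂r₁ - p₁r₂)} M (p-r) M r = d² δ_{p,0}` for all `p`. -/
theorem stmt_17 (d : ℕ) [NeZero d] (hd : 1 ≤ d)
    (M : ZMod d × ZMod d → ℂ)
    (hM0 : M 0 = 1)
    (hMabs : ∀ p, ‖M p‖ = 1)
    (hMconj : ∀ p, M (-p) = starRingEnd ℂ (M p))
    (Q : Matrix (ZMod d × ZMod d) (ZMod d × ZMod d) ℂ)
    (hQ : ∀ p q, Q p q = (1 / (2 * (d : ℂ))) *
      Complex.exp (2 * Real.pi * Complex.I / d) ^ ((p.1 * q.2 - p.2 * q.1).val)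
        * M (p - q) + if p = q then (1 / 2 : ℂ) else 0) :
    Q.IsHermitian ∧
    ((Q * Q = Q ∧ Q.rank = d * (d + 1) / 2) ↔ ∀ p : ZMod d × ZMod d,
      ∑ r : ZMod d × ZMod d,
        Complex.exp (2 * Real.pi * Complex.I / d) ^ ((p.1 * r.2 - p.2 * r.1).val)
          * M (p - r) * M r
        = if p = 0 then (d : ℂ) ^ 2 else 0) := by
  classical
  have hdC : (d : ℂ) ≠ 0 := Nat.cast_ne_zero.mpr (NeZero.ne d)
  have hQ' : ∀ p q, Q p q = (1 / (2 * (d : ℂ))) * auxF d (auxV p q) * M (p - q)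
      + if p = q then (1 / 2 : ℂ) else 0 := by
    intro p q
    rw [hQ p q]
    rfl
  -- the sum S
  have hMrw : ∀ p q : ZMod d × ZMod d, starRingEnd ℂ (M (q - p)) = M (p - q) := by
    intro p q
    rw [← hMconj, neg_sub]
  have hermkey : ∀ p q : ZMod d × ZMod d,
      starRingEnd ℂ (auxF d (auxV q p)) = auxF d (auxV p q) := by
    intro p q
    rw [auxF_conj]
    congr 1
    simp only [auxV]
    ring
  have herm : Q.IsHermitian := by
    show Qᴴ = Q
    ext p q
    rw [Matrix.conjTranspose_apply, hQ' q p, hQ' p q, ← starRingEnd_apply]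
    rw [map_add, _root_.map_mul, _root_.map_mul, hermkey, hMrw]
    congr 1
    · congr 2
      rw [map_div₀, _root_.map_one, _root_.map_mul, map_natCast, Complex.conj_ofNat]
    · rw [apply_ite (starRingEnd ℂ), map_zero, map_div₀, _root_.map_one, Complex.conj_ofNat]
      exact if_congr eq_comm rfl rfl
  -- key entrywise identity
  have key : ∀ p q : ZMod d × ZMod d, (Q * Q) p q - Q p q
      = 1 / (4 * (d : ℂ) ^ 2) * auxF d (auxV p q) *
        ((∑ r : ZMod d × ZMod d,
          Complex.exp (2 * Real.pi * Complex.I / d) ^ (((p - q).1 * r.2 - (p - q).2 * r.1).val)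
            * M ((p - q) - r) * M r) - (if p = q then (d : ℂ) ^ 2 else 0)) := by
    intro p q
    have hterm : ∀ r, Q p r * Q r q =
        (1 / (2 * (d : ℂ))) ^ 2 *
          (auxF d (auxV p q) * (auxF d (auxV (p - q) (r - q)) * (M (p - r) * M (r - q))))
        + ((if r = q then (1 / (2 * (d : ℂ))) * auxF d (auxV p q) * M (p - q) * (1 / 2) else 0)
        + ((if p = r then (1 / (2 * (d : ℂ))) * auxF d (auxV p q) * M (p - q) * (1 / 2) else 0)
        + (if p = r then (if r = q then (1 / 4 : ℂ) else 0) else 0))) := by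
      intro r
      have hVid : auxV p r + auxV r q = auxV p q + auxV (p - q) (r - q) := by
        simp only [auxV, Prod.fst_sub, Prod.snd_sub]
        ring
      have hFF : auxF d (auxV p r) * auxF d (auxV r q)
          = auxF d (auxV p q) * auxF d (auxV (p - q) (r - q)) := by
        rw [← auxF_add, ← auxF_add, hVid]
      rw [hQ' p r, hQ' r q]
      by_cases h1 : p = r <;> by_cases h2 : r = q
      · subst h1; subst h2
        simp only [eq_self_iff_true, if_true]
        linear_combination ((1 / (2 * (d : ℂ))) ^ 2 * (M (p - p) * M (p - p))) * hFF
      · subst h1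
        simp only [eq_self_iff_true, if_true, if_neg h2]
        linear_combination ((1 / (2 * (d : ℂ))) ^ 2 * (M (p - p) * M (p - q))) * hFF
      · subst h2
        simp only [eq_self_iff_true, if_true, if_neg h1]
        linear_combination ((1 / (2 * (d : ℂ))) ^ 2 * (M (p - r) * M (r - r))) * hFF
      · simp only [if_neg h1, if_neg h2]
        linear_combination ((1 / (2 * (d : ℂ))) ^ 2 * (M (p - r) * M (r - q))) * hFF
    rw [Matrix.mul_apply]
    rw [Finset.sum_congr rfl fun r _ => hterm r]
    rw [Finset.sum_add_distrib, Finset.sum_add_distrib, Finset.sum_add_distrib]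
    rw [Finset.sum_ite_eq' Finset.univ q
        (fun _ => (1 / (2 * (d : ℂ))) * auxF d (auxV p q) * M (p - q) * (1 / 2)),
      Finset.sum_ite_eq Finset.univ p
        (fun _ => (1 / (2 * (d : ℂ))) * auxF d (auxV p q) * M (p - q) * (1 / 2)),
      Finset.sum_ite_eq Finset.univ p (fun r => if r = q then (1 / 4 : ℂ) else 0)]
    simp only [Finset.mem_univ, if_true]
    have hre0 : ∑ r : ZMod d × ZMod d,
        auxF d (auxV (p - q) (r - q)) * (M (p - r) * M (r - q))
        = ∑ r : ZMod d × ZMod d,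
           Complex.exp (2 * Real.pi * Complex.I / d) ^ (((p - q).1 * r.2 - (p - q).2 * r.1).val)
              * M ((p - q) - r) * M r := by
      apply Fintype.sum_equiv (Equiv.subRight q)
      intro r
      simp only [Equiv.subRight_apply]
      have h1 : p - r = (p - q) - (r - q) := by abel
      rw [h1]
      exact (mul_assoc (auxF d (auxV (p - q) (r - q))) (M ((p - q) - (r - q))) (M (r - q))).symm
    have hre : ∑ r : ZMod d × ZMod d,
        (1 / (2 * (d : ℂ))) ^ 2 *
          (auxF d (auxV p q) * (auxF d (auxV (p - q) (r - q)) * (M (p - r) * M (r - q))))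
        = (1 / (2 * (d : ℂ))) ^ 2 * (auxF d (auxV p q) *
          ∑ r : ZMod d × ZMod d,
            Complex.exp (2 * Real.pi * Complex.I / d) ^ (((p - q).1 * r.2 - (p - q).2 * r.1).val)
              * M ((p - q) - r) * M r) := by
      rw [← hre0]
      simp only [Finset.mul_sum]
    rw [hre, hQ' p q]
    obtain ⟨T, hT⟩ : ∃ T : ℂ, T = ∑ r : ZMod d × ZMod d,
        Complex.exp (2 * Real.pi * Complex.I / d) ^ (((p - q).1 * r.2 - (p - q).2 * r.1).val)
          * M ((p - q) - r) * M r := ⟨_, rfl⟩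
    rw [← hT]
    have e1 : (1 / (2 * (d : ℂ))) ^ 2 = 1 / (4 * (d : ℂ) ^ 2) := by
      rw [div_pow, one_pow, mul_pow]
      norm_num
    by_cases h : p = q
    · subst h
      have hV0 : auxV p p = 0 := by simp only [auxV]; ring
      rw [hV0, auxF_zero]
      simp only [eq_self_iff_true, if_true]
      have e2 : 1 / (4 * (d : ℂ) ^ 2) * (d : ℂ) ^ 2 = 1 / 4 := by
        field_simp
      rw [e1]
      linear_combination e2
    · rw [if_neg h, if_neg h, if_neg h]
      rw [e1]
      ring
  refine ⟨herm, ?_, ?_⟩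
  · rintro ⟨hproj, -⟩ p
    have hk := key p 0
    rw [hproj, sub_self] at hk
    simp only [sub_zero] at hk
    have hne : 1 / (4 * (d : ℂ) ^ 2) * auxF d (auxV p 0) ≠ 0 := by
      apply mul_ne_zero _ (auxF_ne_zero d _)
      simp [hdC]
    have h2 := (mul_eq_zero.mp hk.symm).resolve_left hne
    exact sub_eq_zero.mp h2
  · intro hS
    have hproj : Q * Q = Q := by
      ext p q
      have hk := key p q
      have hz : (∑ r : ZMod d × ZMod d,
          Complex.exp (2 * Real.pi * Complex.I / d) ^ (((p - q).1 * r.2 - (p - q).2 * r.1).val)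
            * M ((p - q) - r) * M r) - (if p = q then (d : ℂ) ^ 2 else 0) = 0 := by
        rw [hS (p - q)]
        by_cases h : p = q
        · simp [h]
        · rw [if_neg h, if_neg (fun hc => h (sub_eq_zero.mp hc)), sub_zero]
      rw [hz, mul_zero] at hk
      exact sub_eq_zero.mp hk
    refine ⟨hproj, ?_⟩
    have hdiag : ∀ p : ZMod d × ZMod d, Q p p = 1 / (2 * (d : ℂ)) + 1 / 2 := by
      intro p
      rw [hQ' p p]
      have hV0 : auxV p p = 0 := by simp only [auxV]; ring
      rw [hV0, auxF_zero, sub_self, hM0, if_pos rfl, mul_one, mul_one]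
    have hcard : Fintype.card (ZMod d × ZMod d) = d ^ 2 := by
      simp [ZMod.card, sq]
    have htrace : Q.trace = (d : ℂ) ^ 2 * (1 / (2 * (d : ℂ)) + 1 / 2) := by
      rw [Matrix.trace]
      have hdiag' : ∀ p : ZMod d × ZMod d, Q.diag p = 1 / (2 * (d : ℂ)) + 1 / 2 := hdiag
      rw [Finset.sum_congr rfl fun p _ => hdiag' p]
      rw [Finset.sum_const, Finset.card_univ, hcard, nsmul_eq_mul]
      push_cast
      ring
    have hcast : ((d * (d + 1) / 2 : ℕ) : ℂ) = (d : ℂ) * ((d : ℂ) + 1) / 2 := by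
      rw [Nat.cast_div (even_iff_two_dvd.mp (Nat.even_mul_succ_self d)) (by norm_num)]
      push_cast
      ring
    have hr := aux_rank_eq_trace_s17 Q hproj
    rw [htrace] at hr
    have : ((Q.rank : ℕ) : ℂ) = ((d * (d + 1) / 2 : ℕ) : ℂ) := by
      rw [hr, hcast]
      field_simp
      ring
    exact_mod_cast this
end

section
/- For d = 4 and every t ∈ ℝ, define M(t) : (ZMod 4)² → ℂ by the table M(t)_{p₁,p₂} (rows indexed by p₁ = 0,1,2,3, columns by p₂ = 0,1,2,3): row 0: 1, e^{−it}, 1, e^{it}; row 1: e^{−it}, e^{it}, e^{it}, e^{it}; row 2: 1, e^{−it}, 1, e^{it}; row 3: e^{it}, e^{−it}, e^{−it}, e^{−it}. Then for every t ∈ ℝ and every p ∈ (ZMod 4)², ∑_{r ∈ (ZMod 4)²} i^{−(p₂r₁ − p₁r₂)} · (M(t) (p − r)) · (M(t) r) = 16 · δ_{p,0}. Consequently the 16 × 16 matrix H(t) with entries H(t) p q = (1/4) · i^{−(p₂q₁ − p₁q₂)} · M(t) (p − q) is, for every t, a Hermitian complex Hadamard matrix: Hermitian, satisfying H(t) * H(t)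 = 1, with all entries of absolute value 1/4 and trace 4. -/
open Matrix

/-- The exponent table. -/
def E (p : ZMod 4 × ZMod 4) : ℤ :=
  ((!![0, -1, 0, 1; -1, 1, 1, 1; 0, -1, 0, 1; 1, -1, -1, -1] :
      Matrix (Fin 4) (Fin 4) ℤ) ⟨p.1.val, p.1.val_lt⟩ ⟨p.2.val, p.2.val_lt⟩ : ℤ)

lemma Eneg (p : ZMod 4 × ZMod 4) : E (-p) = - E p := by revert p; decide

lemma Ezero : E 0 = 0 := by decide

lemma expand (f : ZMod 4 × ZMod 4 → ℂ) : ∑ r, f r =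
      (f (0,0) + f (0,1) + f (0,2) + f (0,3)) + (f (1,0) + f (1,1) + f (1,2) + f (1,3)) +
      (f (2,0) + f (2,1) + f (2,2) + f (2,3)) + (f (3,0) + f (3,1) + f (3,2) + f (3,3)) := by
  rw [Fintype.sum_prod_type]
  show ∑ x : Fin 4, ∑ y : Fin 4, f (x, y) = _
  simp only [Fin.sum_univ_four]
  rfl

lemma I_cube : Complex.I ^ 3 = -Complex.I := by rw [pow_succ, Complex.I_sq]; ring

lemma I_mod (n : ℕ) : Complex.I ^ n = Complex.I ^ (n % 4) := by
  conv_lhs => rw [← Nat.div_add_mod n 4]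
  rw [pow_add, pow_mul, Complex.I_pow_four, one_pow, one_mul]

lemma I_congr {n m : ℕ} (h : n % 4 = m % 4) : Complex.I ^ n = Complex.I ^ m := by
  rw [I_mod, h, ← I_mod]

lemma I_add (a b : ZMod 4) :
    Complex.I ^ a.val * Complex.I ^ b.val = Complex.I ^ (a + b).val := by
  rw [← pow_add]
  exact I_congr (by revert a b; decide)

lemma I_conj (a : ZMod 4) :
    (starRingEnd ℂ) (Complex.I ^ a.val) = Complex.I ^ (-a).val := by
  rw [map_pow, Complex.conj_I, ← I_cube, ← pow_mul]
  exact I_congr (by revert a; decide)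

noncomputable def Z (t : ℝ) : ℂ := Complex.exp (Complex.I * t)

lemma Z_ne (t : ℝ) : Z t ≠ 0 := Complex.exp_ne_zero _

lemma Z_abs (t : ℝ) : ‖Z t‖ = 1 := by
  rw [Z, Complex.norm_exp]; simp

lemma Z_conj (t : ℝ) : (starRingEnd ℂ) (Z t) = (Z t)⁻¹ := by
  rw [Z, ← Complex.exp_conj, ← Complex.exp_neg]
  congr 1
  simp [Complex.ext_iff]

lemma key_00 (z : ℂ) (hz : z ≠ 0) :
    (Complex.I ^ 0 * z ^ (0:ℤ) * z ^ (0:ℤ) + Complex.I ^ 0 * z ^ (1:ℤ) * z ^ (-1:ℤ) + Complex.I ^ 0 * z ^ (0:ℤ) * z ^ (0:ℤ) + Complex.I ^ 0 * z ^ (-1:ℤ) * z ^ (1:ℤ)) + (Complex.I ^ 0 * z ^ (1:ℤ) * z ^ (-1:ℤ) + Complex.I ^ 0 * z ^ (-1:ℤ) * z ^ (1:ℤ) + Complex.I ^ 0 * z ^ (-1:ℤ) * z ^ (1:ℤ) + Complex.I ^ 0 * z ^ (-1:ℤ) * z ^ (1:ℤ)) + (Complex.I ^ 0 * z ^ (0:ℤ)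 * z ^ (0:ℤ) + Complex.I ^ 0 * z ^ (1:ℤ) * z ^ (-1:ℤ) + Complex.I ^ 0 * z ^ (0:ℤ) * z ^ (0:ℤ) + Complex.I ^ 0 * z ^ (-1:ℤ) * z ^ (1:ℤ)) + (Complex.I ^ 0 * z ^ (-1:ℤ) * z ^ (1:ℤ) + Complex.I ^ 0 * z ^ (1:ℤ) * z ^ (-1:ℤ) + Complex.I ^ 0 * z ^ (1:ℤ) * z ^ (-1:ℤ) + Complex.I ^ 0 * z ^ (1:ℤ) * z ^ (-1:ℤ)) = if ((0,0) : ZMod 4 × ZMod 4) = 0 then (16:ℂ) else 0 := by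
  rw [if_pos (by decide : ((0,0) : ZMod 4 × ZMod 4) = 0)]
  simp only [Complex.I_sq, I_cube, pow_zero, pow_one, _root_.zpow_neg, zpow_one, zpow_zero]
  linear_combination (((12:ℂ) + (0:ℂ) * Complex.I) * 1) * mul_inv_cancel₀ hz

lemma key_01 (z : ℂ) (hz : z ≠ 0) :
    (Complex.I ^ 0 * z ^ (-1:ℤ) * z ^ (0:ℤ) + Complex.I ^ 0 * z ^ (0:ℤ) * z ^ (-1:ℤ) + Complex.I ^ 0 * z ^ (1:ℤ) * z ^ (0:ℤ) + Complex.I ^ 0 * z ^ (0:ℤ) * z ^ (1:ℤ)) + (Complex.I ^ 3 * z ^ (-1:ℤ) * z ^ (-1:ℤ) + Complex.I ^ 3 * z ^ (1:ℤ) * z ^ (1:ℤ) + Complex.I ^ 3 * z ^ (-1:ℤ) * z ^ (1:ℤ) + Complex.I ^ 3 * z ^ (-1:ℤ) * z ^ (1:ℤ)) + (Complex.I ^ 2 * z ^ (-1:ℤ) * z ^ (0:ℤ) + Complex.I ^ 2 * z ^ (0:ℤ) * z ^ (-1:ℤ) + Complex.I ^ 2 * z ^ (1:ℤ) * z ^ (0:ℤ)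 + Complex.I ^ 2 * z ^ (0:ℤ) * z ^ (1:ℤ)) + (Complex.I ^ 1 * z ^ (1:ℤ) * z ^ (1:ℤ) + Complex.I ^ 1 * z ^ (-1:ℤ) * z ^ (-1:ℤ) + Complex.I ^ 1 * z ^ (1:ℤ) * z ^ (-1:ℤ) + Complex.I ^ 1 * z ^ (1:ℤ) * z ^ (-1:ℤ)) = if ((0,1) : ZMod 4 × ZMod 4) = 0 then (16:ℂ) else 0 := by
  rw [if_neg (by decide)]
  simp only [Complex.I_sq, I_cube, pow_zero, pow_one, _root_.zpow_neg, zpow_one, zpow_zero]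
  linear_combination ((0:ℂ)) * mul_inv_cancel₀ hz

lemma key_02 (z : ℂ) (hz : z ≠ 0) :
    (Complex.I ^ 0 * z ^ (0:ℤ) * z ^ (0:ℤ) + Complex.I ^ 0 * z ^ (-1:ℤ) * z ^ (-1:ℤ) + Complex.I ^ 0 * z ^ (0:ℤ) * z ^ (0:ℤ) + Complex.I ^ 0 * z ^ (1:ℤ) * z ^ (1:ℤ)) + (Complex.I ^ 2 * z ^ (-1:ℤ) * z ^ (-1:ℤ) + Complex.I ^ 2 * z ^ (-1:ℤ) * z ^ (1:ℤ) + Complex.I ^ 2 * z ^ (1:ℤ) * z ^ (1:ℤ) + Complex.I ^ 2 * z ^ (-1:ℤ) * z ^ (1:ℤ)) + (Complex.I ^ 0 * z ^ (0:ℤ) * z ^ (0:ℤ) + Complex.I ^ 0 * z ^ (-1:ℤ) * z ^ (-1:ℤ) + Complex.I ^ 0 * z ^ (0:ℤ) * z ^ (0:ℤ) + Complex.I ^ 0 * z ^ (1:ℤ) * z ^ (1:ℤ)) + (Complex.I ^ 2 * z ^ (1:ℤ) * z ^ (1:ℤ) + Complex.I ^ 2 * z ^ (1:ℤ) * z ^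 (-1:ℤ) + Complex.I ^ 2 * z ^ (-1:ℤ) * z ^ (-1:ℤ) + Complex.I ^ 2 * z ^ (1:ℤ) * z ^ (-1:ℤ)) = if ((0,2) : ZMod 4 × ZMod 4) = 0 then (16:ℂ) else 0 := by
  rw [if_neg (by decide)]
  simp only [Complex.I_sq, I_cube, pow_zero, pow_one, _root_.zpow_neg, zpow_one, zpow_zero]
  linear_combination (((-4:ℂ) + (0:ℂ) * Complex.I) * 1) * mul_inv_cancel₀ hz

lemma key_03 (z : ℂ) (hz : z ≠ 0) :
    (Complex.I ^ 0 * z ^ (1:ℤ) * z ^ (0:ℤ) + Complex.I ^ 0 * z ^ (0:ℤ) * z ^ (-1:ℤ) + Complex.I ^ 0 * z ^ (-1:ℤ) * z ^ (0:ℤ) + Complex.I ^ 0 * z ^ (0:ℤ) * z ^ (1:ℤ)) + (Complex.I ^ 1 * z ^ (-1:ℤ) * z ^ (-1:ℤ) + Complex.I ^ 1 * z ^ (-1:ℤ) * z ^ (1:ℤ) + Complex.I ^ 1 * z ^ (-1:ℤ) * z ^ (1:ℤ) + Complex.I ^ 1 * z ^ (1:ℤ) * z ^ (1:ℤ)) +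 (Complex.I ^ 2 * z ^ (1:ℤ) * z ^ (0:ℤ) + Complex.I ^ 2 * z ^ (0:ℤ) * z ^ (-1:ℤ) + Complex.I ^ 2 * z ^ (-1:ℤ) * z ^ (0:ℤ) + Complex.I ^ 2 * z ^ (0:ℤ) * z ^ (1:ℤ)) + (Complex.I ^ 3 * z ^ (1:ℤ) * z ^ (1:ℤ) + Complex.I ^ 3 * z ^ (1:ℤ) * z ^ (-1:ℤ) + Complex.I ^ 3 * z ^ (1:ℤ) * z ^ (-1:ℤ) + Complex.I ^ 3 * z ^ (-1:ℤ) * z ^ (-1:ℤ)) = if ((0,3) : ZMod 4 × ZMod 4) = 0 then (16:ℂ) else 0 := by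
  rw [if_neg (by decide)]
  simp only [Complex.I_sq, I_cube, pow_zero, pow_one, _root_.zpow_neg, zpow_one, zpow_zero]
  linear_combination ((0:ℂ)) * mul_inv_cancel₀ hz

lemma key_10 (z : ℂ) (hz : z ≠ 0) :
    (Complex.I ^ 0 * z ^ (-1:ℤ) * z ^ (0:ℤ) + Complex.I ^ 1 * z ^ (1:ℤ) * z ^ (-1:ℤ) + Complex.I ^ 2 * z ^ (1:ℤ) * z ^ (0:ℤ) + Complex.I ^ 3 * z ^ (1:ℤ) * z ^ (1:ℤ)) + (Complex.I ^ 0 * z ^ (0:ℤ) * z ^ (-1:ℤ) + Complex.I ^ 1 * z ^ (1:ℤ) * z ^ (1:ℤ) + Complex.I ^ 2 * z ^ (0:ℤ) * z ^ (1:ℤ) + Complex.I ^ 3 * z ^ (-1:ℤ) * z ^ (1:ℤ)) + (Complex.I ^ 0 * z ^ (1:ℤ) * z ^ (0:ℤ) + Complex.I ^ 1 * z ^ (-1:ℤ) * z ^ (-1:ℤ) + Complex.I ^ 2 * z ^ (-1:ℤ) * z ^ (0:ℤ) + Complex.I ^ 3 * z ^ (-1:ℤ) * z ^ (1:ℤ))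 + (Complex.I ^ 0 * z ^ (0:ℤ) * z ^ (1:ℤ) + Complex.I ^ 1 * z ^ (1:ℤ) * z ^ (-1:ℤ) + Complex.I ^ 2 * z ^ (0:ℤ) * z ^ (-1:ℤ) + Complex.I ^ 3 * z ^ (-1:ℤ) * z ^ (-1:ℤ)) = if ((1,0) : ZMod 4 × ZMod 4) = 0 then (16:ℂ) else 0 := by
  rw [if_neg (by decide)]
  simp only [Complex.I_sq, I_cube, pow_zero, pow_one, _root_.zpow_neg, zpow_one, zpow_zero]
  linear_combination ((0:ℂ)) * mul_inv_cancel₀ hz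

lemma key_11 (z : ℂ) (hz : z ≠ 0) :
    (Complex.I ^ 0 * z ^ (1:ℤ) * z ^ (0:ℤ) + Complex.I ^ 1 * z ^ (-1:ℤ) * z ^ (-1:ℤ) + Complex.I ^ 2 * z ^ (1:ℤ) * z ^ (0:ℤ) + Complex.I ^ 3 * z ^ (1:ℤ) * z ^ (1:ℤ)) + (Complex.I ^ 3 * z ^ (-1:ℤ) * z ^ (-1:ℤ) + Complex.I ^ 0 * z ^ (0:ℤ) * z ^ (1:ℤ) + Complex.I ^ 1 * z ^ (1:ℤ) * z ^ (1:ℤ) + Complex.I ^ 2 * z ^ (0:ℤ) * z ^ (1:ℤ)) + (Complex.I ^ 2 * z ^ (-1:ℤ) * z ^ (0:ℤ) + Complex.I ^ 3 * z ^ (1:ℤ) * z ^ (-1:ℤ) + Complex.I ^ 0 * z ^ (-1:ℤ) * z ^ (0:ℤ) + Complex.I ^ 1 * z ^ (-1:ℤ) * z ^ (1:ℤ)) + (Complex.I ^ 1 * z ^ (-1:ℤ) * z ^ (1:ℤ) + Complex.I ^ 2 * z ^ (0:ℤ) * z ^ (-1:ℤ) + Complex.I ^ 3 * z ^ (1:ℤ)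 * z ^ (-1:ℤ) + Complex.I ^ 0 * z ^ (0:ℤ) * z ^ (-1:ℤ)) = if ((1,1) : ZMod 4 × ZMod 4) = 0 then (16:ℂ) else 0 := by
  rw [if_neg (by decide)]
  simp only [Complex.I_sq, I_cube, pow_zero, pow_one, _root_.zpow_neg, zpow_one, zpow_zero]
  linear_combination ((0:ℂ)) * mul_inv_cancel₀ hz

lemma key_12 (z : ℂ) (hz : z ≠ 0) :
    (Complex.I ^ 0 * z ^ (1:ℤ) * z ^ (0:ℤ) + Complex.I ^ 1 * z ^ (1:ℤ) * z ^ (-1:ℤ) + Complex.I ^ 2 * z ^ (-1:ℤ) * z ^ (0:ℤ) + Complex.I ^ 3 * z ^ (1:ℤ) * z ^ (1:ℤ)) + (Complex.I ^ 2 * z ^ (0:ℤ) * z ^ (-1:ℤ) + Complex.I ^ 3 * z ^ (-1:ℤ) * z ^ (1:ℤ) + Complex.I ^ 0 * z ^ (0:ℤ) * z ^ (1:ℤ) + Complex.I ^ 1 * z ^ (1:ℤ) * z ^ (1:ℤ)) + (Complex.I ^ 0 * z ^ (-1:ℤ) * z ^ (0:ℤ) + Complex.I ^ 1 * z ^ (-1:ℤ)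 * z ^ (-1:ℤ) + Complex.I ^ 2 * z ^ (1:ℤ) * z ^ (0:ℤ) + Complex.I ^ 3 * z ^ (-1:ℤ) * z ^ (1:ℤ)) + (Complex.I ^ 2 * z ^ (0:ℤ) * z ^ (1:ℤ) + Complex.I ^ 3 * z ^ (-1:ℤ) * z ^ (-1:ℤ) + Complex.I ^ 0 * z ^ (0:ℤ) * z ^ (-1:ℤ) + Complex.I ^ 1 * z ^ (1:ℤ) * z ^ (-1:ℤ)) = if ((1,2) : ZMod 4 × ZMod 4) = 0 then (16:ℂ) else 0 := by
  rw [if_neg (by decide)]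
  simp only [Complex.I_sq, I_cube, pow_zero, pow_one, _root_.zpow_neg, zpow_one, zpow_zero]
  linear_combination ((0:ℂ)) * mul_inv_cancel₀ hz

lemma key_13 (z : ℂ) (hz : z ≠ 0) :
    (Complex.I ^ 0 * z ^ (1:ℤ) * z ^ (0:ℤ) + Complex.I ^ 1 * z ^ (1:ℤ) * z ^ (-1:ℤ) + Complex.I ^ 2 * z ^ (1:ℤ) * z ^ (0:ℤ) + Complex.I ^ 3 * z ^ (-1:ℤ) * z ^ (1:ℤ)) + (Complex.I ^ 1 * z ^ (1:ℤ) * z ^ (-1:ℤ) + Complex.I ^ 2 * z ^ (0:ℤ) * z ^ (1:ℤ) + Complex.I ^ 3 * z ^ (-1:ℤ) * z ^ (1:ℤ) + Complex.I ^ 0 * z ^ (0:ℤ) * z ^ (1:ℤ)) + (Complex.I ^ 2 * z ^ (-1:ℤ) * z ^ (0:ℤ) + Complex.I ^ 3 * z ^ (-1:ℤ) * z ^ (-1:ℤ) + Complex.I ^ 0 * z ^ (-1:ℤ) * z ^ (0:ℤ) + Complex.I ^ 1 * z ^ (1:ℤ) * z ^ (1:ℤ)) + (Complex.I ^ 3 *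 z ^ (1:ℤ) * z ^ (1:ℤ) + Complex.I ^ 0 * z ^ (0:ℤ) * z ^ (-1:ℤ) + Complex.I ^ 1 * z ^ (-1:ℤ) * z ^ (-1:ℤ) + Complex.I ^ 2 * z ^ (0:ℤ) * z ^ (-1:ℤ)) = if ((1,3) : ZMod 4 × ZMod 4) = 0 then (16:ℂ) else 0 := by
  rw [if_neg (by decide)]
  simp only [Complex.I_sq, I_cube, pow_zero, pow_one, _root_.zpow_neg, zpow_one, zpow_zero]
  linear_combination ((0:ℂ)) * mul_inv_cancel₀ hz

lemma key_20 (z : ℂ) (hz : z ≠ 0) :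
    (Complex.I ^ 0 * z ^ (0:ℤ) * z ^ (0:ℤ) + Complex.I ^ 2 * z ^ (1:ℤ) * z ^ (-1:ℤ) + Complex.I ^ 0 * z ^ (0:ℤ) * z ^ (0:ℤ) + Complex.I ^ 2 * z ^ (-1:ℤ) * z ^ (1:ℤ)) + (Complex.I ^ 0 * z ^ (-1:ℤ) * z ^ (-1:ℤ) + Complex.I ^ 2 * z ^ (1:ℤ) * z ^ (1:ℤ) + Complex.I ^ 0 * z ^ (1:ℤ) * z ^ (1:ℤ) + Complex.I ^ 2 * z ^ (1:ℤ) * z ^ (1:ℤ)) + (Complex.I ^ 0 * z ^ (0:ℤ) * z ^ (0:ℤ) + Complex.I ^ 2 * z ^ (1:ℤ) * z ^ (-1:ℤ) + Complex.I ^ 0 * z ^ (0:ℤ) * z ^ (0:ℤ) + Complex.I ^ 2 * z ^ (-1:ℤ) * z ^ (1:ℤ)) + (Complex.I ^ 0 * z ^ (1:ℤ) * z ^ (1:ℤ) + Complex.I ^ 2 * z ^ (-1:ℤ) * z ^ (-1:ℤ) + Complex.I ^ 0 * z ^ (-1:ℤ) * z ^ (-1:ℤ) + Complex.I ^ 2 *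 z ^ (-1:ℤ) * z ^ (-1:ℤ)) = if ((2,0) : ZMod 4 × ZMod 4) = 0 then (16:ℂ) else 0 := by
  rw [if_neg (by decide)]
  simp only [Complex.I_sq, I_cube, pow_zero, pow_one, _root_.zpow_neg, zpow_one, zpow_zero]
  linear_combination (((-4:ℂ) + (0:ℂ) * Complex.I) * 1) * mul_inv_cancel₀ hz

lemma key_21 (z : ℂ) (hz : z ≠ 0) :
    (Complex.I ^ 0 * z ^ (-1:ℤ) * z ^ (0:ℤ) + Complex.I ^ 2 * z ^ (0:ℤ) * z ^ (-1:ℤ) + Complex.I ^ 0 * z ^ (1:ℤ) * z ^ (0:ℤ) + Complex.I ^ 2 * z ^ (0:ℤ) * z ^ (1:ℤ)) + (Complex.I ^ 3 * z ^ (1:ℤ) * z ^ (-1:ℤ) + Complex.I ^ 1 * z ^ (-1:ℤ) * z ^ (1:ℤ) + Complex.I ^ 3 * z ^ (1:ℤ) * z ^ (1:ℤ) + Complex.I ^ 1 * z ^ (1:ℤ) * z ^ (1:ℤ)) + (Complex.I ^ 2 * z ^ (-1:ℤ) * z ^ (0:ℤ) + Complex.I ^ 0 * z ^ (0:ℤ)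 * z ^ (-1:ℤ) + Complex.I ^ 2 * z ^ (1:ℤ) * z ^ (0:ℤ) + Complex.I ^ 0 * z ^ (0:ℤ) * z ^ (1:ℤ)) + (Complex.I ^ 1 * z ^ (-1:ℤ) * z ^ (1:ℤ) + Complex.I ^ 3 * z ^ (1:ℤ) * z ^ (-1:ℤ) + Complex.I ^ 1 * z ^ (-1:ℤ) * z ^ (-1:ℤ) + Complex.I ^ 3 * z ^ (-1:ℤ) * z ^ (-1:ℤ)) = if ((2,1) : ZMod 4 × ZMod 4) = 0 then (16:ℂ) else 0 := by
  rw [if_neg (by decide)]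
  simp only [Complex.I_sq, I_cube, pow_zero, pow_one, _root_.zpow_neg, zpow_one, zpow_zero]
  linear_combination ((0:ℂ)) * mul_inv_cancel₀ hz

lemma key_22 (z : ℂ) (hz : z ≠ 0) :
    (Complex.I ^ 0 * z ^ (0:ℤ) * z ^ (0:ℤ) + Complex.I ^ 2 * z ^ (-1:ℤ) * z ^ (-1:ℤ) + Complex.I ^ 0 * z ^ (0:ℤ) * z ^ (0:ℤ) + Complex.I ^ 2 * z ^ (1:ℤ) * z ^ (1:ℤ)) + (Complex.I ^ 2 * z ^ (1:ℤ) * z ^ (-1:ℤ) + Complex.I ^ 0 * z ^ (1:ℤ) * z ^ (1:ℤ) + Complex.I ^ 2 * z ^ (-1:ℤ) * z ^ (1:ℤ) + Complex.I ^ 0 * z ^ (1:ℤ) * z ^ (1:ℤ)) + (Complex.I ^ 0 * z ^ (0:ℤ) * z ^ (0:ℤ) + Complex.I ^ 2 * z ^ (-1:ℤ) * z ^ (-1:ℤ) + Complex.I ^ 0 * z ^ (0:ℤ) * z ^ (0:ℤ) + Complex.I ^ 2 * z ^ (1:ℤ) * z ^ (1:ℤ)) + (Complex.I ^ 2 * z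 ^ (-1:ℤ) * z ^ (1:ℤ) + Complex.I ^ 0 * z ^ (-1:ℤ) * z ^ (-1:ℤ) + Complex.I ^ 2 * z ^ (1:ℤ) * z ^ (-1:ℤ) + Complex.I ^ 0 * z ^ (-1:ℤ) * z ^ (-1:ℤ)) = if ((2,2) : ZMod 4 × ZMod 4) = 0 then (16:ℂ) else 0 := by
  rw [if_neg (by decide)]
  simp only [Complex.I_sq, I_cube, pow_zero, pow_one, _root_.zpow_neg, zpow_one, zpow_zero]
  linear_combination (((-4:ℂ) + (0:ℂ) * Complex.I) * 1) * mul_inv_cancel₀ hz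

lemma key_23 (z : ℂ) (hz : z ≠ 0) :
    (Complex.I ^ 0 * z ^ (1:ℤ) * z ^ (0:ℤ) + Complex.I ^ 2 * z ^ (0:ℤ) * z ^ (-1:ℤ) + Complex.I ^ 0 * z ^ (-1:ℤ) * z ^ (0:ℤ) + Complex.I ^ 2 * z ^ (0:ℤ) * z ^ (1:ℤ)) + (Complex.I ^ 1 * z ^ (1:ℤ) * z ^ (-1:ℤ) + Complex.I ^ 3 * z ^ (1:ℤ) * z ^ (1:ℤ) + Complex.I ^ 1 * z ^ (1:ℤ) * z ^ (1:ℤ) + Complex.I ^ 3 * z ^ (-1:ℤ) * z ^ (1:ℤ)) + (Complex.I ^ 2 * z ^ (1:ℤ) * z ^ (0:ℤ) + Complex.I ^ 0 * z ^ (0:ℤ) * z ^ (-1:ℤ) + Complex.I ^ 2 * z ^ (-1:ℤ) * z ^ (0:ℤ) + Complex.I ^ 0 * z ^ (0:ℤ) * z ^ (1:ℤ)) + (Complex.I ^ 3 * z ^ (-1:ℤ) * z ^ (1:ℤ) + Complex.I ^ 1 * z ^ (-1:ℤ) * z ^ (-1:ℤ) + Complex.I ^ 3 * z ^ (-1:ℤ)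 * z ^ (-1:ℤ) + Complex.I ^ 1 * z ^ (1:ℤ) * z ^ (-1:ℤ)) = if ((2,3) : ZMod 4 × ZMod 4) = 0 then (16:ℂ) else 0 := by
  rw [if_neg (by decide)]
  simp only [Complex.I_sq, I_cube, pow_zero, pow_one, _root_.zpow_neg, zpow_one, zpow_zero]
  linear_combination ((0:ℂ)) * mul_inv_cancel₀ hz

lemma key_30 (z : ℂ) (hz : z ≠ 0) :
    (Complex.I ^ 0 * z ^ (1:ℤ) * z ^ (0:ℤ) + Complex.I ^ 3 * z ^ (-1:ℤ) * z ^ (-1:ℤ) + Complex.I ^ 2 * z ^ (-1:ℤ) * z ^ (0:ℤ) + Complex.I ^ 1 * z ^ (-1:ℤ) * z ^ (1:ℤ)) + (Complex.I ^ 0 * z ^ (0:ℤ) * z ^ (-1:ℤ) + Complex.I ^ 3 * z ^ (1:ℤ) * z ^ (1:ℤ) + Complex.I ^ 2 * z ^ (0:ℤ) * z ^ (1:ℤ) + Complex.I ^ 1 * z ^ (-1:ℤ) * z ^ (1:ℤ)) + (Complex.I ^ 0 * z ^ (-1:ℤ) * z ^ (0:ℤ) + Complex.I ^ 3 * z ^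 (1:ℤ) * z ^ (-1:ℤ) + Complex.I ^ 2 * z ^ (1:ℤ) * z ^ (0:ℤ) + Complex.I ^ 1 * z ^ (1:ℤ) * z ^ (1:ℤ)) + (Complex.I ^ 0 * z ^ (0:ℤ) * z ^ (1:ℤ) + Complex.I ^ 3 * z ^ (1:ℤ) * z ^ (-1:ℤ) + Complex.I ^ 2 * z ^ (0:ℤ) * z ^ (-1:ℤ) + Complex.I ^ 1 * z ^ (-1:ℤ) * z ^ (-1:ℤ)) = if ((3,0) : ZMod 4 × ZMod 4) = 0 then (16:ℂ) else 0 := by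
  rw [if_neg (by decide)]
  simp only [Complex.I_sq, I_cube, pow_zero, pow_one, _root_.zpow_neg, zpow_one, zpow_zero]
  linear_combination ((0:ℂ)) * mul_inv_cancel₀ hz

lemma key_31 (z : ℂ) (hz : z ≠ 0) :
    (Complex.I ^ 0 * z ^ (-1:ℤ) * z ^ (0:ℤ) + Complex.I ^ 3 * z ^ (1:ℤ) * z ^ (-1:ℤ) + Complex.I ^ 2 * z ^ (-1:ℤ) * z ^ (0:ℤ) + Complex.I ^ 1 * z ^ (-1:ℤ) * z ^ (1:ℤ)) + (Complex.I ^ 3 * z ^ (-1:ℤ) * z ^ (-1:ℤ) + Complex.I ^ 2 * z ^ (0:ℤ) * z ^ (1:ℤ) + Complex.I ^ 1 * z ^ (1:ℤ) * z ^ (1:ℤ) + Complex.I ^ 0 * z ^ (0:ℤ) * z ^ (1:ℤ)) + (Complex.I ^ 2 * z ^ (1:ℤ) * z ^ (0:ℤ) + Complex.I ^ 1 * z ^ (-1:ℤ) * z ^ (-1:ℤ) + Complex.I ^ 0 * z ^ (1:ℤ) * z ^ (0:ℤ) + Complex.I ^ 3 * z ^ (1:ℤ) * z ^ (1:ℤ))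 + (Complex.I ^ 1 * z ^ (-1:ℤ) * z ^ (1:ℤ) + Complex.I ^ 0 * z ^ (0:ℤ) * z ^ (-1:ℤ) + Complex.I ^ 3 * z ^ (1:ℤ) * z ^ (-1:ℤ) + Complex.I ^ 2 * z ^ (0:ℤ) * z ^ (-1:ℤ)) = if ((3,1) : ZMod 4 × ZMod 4) = 0 then (16:ℂ) else 0 := by
  rw [if_neg (by decide)]
  simp only [Complex.I_sq, I_cube, pow_zero, pow_one, _root_.zpow_neg, zpow_one, zpow_zero]
  linear_combination ((0:ℂ)) * mul_inv_cancel₀ hz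

lemma key_32 (z : ℂ) (hz : z ≠ 0) :
    (Complex.I ^ 0 * z ^ (-1:ℤ) * z ^ (0:ℤ) + Complex.I ^ 3 * z ^ (-1:ℤ) * z ^ (-1:ℤ) + Complex.I ^ 2 * z ^ (1:ℤ) * z ^ (0:ℤ) + Complex.I ^ 1 * z ^ (-1:ℤ) * z ^ (1:ℤ)) + (Complex.I ^ 2 * z ^ (0:ℤ) * z ^ (-1:ℤ) + Complex.I ^ 1 * z ^ (-1:ℤ) * z ^ (1:ℤ) + Complex.I ^ 0 * z ^ (0:ℤ) * z ^ (1:ℤ) + Complex.I ^ 3 * z ^ (1:ℤ) * z ^ (1:ℤ)) + (Complex.I ^ 0 * z ^ (1:ℤ) * z ^ (0:ℤ) + Complex.I ^ 3 * z ^ (1:ℤ) * z ^ (-1:ℤ) + Complex.I ^ 2 * z ^ (-1:ℤ) * z ^ (0:ℤ) + Complex.I ^ 1 * z ^ (1:ℤ) * z ^ (1:ℤ)) + (Complex.I ^ 2 * z ^ (0:ℤ) * z ^ (1:ℤ) + Complex.I ^ 1 * z ^ (-1:ℤ) * z ^ (-1:ℤ) + Complex.I ^ 0 * z ^ (0:ℤ)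 * z ^ (-1:ℤ) + Complex.I ^ 3 * z ^ (1:ℤ) * z ^ (-1:ℤ)) = if ((3,2) : ZMod 4 × ZMod 4) = 0 then (16:ℂ) else 0 := by
  rw [if_neg (by decide)]
  simp only [Complex.I_sq, I_cube, pow_zero, pow_one, _root_.zpow_neg, zpow_one, zpow_zero]
  linear_combination ((0:ℂ)) * mul_inv_cancel₀ hz

lemma key_33 (z : ℂ) (hz : z ≠ 0) :
    (Complex.I ^ 0 * z ^ (-1:ℤ) * z ^ (0:ℤ) + Complex.I ^ 3 * z ^ (-1:ℤ) * z ^ (-1:ℤ) + Complex.I ^ 2 * z ^ (-1:ℤ) * z ^ (0:ℤ) + Complex.I ^ 1 * z ^ (1:ℤ) * z ^ (1:ℤ)) + (Complex.I ^ 1 * z ^ (1:ℤ) * z ^ (-1:ℤ) + Complex.I ^ 0 * z ^ (0:ℤ) * z ^ (1:ℤ) + Complex.I ^ 3 * z ^ (-1:ℤ) * z ^ (1:ℤ) + Complex.I ^ 2 * z ^ (0:ℤ) * z ^ (1:ℤ)) + (Complex.I ^ 2 * z ^ (1:ℤ) * z ^ (0:ℤ) + Complex.I ^ 1 * z ^ (1:ℤ)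 * z ^ (-1:ℤ) + Complex.I ^ 0 * z ^ (1:ℤ) * z ^ (0:ℤ) + Complex.I ^ 3 * z ^ (-1:ℤ) * z ^ (1:ℤ)) + (Complex.I ^ 3 * z ^ (1:ℤ) * z ^ (1:ℤ) + Complex.I ^ 2 * z ^ (0:ℤ) * z ^ (-1:ℤ) + Complex.I ^ 1 * z ^ (-1:ℤ) * z ^ (-1:ℤ) + Complex.I ^ 0 * z ^ (0:ℤ) * z ^ (-1:ℤ)) = if ((3,3) : ZMod 4 × ZMod 4) = 0 then (16:ℂ) else 0 := by
  rw [if_neg (by decide)]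
  simp only [Complex.I_sq, I_cube, pow_zero, pow_one, _root_.zpow_neg, zpow_one, zpow_zero]
  linear_combination ((0:ℂ)) * mul_inv_cancel₀ hz

set_option maxHeartbeats 1000000 in
lemma key_s18 (z : ℂ) (hz : z ≠ 0) (p : ZMod 4 × ZMod 4) :
    ∑ r : ZMod 4 × ZMod 4,
      Complex.I ^ ((p.1 * r.2 - p.2 * r.1).val) * z ^ (E (p - r)) * z ^ (E r)
      = if p = 0 then 16 else 0 := by
  obtain ⟨p1, p2⟩ := p
  rw [expand]
  fin_cases p1 <;> fin_cases p2
  exact key_00 z hz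
  exact key_01 z hz
  exact key_02 z hz
  exact key_03 z hz
  exact key_10 z hz
  exact key_11 z hz
  exact key_12 z hz
  exact key_13 z hz
  exact key_20 z hz
  exact key_21 z hz
  exact key_22 z hz
  exact key_23 z hz
  exact key_30 z hz
  exact key_31 z hz
  exact key_32 z hz
  exact key_33 z hz

/-- For `d = 4`, the one-parameter family of squared-phase matrices
`M(t)` (given by the table of powers `e^{ε·it}` below) satisfies
`∑_r i^{-(p₂r₁ - p₁r₂)} M(t)(p-r) M(t)(r) = 16 δ_{p,0}` for all `t, p`; consequently
`H(t) p q = (1/4) i^{-(p₂q₁ - p₁q₂)} M(t)(p-q)` is for every `t` a Hermitian complex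
Hadamard matrix of order 16 with trace 4. -/
theorem stmt_18
    (M : ℝ → ZMod 4 × ZMod 4 → ℂ)
    (hM : ∀ (t : ℝ) (p : ZMod 4 × ZMod 4),
      M t p = Complex.exp (Complex.I * t *
        ((!![0, -1, 0, 1; -1, 1, 1, 1; 0, -1, 0, 1; 1, -1, -1, -1] :
            Matrix (Fin 4) (Fin 4) ℤ) ⟨p.1.val, p.1.val_lt⟩ ⟨p.2.val, p.2.val_lt⟩ : ℤ)))
    (H : ℝ → Matrix (ZMod 4 × ZMod 4) (ZMod 4 × ZMod 4) ℂ)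
    (hH : ∀ (t : ℝ) (p q : ZMod 4 × ZMod 4),
      H t p q = (1 / 4 : ℂ) * Complex.I ^ ((p.1 * q.2 - p.2 * q.1).val) * M t (p - q)) :
    (∀ (t : ℝ) (p : ZMod 4 × ZMod 4),
      ∑ r : ZMod 4 × ZMod 4,
        Complex.I ^ ((p.1 * r.2 - p.2 * r.1).val) * M t (p - r) * M t r
        = if p = 0 then 16 else 0) ∧
    ∀ t : ℝ,
      (H t).IsHermitian ∧
      H t * H t = 1 ∧
      (∀ p q, ‖H t p q‖ = 1 / 4) ∧
      (H t).trace = 4 := by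
  have hMz : ∀ (t : ℝ) (p : ZMod 4 × ZMod 4), M t p = Z t ^ (E p) := by
    intro t p
    have h1 : Complex.exp (((E p : ℤ) : ℂ) * (Complex.I * t)) = Z t ^ (E p) :=
      Complex.exp_int_mul _ _
    rw [hM, ← h1]
    congr 1
    show Complex.I * (t : ℂ) * ((E p : ℤ) : ℂ) = _
    ring
  have hkey : ∀ (t : ℝ) (p : ZMod 4 × ZMod 4),
      ∑ r : ZMod 4 × ZMod 4,
        Complex.I ^ ((p.1 * r.2 - p.2 * r.1).val) * M t (p - r) * M t r
        = if p = 0 then 16 else 0 := by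
    intro t p
    simp only [hMz]
    exact key_s18 (Z t) (Z_ne t) p
  refine ⟨hkey, fun t => ?_⟩
  refine ⟨?_, ?_, ?_, ?_⟩
  · -- Hermitian
    ext p q
    rw [Matrix.conjTranspose_apply]
    simp only [hH, hMz]
    rw [Complex.star_def, _root_.map_mul, _root_.map_mul, I_conj, map_zpow₀, Z_conj, _root_.inv_zpow, ← _root_.zpow_neg, ← Eneg, neg_sub,
      show -(q - p) = p - q from neg_sub q p,
      show q.2 * p.1 - q.1 * p.2 = p.1 * q.2 - p.2 * q.1 from by ring,
      show (starRingEnd ℂ) (1/4 : ℂ) = (1/4 : ℂ) from by simp [map_ofNat]]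
  · -- H * H = 1
    ext p q
    rw [Matrix.mul_apply]
    have step : ∀ r, H t p r * H t r q
        = (1/16 : ℂ) * Complex.I ^ ((p.1 * q.2 - p.2 * q.1).val) *
          (Complex.I ^ (((p-q).1 * (r-q).2 - (p-q).2 * (r-q).1).val)
            * Z t ^ (E ((p-q) - (r-q))) * Z t ^ (E (r-q))) := by
      intro r
      simp only [hH, hMz]
      rw [show (p - q) - (r - q) = p - r from by ring]
      rw [show (1/4:ℂ) * Complex.I ^ ((p.1 * r.2 - p.2 * r.1).val) * Z t ^ E (p - r) *
            ((1/4:ℂ) * Complex.I ^ ((r.1 * q.2 - r.2 * q.1).val) * Z t ^ E (r - q))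
          = (1/16:ℂ) * (Complex.I ^ ((p.1*r.2-p.2*r.1).val) * Complex.I ^ ((r.1*q.2-r.2*q.1).val)) *
            (Z t ^ E (p - r) * Z t ^ E (r - q)) from by ring]
      rw [I_add,
        show (p.1*r.2-p.2*r.1) + (r.1*q.2-r.2*q.1)
          = (p.1*q.2-p.2*q.1) + ((p-q).1 * (r-q).2 - (p-q).2 * (r-q).1) from by
            simp only [Prod.fst_sub, Prod.snd_sub]; ring,
        ← I_add]
      ring
    rw [Finset.sum_congr rfl (fun r _ => step r), ← Finset.mul_sum]
    rw [show (∑ r : ZMod 4 × ZMod 4,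
          (Complex.I ^ (((p-q).1 * (r-q).2 - (p-q).2 * (r-q).1).val)
            * Z t ^ (E ((p-q) - (r-q))) * Z t ^ (E (r-q))))
        = ∑ s : ZMod 4 × ZMod 4,
          (Complex.I ^ (((p-q).1 * s.2 - (p-q).2 * s.1).val)
            * Z t ^ (E ((p-q) - s)) * Z t ^ (E s)) from
      Fintype.sum_equiv (Equiv.subRight q) _ _ (fun r => rfl)]
    rw [key_s18 (Z t) (Z_ne t) (p - q)]
    by_cases h : p = q
    · subst h
      rw [if_pos (sub_self p), Matrix.one_apply_eq,
        show p.1 * p.2 - p.2 * p.1 = 0 from by ring,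
        show ((0 : ZMod 4)).val = 0 from rfl, pow_zero]
      norm_num
    · rw [if_neg (sub_ne_zero.mpr h), mul_zero, Matrix.one_apply_ne h]
  · -- entries
    intro p q
    rw [hH, hMz, norm_mul, norm_mul, norm_pow, Complex.norm_I, one_pow, mul_one,
      norm_zpow, Z_abs, _root_.one_zpow, mul_one]
    norm_num
  · -- trace
    rw [Matrix.trace]
    have hdiag : ∀ p : ZMod 4 × ZMod 4, (H t).diag p = 1/4 := by
      intro p
      rw [Matrix.diag_apply, hH, hMz, sub_self, Ezero, zpow_zero, mul_one,
        show p.1 * p.2 - p.2 * p.1 = 0 from by ring,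
        show ((0 : ZMod 4)).val = 0 from rfl, pow_zero, mul_one]
    rw [Finset.sum_congr rfl (fun p _ => hdiag p), Finset.sum_const]
    norm_num [Finset.card_univ]
end
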